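/- arXiv:2510.20026 — 9 statements merged into one kernel-verified Lean document; each statement's English description precedes it below -/
import Mathlib

section
/- Let m ≥ 1, let w_1,…,w_m be positive integers, and let e be an integer with Σ_{i=1}^m w_i + m(m+1) = m·e. Define c_i = 2e − 2w_i − 1 for each i ∈ {1,…,m}. Then Σ_{i=1}^m c_i = m(2m+1), and there exist permutations λ and μ of {1,…,m} with λ(i)+μ(i)+w_i = e for all i if and only if there exist a bijection α from {1,…,m} onto the even numbers {2,4,…,2m} and a bijection β from {1,…,m} onto the odd numbers {1,3,…,2m−1} such that α(i)+β(i) = c_i for all i. -/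
private lemma double_bij (m : ℤ) :
    Set.BijOn (fun x : ℤ => 2 * x) (Set.Icc (1 : ℤ) m)
      {x : ℤ | Even x ∧ x ∈ Set.Icc (1 : ℤ) (2 * m)} := by
  refine ⟨?_, ?_, ?_⟩
  · rintro x ⟨hx1, hx2⟩
    simp only [Set.mem_setOf_eq, Set.mem_Icc]
    exact ⟨⟨x, by ring⟩, by omega, by omega⟩
  · intro x _ y _ h
    simpa using h
  · rintro x ⟨⟨r, hr⟩, hx1, hx2⟩
    refine ⟨r, ⟨by omega, by omega⟩, ?_⟩
    show 2 * r = x; omega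

private lemma double_sub_one_bij (m : ℤ) :
    Set.BijOn (fun x : ℤ => 2 * x - 1) (Set.Icc (1 : ℤ) m)
      {x : ℤ | Odd x ∧ x ∈ Set.Icc (1 : ℤ) (2 * m)} := by
  refine ⟨?_, ?_, ?_⟩
  · rintro x ⟨hx1, hx2⟩
    simp only [Set.mem_setOf_eq, Set.mem_Icc]
    exact ⟨⟨x - 1, by ring⟩, by omega, by omega⟩
  · intro x _ y _ h
    simp only at h; omega
  · rintro x ⟨⟨r, hr⟩, hx1, hx2⟩
    refine ⟨r + 1, ⟨by omega, by omega⟩, ?_⟩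
    show 2 * (r + 1) - 1 = x; omega

private lemma half_bij (m : ℤ) :
    Set.BijOn (fun x : ℤ => x / 2)
      {x : ℤ | Even x ∧ x ∈ Set.Icc (1 : ℤ) (2 * m)} (Set.Icc (1 : ℤ) m) := by
  refine ⟨?_, ?_, ?_⟩
  · rintro x ⟨⟨r, hr⟩, hx1, hx2⟩
    constructor <;> simp <;> omega
  · rintro x ⟨⟨r, hr⟩, _⟩ y ⟨⟨s, hs⟩, _⟩ h
    simp only at h; omega
  · rintro x ⟨hx1, hx2⟩
    refine ⟨2 * x, ⟨⟨x, by ring⟩, by omega, by omega⟩, ?_⟩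
    show 2 * x / 2 = x; omega

private lemma half_succ_bij (m : ℤ) :
    Set.BijOn (fun x : ℤ => (x + 1) / 2)
      {x : ℤ | Odd x ∧ x ∈ Set.Icc (1 : ℤ) (2 * m)} (Set.Icc (1 : ℤ) m) := by
  refine ⟨?_, ?_, ?_⟩
  · rintro x ⟨⟨r, hr⟩, hx1, hx2⟩
    constructor <;> simp <;> omega
  · rintro x ⟨⟨r, hr⟩, _⟩ y ⟨⟨s, hs⟩, _⟩ h
    simp only at h; omega
  · rintro x ⟨hx1, hx2⟩
    refine ⟨2 * x - 1, ⟨⟨x - 1, by ring⟩, by omega, by omega⟩, ?_⟩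
    show (2 * x - 1 + 1) / 2 = x; omega

/-- The reduction from RN3DM to Even-Odd RN3DM: with
`∑ wᵢ + m(m+1) = m·e` and `cᵢ = 2e − 2wᵢ − 1`, we have `∑ cᵢ = m(2m+1)`, and
permutations `λ, μ` of `{1, …, m}` with `λ i + μ i + wᵢ = e` exist iff bijections
`α` onto the even numbers and `β` onto the odd numbers of `{1, …, 2m}` with
`α i + β i = cᵢ` exist. -/
theorem RN3DM_iff_evenOdd_RN3DM (m : ℕ) (hm : 1 ≤ m) (w : Fin m → ℤ)
    (hw : ∀ i, 1 ≤ w i) (e : ℤ) (he : ∑ i, w i + m * (m + 1) = m * e) :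
    (∑ i, (2 * e - 2 * w i - 1) = m * (2 * m + 1)) ∧
    ((∃ lam mu : Fin m → ℤ,
        Set.BijOn lam Set.univ (Set.Icc (1 : ℤ) m) ∧
        Set.BijOn mu Set.univ (Set.Icc (1 : ℤ) m) ∧
        ∀ i, lam i + mu i + w i = e) ↔
      (∃ α β : Fin m → ℤ,
        Set.BijOn α Set.univ {x : ℤ | Even x ∧ x ∈ Set.Icc (1 : ℤ) (2 * m)} ∧
        Set.BijOn β Set.univ {x : ℤ | Odd x ∧ x ∈ Set.Icc (1 : ℤ) (2 * m)} ∧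
        ∀ i, α i + β i = 2 * e - 2 * w i - 1)) := by
  constructor
  · have h1 : ∑ i, (2 * e - 2 * w i - 1) = ∑ _i : Fin m, (2 * e - 1) - ∑ i, 2 * w i := by
      rw [← Finset.sum_sub_distrib]
      exact Finset.sum_congr rfl fun i _ => by ring
    rw [h1, Finset.sum_const, ← Finset.mul_sum]
    simp only [Finset.card_univ, Fintype.card_fin, nsmul_eq_mul]
    nlinarith [he]
  constructor
  · rintro ⟨lam, mu, hlam, hmu, hsum⟩
    refine ⟨fun i => 2 * lam i, fun i => 2 * mu i - 1,
      (double_bij m).comp hlam, (double_sub_one_bij m).comp hmu, fun i => ?_⟩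
    have := hsum i
    show 2 * lam i + (2 * mu i - 1) = 2 * e - 2 * w i - 1
    linarith
  · rintro ⟨α, β, hα, hβ, hsum⟩
    refine ⟨fun i => α i / 2, fun i => (β i + 1) / 2,
      (half_bij m).comp hα, (half_succ_bij m).comp hβ, fun i => ?_⟩
    obtain ⟨⟨r, hr⟩, _⟩ := hα.mapsTo (Set.mem_univ i)
    obtain ⟨⟨s, hs⟩, _⟩ := hβ.mapsTo (Set.mem_univ i)
    have := hsum i
    show α i / 2 + (β i + 1) / 2 + w i = e
    omega
end

section
/- Let k ≥ 1 and let c_1,…,c_k be integers with c_i ≥ 3, let G be the k-cycle graph G(c_1,…,c_k) with center r, let the source be s = r, and let S be the multiset {c_1,…,c_k}. Then for every positive integer b, G admits a broadcast scheme from s completing within b rounds if and only if the set [b] = {1,2,…,b} covers S. Consequently, the minimum number of rounds needed to broadcast from s in G equals the Prefix Covering optimum OPT(S). -/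
/-- A broadcast scheme for `(G, s)`: inform times `τ` and parents `par`.
`τ s = 0`; every other vertex `v` has a parent adjacent to it informed strictly
earlier, and a vertex informs at most one of its children per round. -/
def IsBroadcastScheme {V : Type*} (G : SimpleGraph V) (s : V)
    (τ : V → ℕ) (par : V → V) : Prop :=
  τ s = 0 ∧
  (∀ v, v ≠ s → G.Adj (par v) v ∧ τ (par v) < τ v) ∧
  ∀ u : V, Set.InjOn τ {v | v ≠ s ∧ par v = u}

def kCycleRel {k : ℕ} (c : Fin k → ℕ) :
    Option ((i : Fin k) × Fin (c i)) → Option ((i : Fin k) × Fin (c i)) → Prop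
  | none, some ⟨i, j⟩ => (j : ℕ) = 0 ∨ (j : ℕ) = c i - 1
  | some ⟨i, j⟩, some ⟨i', j'⟩ => i = i' ∧ (j' : ℕ) = (j : ℕ) + 1
  | _, _ => False

/-- The `k`-cycle graph `G(c₁, …, c_k)`: `k` cycles sharing the single center
vertex `none`, the `i`-th cycle having `c i` vertices besides the center
(vertex `⟨i, j⟩` encodes the `(j+1)`-st vertex of the `i`-th cycle). -/
def kCycleGraph {k : ℕ} (c : Fin k → ℕ) :
    SimpleGraph (Option ((i : Fin k) × Fin (c i))) :=
  SimpleGraph.fromRel (kCycleRel c)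

/-- `C` covers `S`: the elements of `S` can be matched to pairwise disjoint
submultisets of `C` (the unused part of `C` playing the role of `C₀`), each
matched submultiset having size at most `2` and sum at least the matched element. -/
def Covers (C S : Multiset ℕ) : Prop :=
  ∃ T : Multiset (ℕ × Multiset ℕ),
    T.map Prod.fst = S ∧
    (T.map Prod.snd).sum ≤ C ∧
    ∀ q ∈ T, (Prod.snd q).card ≤ 2 ∧ Prod.fst q ≤ (Prod.snd q).sum

/-- The Prefix Covering optimum: the least `m` such that `[m] = {1, …, m}` covers `S`. -/
noncomputable def prefixOPT (S : Multiset ℕ) : ℕ :=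
  sInf {m | Covers (Finset.Icc 1 m).val S}

lemma kCycle_chain {k : ℕ} (c : Fin k → ℕ)
    (τ : Option ((i : Fin k) × Fin (c i)) → ℕ)
    (par : Option ((i : Fin k) × Fin (c i)) → Option ((i : Fin k) × Fin (c i)))
    (hs : IsBroadcastScheme (kCycleGraph c) none τ par) :
    ∀ n (i : Fin k) (j : Fin (c i)), τ (some ⟨i, j⟩) ≤ n →
      ∃ e : Fin (c i), ((e : ℕ) = 0 ∨ (e : ℕ) = c i - 1) ∧ par (some ⟨i, e⟩) = none ∧
        τ (some ⟨i, e⟩) + (((j : ℕ) - (e : ℕ)) + ((e : ℕ) - (j : ℕ))) ≤ τ (some ⟨i, j⟩) := by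
  obtain ⟨h0, hpar, hinj⟩ := hs
  intro n
  induction n with
  | zero =>
    intro i j h
    have := (hpar (some ⟨i, j⟩) (by simp)).2
    omega
  | succ n ih =>
    intro i j h
    obtain ⟨hadj, hlt⟩ := hpar (some ⟨i, j⟩) (by simp)
    rcases hpv : par (some ⟨i, j⟩) with _ | ⟨i', j'⟩
    · rw [hpv] at hadj hlt
      have hj : (j : ℕ) = 0 ∨ (j : ℕ) = c i - 1 := by
        rw [kCycleGraph, SimpleGraph.fromRel_adj] at hadj
        rcases hadj.2 with h' | h'
        · exact h'
        · exact h'.elim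
      exact ⟨j, hj, hpv, by omega⟩
    · rw [hpv] at hadj hlt
      rw [kCycleGraph, SimpleGraph.fromRel_adj] at hadj
      have key : i' = i ∧ (((j : ℕ) = (j' : ℕ) + 1) ∨ ((j' : ℕ) = (j : ℕ) + 1)) := by
        rcases hadj.2 with ⟨hi, hj⟩ | ⟨hi, hj⟩
        · exact ⟨hi, Or.inl hj⟩
        · exact ⟨hi.symm, Or.inr hj⟩
      obtain ⟨hi, hjj⟩ := key
      subst hi
      obtain ⟨e, he, hpe, hde⟩ := ih _ j' (by omega)
      exact ⟨e, he, hpe, by omega⟩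


lemma kCycle_forward {k : ℕ} (c : Fin k → ℕ) (hc3 : ∀ i, 3 ≤ c i) (b : ℕ)
    (τ : Option ((i : Fin k) × Fin (c i)) → ℕ)
    (par : Option ((i : Fin k) × Fin (c i)) → Option ((i : Fin k) × Fin (c i)))
    (hs : IsBroadcastScheme (kCycleGraph c) none τ par) (hb : ∀ v, τ v ≤ b) :
    Covers (Finset.Icc 1 b).val (Finset.univ.val.map c) := by
  classical
  have chain := kCycle_chain c τ par hs
  obtain ⟨h0, hpar, hinj⟩ := hs
  have hcpos : ∀ i, 0 < c i := fun i => by have := hc3 i; omega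
  set vL : (i : Fin k) → Option ((i : Fin k) × Fin (c i)) :=
    fun i => some ⟨i, ⟨0, hcpos i⟩⟩ with hvL
  set vR : (i : Fin k) → Option ((i : Fin k) × Fin (c i)) :=
    fun i => some ⟨i, ⟨c i - 1, by have := hc3 i; omega⟩⟩ with hvR
  have hτposL : ∀ i, par (vL i) = none → 1 ≤ τ (vL i) := by
    intro i hp
    have := (hpar (vL i) (by simp [hvL])).2
    rw [hp, h0] at this; omega
  have hτposR : ∀ i, par (vR i) = none → 1 ≤ τ (vR i) := by
    intro i hp
    have := (hpar (vR i) (by simp [hvR])).2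
    rw [hp, h0] at this; omega
  -- the coverage dichotomy
  have star : ∀ (i : Fin k) (j : ℕ), j < c i →
      (par (vL i) = none ∧ τ (vL i) + j ≤ b) ∨
      (par (vR i) = none ∧ τ (vR i) + (c i - 1 - j) ≤ b) := by
    intro i j hj
    obtain ⟨e, he, hpe, hde⟩ := chain (τ (some ⟨i, ⟨j, hj⟩⟩)) i ⟨j, hj⟩ le_rfl
    have hbj := hb (some ⟨i, ⟨j, hj⟩⟩)
    rcases he with he | he
    · left
      have heq : e = ⟨0, hcpos i⟩ := Fin.ext he
      rw [heq] at hpe hde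
      simp only [Fin.val_mk] at hde
      exact ⟨hpe, by simp only [hvL]; omega⟩
    · right
      have heq : e = ⟨c i - 1, by have := hc3 i; omega⟩ := Fin.ext he
      rw [heq] at hpe hde
      simp only [Fin.val_mk] at hde
      exact ⟨hpe, by simp only [hvR]; have := hc3 i; omega⟩
  set D : Fin k → Multiset ℕ := fun i =>
    (if par (vL i) = none then ({b + 1 - τ (vL i)} : Multiset ℕ) else 0) +
    (if par (vR i) = none then ({b + 1 - τ (vR i)} : Multiset ℕ) else 0) with hD
  have hDsum : ∀ i, c i ≤ (D i).sum := by
    intro i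
    have hbL := hb (vL i); have hbR := hb (vR i)
    have h3 := hc3 i
    by_cases hL : par (vL i) = none <;> by_cases hR : par (vR i) = none <;>
      simp only [hD, hL, hR, if_pos, if_neg, not_false_iff, ite_true, ite_false]
    · rw [Multiset.sum_add, Multiset.sum_singleton, Multiset.sum_singleton]
      have h1 := hτposL i hL; have h2 := hτposR i hR
      by_cases hdL : b + 1 - τ (vL i) < c i
      · rcases star i (b + 1 - τ (vL i)) hdL with ⟨-, hcon⟩ | ⟨-, hineq⟩ <;> omega
      · omega
    · rw [add_zero, Multiset.sum_singleton]
      have h1 := hτposL i hL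
      by_cases hdL : b + 1 - τ (vL i) < c i
      · rcases star i (b + 1 - τ (vL i)) hdL with ⟨-, hcon⟩ | ⟨hR', -⟩
        · omega
        · exact absurd hR' hR
      · omega
    · rw [zero_add, Multiset.sum_singleton]
      have h2 := hτposR i hR
      rcases star i 0 (by omega) with ⟨hL', -⟩ | ⟨-, hineq⟩
      · exact absurd hL' hL
      · omega
    · rcases star i 0 (by omega) with ⟨hL', -⟩ | ⟨hR', -⟩
      · exact absurd hL' hL
      · exact absurd hR' hR
  refine ⟨Finset.univ.val.map (fun i => (c i, D i)), ?_, ?_, ?_⟩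
  · rw [Multiset.map_map]
    exact Multiset.map_congr rfl fun _ _ => rfl
  · rw [Multiset.map_map]
    have hrw : (Multiset.map (Prod.snd ∘ fun i => (c i, D i)) Finset.univ.val).sum
        = ∑ i, D i := rfl
    rw [hrw, Multiset.le_iff_count]
    intro n
    rw [Multiset.count_sum']
    set pL : Fin k → Prop := fun i => par (vL i) = none ∧ n = b + 1 - τ (vL i) with hpL
    set pR : Fin k → Prop := fun i => par (vR i) = none ∧ n = b + 1 - τ (vR i) with hpR
    have hcnt : ∀ i, Multiset.count n (D i) =
        (if pL i then 1 else 0) + (if pR i then 1 else 0) := by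
      intro i
      rw [hD]
      simp only [Multiset.count_add]
      congr 1
      · by_cases h1 : par (vL i) = none
        · rw [if_pos h1, Multiset.count_singleton]
          by_cases h2 : n = b + 1 - τ (vL i)
          · rw [if_pos h2, if_pos (show pL i from ⟨h1, h2⟩)]
          · rw [if_neg h2, if_neg (show ¬ pL i from fun h => h2 h.2)]
        · rw [if_neg h1, if_neg (show ¬ pL i from fun h => h1 h.1), Multiset.count_zero]
      · by_cases h1 : par (vR i) = none
        · rw [if_pos h1, Multiset.count_singleton]
          by_cases h2 : n = b + 1 - τ (vR i)
          · rw [if_pos h2, if_pos (show pR i from ⟨h1, h2⟩)]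
          · rw [if_neg h2, if_neg (show ¬ pR i from fun h => h2 h.2)]
        · rw [if_neg h1, if_neg (show ¬ pR i from fun h => h1 h.1), Multiset.count_zero]
    have hLL : ∀ i i', pL i → pL i' → i = i' := by
      intro i i' hi hi'
      have h1 := hτposL i hi.1; have h1' := hτposL i' hi'.1
      have hbi := hb (vL i); have hbi' := hb (vL i')
      have hττ : τ (vL i) = τ (vL i') := by omega
      have hv : vL i = vL i' :=
        hinj none ⟨by simp [hvL], hi.1⟩ ⟨by simp [hvL], hi'.1⟩ hττ
      have := congrArg (fun o => Option.map (fun p => p.1) o) hv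
      simpa [hvL] using this
    have hRR : ∀ i i', pR i → pR i' → i = i' := by
      intro i i' hi hi'
      have h1 := hτposR i hi.1; have h1' := hτposR i' hi'.1
      have hbi := hb (vR i); have hbi' := hb (vR i')
      have hττ : τ (vR i) = τ (vR i') := by omega
      have hv : vR i = vR i' :=
        hinj none ⟨by simp [hvR], hi.1⟩ ⟨by simp [hvR], hi'.1⟩ hττ
      have := congrArg (fun o => Option.map (fun p => p.1) o) hv
      simpa [hvR] using this
    have hLR : ∀ i i', pL i → pR i' → False := by
      intro i i' hi hi'
      have h1 := hτposL i hi.1; have h1' := hτposR i' hi'.1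
      have hbi := hb (vL i); have hbi' := hb (vR i')
      have hττ : τ (vL i) = τ (vR i') := by omega
      have hv : vL i = vR i' :=
        hinj none ⟨by simp [hvL], hi.1⟩ ⟨by simp [hvR], hi'.1⟩ hττ
      have hfst := congrArg (fun o => Option.map (fun p => p.1) o) hv
      simp only [hvL, hvR, Option.map_some] at hfst
      have hii : i = i' := by simpa using hfst
      subst hii
      have hsnd := congrArg (fun o => Option.map (fun p => (p.2 : ℕ)) o) hv
      simp only [hvL, hvR, Option.map_some] at hsnd
      have : (0 : ℕ) = c i - 1 := by simpa using hsnd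
      have := hc3 i; omega
    by_cases hn : n ∈ Finset.Icc 1 b
    · have hone : 1 ≤ Multiset.count n (Finset.Icc 1 b).val :=
        Multiset.one_le_count_iff_mem.mpr hn
      have hsum : (∑ i, Multiset.count n (D i)) ≤ 1 := by
        simp only [hcnt]
        rw [Finset.sum_add_distrib, Finset.sum_boole, Finset.sum_boole]
        have c1 : (Finset.univ.filter (fun x => pL x)).card ≤ 1 :=
          Finset.card_le_one.mpr (by
            intro i hi i' hi'
            simp only [Finset.mem_filter] at hi hi'
            exact hLL _ _ hi.2 hi'.2)
        have c2 : (Finset.univ.filter (fun x => pR x)).card ≤ 1 :=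
          Finset.card_le_one.mpr (by
            intro i hi i' hi'
            simp only [Finset.mem_filter] at hi hi'
            exact hRR _ _ hi.2 hi'.2)
        have c3 : (Finset.univ.filter (fun x => pL x)).card = 0 ∨ (Finset.univ.filter (fun x => pR x)).card = 0 := by
          by_contra hcon
          push_neg at hcon
          obtain ⟨i, hi⟩ := Finset.card_pos.mp (Nat.pos_of_ne_zero hcon.1)
          obtain ⟨i', hi'⟩ := Finset.card_pos.mp (Nat.pos_of_ne_zero hcon.2)
          simp only [Finset.mem_filter] at hi hi'
          exact hLR _ _ hi.2 hi'.2
        simp only [Nat.cast_id]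
        omega
      omega
    · have hz : ∀ i ∈ Finset.univ, Multiset.count n (D i) = 0 := by
        intro i _
        rw [hcnt]
        have hnL : ¬ pL i := by
          intro hp
          have := hτposL i hp.1; have := hb (vL i)
          exact hn (Finset.mem_Icc.mpr (by omega))
        have hnR : ¬ pR i := by
          intro hp
          have := hτposR i hp.1; have := hb (vR i)
          exact hn (Finset.mem_Icc.mpr (by omega))
        simp [hnL, hnR]
      rw [Finset.sum_eq_zero hz]
      exact Nat.zero_le _
  · intro q hq
    obtain ⟨i, -, rfl⟩ := Multiset.mem_map.mp hq
    refine ⟨?_, hDsum i⟩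
    simp only [hD]
    rw [Multiset.card_add]
    have : ∀ (P : Prop) [Decidable P] (x : ℕ),
        (if P then ({x} : Multiset ℕ) else 0).card ≤ 1 := by
      intro P _ x; split_ifs <;> simp
    calc _ ≤ 1 + 1 := Nat.add_le_add (this _ _) (this _ _)
    _ = 2 := rfl

lemma pairing {α β γ : Type*} [DecidableEq α] [Inhabited γ] :
    ∀ (s : Multiset α), s.Nodup → ∀ (T : Multiset (β × γ)) (f : α → β),
      T.map Prod.fst = s.map f → ∃ g : α → γ, T = s.map (fun a => (f a, g a)) := by
  classical
  intro s
  induction s using Multiset.induction with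
  | empty =>
    intro _ T f h
    simp only [Multiset.map_zero, Multiset.map_eq_zero] at h
    exact ⟨fun _ => default, by simp [h]⟩
  | cons a s ih =>
    intro hnd T f h
    rw [Multiset.nodup_cons] at hnd
    have hfa : f a ∈ T.map Prod.fst := by rw [h]; simp
    obtain ⟨p, hpT, hp1⟩ := Multiset.mem_map.mp hfa
    have hT : T = p ::ₘ T.erase p := (Multiset.cons_erase hpT).symm
    have h' : (T.erase p).map Prod.fst = s.map f := by
      have h2 := h
      rw [hT, Multiset.map_cons, hp1, Multiset.map_cons] at h2
      exact (Multiset.cons_inj_right _).mp h2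
    obtain ⟨g', hg'⟩ := ih hnd.2 (T.erase p) f h'
    refine ⟨Function.update g' a p.2, ?_⟩
    rw [hT, Multiset.map_cons, Function.update_self, hg']
    have hpeq : p = (f a, p.2) := by rw [← hp1]
    rw [← hpeq]
    congr 1
    exact Multiset.map_congr rfl fun x hx => by
      rw [Function.update_of_ne (by intro hxa; subst hxa; exact hnd.1 hx)]


lemma kCycle_backward {k : ℕ} (c : Fin k → ℕ) (hc3 : ∀ i, 3 ≤ c i) (b : ℕ)
    (hcov : Covers (Finset.Icc 1 b).val (Finset.univ.val.map c)) :
    ∃ (τ : Option ((i : Fin k) × Fin (c i)) → ℕ)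
      (par : Option ((i : Fin k) × Fin (c i)) → Option ((i : Fin k) × Fin (c i))),
      IsBroadcastScheme (kCycleGraph c) none τ par ∧ ∀ v, τ v ≤ b := by
  classical
  obtain ⟨T, hfst, hle, hq⟩ := hcov
  obtain ⟨D, hT⟩ := pairing Finset.univ.val Finset.univ.nodup T c hfst
  have hmem : ∀ i, (c i, D i) ∈ T := by
    intro i; rw [hT]; exact Multiset.mem_map.mpr ⟨i, by simp, rfl⟩
  have hcard : ∀ i, (D i).card ≤ 2 := fun i => (hq _ (hmem i)).1
  have hsum : ∀ i, c i ≤ (D i).sum := fun i => (hq _ (hmem i)).2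
  have hsle : (∑ i, D i) ≤ (Finset.Icc 1 b).val := by
    have hrw : T.map Prod.snd = Finset.univ.val.map D := by
      rw [hT, Multiset.map_map]
      exact Multiset.map_congr rfl fun _ _ => rfl
    calc (∑ i, D i) = (T.map Prod.snd).sum := by rw [hrw]; rfl
    _ ≤ _ := hle
  have helt : ∀ i, ∀ x ∈ D i, 1 ≤ x ∧ x ≤ b := by
    intro i x hx
    have h1 : D i ≤ ∑ j, D j :=
      Finset.single_le_sum (f := D) (fun _ _ => Multiset.zero_le _) (Finset.mem_univ i)
    have h2 : x ∈ (Finset.Icc 1 b).val := Multiset.mem_of_le (h1.trans hsle) hx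
    have h3 : x ∈ Finset.Icc 1 b := h2
    simpa [Finset.mem_Icc] using h3
  have hcnt1 : ∀ n, (∑ i, Multiset.count n (D i)) ≤ 1 := by
    intro n
    have h1 : Multiset.count n (∑ i, D i) ≤ Multiset.count n (Finset.Icc 1 b).val :=
      Multiset.count_le_of_le n hsle
    have h2 : Multiset.count n (Finset.Icc 1 b).val ≤ 1 :=
      Multiset.nodup_iff_count_le_one.mp (Finset.Icc 1 b).nodup n
    rw [Multiset.count_sum'] at h1
    omega
  have hD2 : ∀ i, ∃ x y : ℕ, D i = {x} + (if y = 0 then 0 else {y}) ∧ c i ≤ x + y ∧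
      (1 ≤ x ∧ x ≤ b) ∧ (y = 0 ∨ (1 ≤ y ∧ y ≤ b)) := by
    intro i
    have hne : D i ≠ 0 := by
      intro h
      have h1 := hsum i
      rw [h, Multiset.sum_zero] at h1
      have := hc3 i; omega
    obtain ⟨x, hxmem⟩ := Multiset.exists_mem_of_ne_zero hne
    obtain ⟨s, hs⟩ := Multiset.exists_cons_of_mem hxmem
    have hxb := helt i x hxmem
    have hsc : s.card ≤ 1 := by
      have h1 := hcard i
      rw [hs, Multiset.card_cons] at h1
      omega
    rcases Nat.lt_or_ge s.card 1 with h | h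
    · have hs0 : s = 0 := Multiset.card_eq_zero.mp (by omega)
      refine ⟨x, 0, ?_, ?_, hxb, Or.inl rfl⟩
      · rw [hs, hs0, if_pos rfl, add_zero, Multiset.cons_zero]
      · have h1 := hsum i
        rw [hs, hs0, Multiset.sum_cons, Multiset.sum_zero] at h1
        omega
    · have hs1 : s.card = 1 := le_antisymm hsc h
      obtain ⟨y, hy⟩ := Multiset.card_eq_one.mp hs1
      have hymem : y ∈ D i := by rw [hs, hy]; simp
      have hyb := helt i y hymem
      refine ⟨x, y, ?_, ?_, hxb, Or.inr hyb⟩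
      · rw [hs, hy, if_neg (by omega), Multiset.singleton_add]
      · have h1 := hsum i
        rw [hs, hy, Multiset.sum_cons, Multiset.sum_singleton] at h1
        omega
  choose d1 d2 hDeq hcd hd1b hd2b using hD2
  have hns : ∀ (x n : ℕ), Multiset.count n ({x} : Multiset ℕ) = if x = n then 1 else 0 := by
    intro x n; rw [Multiset.count_singleton]; simp [eq_comm]
  have hcnt2 : ∀ (n : ℕ), n ≠ 0 → ∀ i, Multiset.count n (D i) =
      (if d1 i = n then 1 else 0) + (if d2 i = n then 1 else 0) := by
    intro n hn i
    rw [hDeq i, Multiset.count_add, hns]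
    congr 1
    by_cases h2 : d2 i = 0
    · rw [if_pos h2, Multiset.count_zero, if_neg (by omega)]
    · rw [if_neg h2, hns]
  have pairbound : ∀ (n : ℕ) i i', i ≠ i' →
      Multiset.count n (D i) + Multiset.count n (D i') ≤ 1 := by
    intro n i i' hne'
    have h0 := hcnt1 n
    have h1 : (∑ j, Multiset.count n (D j)) =
        Multiset.count n (D i) + ∑ j ∈ Finset.univ.erase i, Multiset.count n (D j) :=
      (Finset.add_sum_erase _ _ (Finset.mem_univ i)).symm
    have h2 : Multiset.count n (D i') ≤ ∑ j ∈ Finset.univ.erase i, Multiset.count n (D j) :=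
      Finset.single_le_sum (f := fun j => Multiset.count n (D j)) (fun _ _ => Nat.zero_le _)
        (Finset.mem_erase.mpr ⟨Ne.symm hne', Finset.mem_univ _⟩)
    omega
  have selfbound : ∀ (n : ℕ) i, Multiset.count n (D i) ≤ 1 := fun n i =>
    le_trans (Finset.single_le_sum (f := fun j => Multiset.count n (D j))
      (fun _ _ => Nat.zero_le _) (Finset.mem_univ i)) (hcnt1 n)
  have hd11 : ∀ i i', d1 i = d1 i' → i = i' := by
    intro i i' h
    by_contra hne'
    have hp := pairbound (d1 i) i i' hne'
    rw [hcnt2 _ (by have := hd1b i; omega) i,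
        hcnt2 _ (by have := hd1b i; omega) i', if_pos rfl, if_pos h.symm] at hp
    omega
  have hd22 : ∀ i i', d2 i ≠ 0 → d2 i = d2 i' → i = i' := by
    intro i i' hn0 h
    by_contra hne'
    have hp := pairbound (d2 i) i i' hne'
    rw [hcnt2 _ hn0 i, hcnt2 _ hn0 i', if_pos rfl, if_pos h.symm] at hp
    omega
  have hd12 : ∀ i i', d1 i ≠ d2 i' := by
    intro i i' h
    have hn0 : d1 i ≠ 0 := by have := hd1b i; omega
    by_cases hii : i = i'
    · subst hii
      have hsb := selfbound (d1 i) i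
      rw [hcnt2 _ hn0 i, if_pos rfl, if_pos h.symm] at hsb
      omega
    · have hp := pairbound (d1 i) i i' hii
      rw [hcnt2 _ hn0 i, hcnt2 _ hn0 i', if_pos rfl, if_pos h.symm] at hp
      omega
  -- the construction
  set a : Fin k → ℕ := fun i => c i - d2 i with ha
  set τ0 : Option ((i : Fin k) × Fin (c i)) → ℕ := fun v =>
    match v with
    | none => 0
    | some ⟨i, j⟩ =>
      if (j : ℕ) < a i then b + 1 - d1 i + (j : ℕ)
      else b + 1 - d2 i + (c i - 1 - (j : ℕ)) with hτ0
  set par0 : Option ((i : Fin k) × Fin (c i)) → Option ((i : Fin k) × Fin (c i)) := fun v =>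
    match v with
    | none => none
    | some ⟨i, j⟩ =>
      if (j : ℕ) < a i then
        (if (j : ℕ) = 0 then none
         else some ⟨i, ⟨(j : ℕ) - 1, Nat.lt_of_le_of_lt (Nat.sub_le _ _) j.isLt⟩⟩)
      else
        (if h : (j : ℕ) = c i - 1 then none
         else some ⟨i, ⟨(j : ℕ) + 1, by have := j.isLt; omega⟩⟩) with hpar0
  have hτs : ∀ (i : Fin k) (j : Fin (c i)), τ0 (some ⟨i, j⟩) =
      if (j : ℕ) < a i then b + 1 - d1 i + (j : ℕ)
      else b + 1 - d2 i + (c i - 1 - (j : ℕ)) := fun i j => rfl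
  have hps : ∀ (i : Fin k) (j : Fin (c i)), par0 (some ⟨i, j⟩) =
      if (j : ℕ) < a i then
        (if (j : ℕ) = 0 then none
         else some ⟨i, ⟨(j : ℕ) - 1, Nat.lt_of_le_of_lt (Nat.sub_le _ _) j.isLt⟩⟩)
      else
        (if h : (j : ℕ) = c i - 1 then none
         else some ⟨i, ⟨(j : ℕ) + 1, by have := j.isLt; omega⟩⟩) := fun i j => rfl
  have haa : ∀ i, a i = c i - d2 i := fun i => rfl
  have hτb : ∀ v, τ0 v ≤ b := by
    intro v
    rcases v with _ | ⟨i, j⟩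
    · exact Nat.zero_le b
    · rw [hτs]
      have h1 := hd1b i; have h2 := hcd i; have h3 := hc3 i
      have h4 := j.isLt; have h5 := haa i
      rcases hd2b i with h6 | h6 <;> split_ifs with hja <;> omega
  refine ⟨τ0, par0, ⟨rfl, ?_, ?_⟩, hτb⟩
  · -- parent adjacency and time decrease
    intro v hv
    rcases v with _ | ⟨i, j⟩
    · exact absurd rfl hv
    · have h1 := hd1b i; have h2 := hcd i; have h3 := hc3 i
      have h4 := j.isLt; have h5 := haa i
      by_cases hja : (j : ℕ) < a i
      · by_cases hj0 : (j : ℕ) = 0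
        · have hpv : par0 (some ⟨i, j⟩) = none := by rw [hps, if_pos hja, if_pos hj0]
          rw [hpv]
          constructor
          · rw [kCycleGraph, SimpleGraph.fromRel_adj]
            exact ⟨by simp, Or.inl (Or.inl hj0)⟩
          · rw [hτs, if_pos hja]
            show τ0 none < _
            rw [show τ0 none = 0 from rfl]
            omega
        · have hpv : par0 (some ⟨i, j⟩) = some ⟨i, ⟨(j : ℕ) - 1,
              Nat.lt_of_le_of_lt (Nat.sub_le _ _) j.isLt⟩⟩ := by
            rw [hps, if_pos hja, if_neg hj0]
          rw [hpv]
          constructor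
          · rw [kCycleGraph, SimpleGraph.fromRel_adj]
            refine ⟨?_, Or.inl ⟨rfl, ?_⟩⟩
            · intro hcon
              rw [Option.some_inj] at hcon
              have := congrArg (fun p : (i : Fin k) × Fin (c i) => (p.2 : ℕ)) hcon
              simp at this
              omega
            · show (j : ℕ) = (j : ℕ) - 1 + 1
              omega
          · rw [hτs, hτs, if_pos hja]
            have hja' : (j : ℕ) - 1 < a i := by omega
            rw [if_pos (show ((⟨(j : ℕ) - 1, _⟩ : Fin (c i)) : ℕ) < a i from hja')]
            show b + 1 - d1 i + ((j : ℕ) - 1) < b + 1 - d1 i + (j : ℕ)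
            omega
      · by_cases hj1 : (j : ℕ) = c i - 1
        · have hd2pos : 1 ≤ d2 i := by omega
          have hpv : par0 (some ⟨i, j⟩) = none := by rw [hps, if_neg hja, dif_pos hj1]
          rw [hpv]
          constructor
          · rw [kCycleGraph, SimpleGraph.fromRel_adj]
            exact ⟨by simp, Or.inl (Or.inr hj1)⟩
          · rw [hτs, if_neg hja]
            show τ0 none < _
            rw [show τ0 none = 0 from rfl]
            rcases hd2b i with h6 | h6 <;> omega
        · have hpv : par0 (some ⟨i, j⟩) = some ⟨i, ⟨(j : ℕ) + 1, by omega⟩⟩ := by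
            rw [hps, if_neg hja, dif_neg hj1]
          rw [hpv]
          constructor
          · rw [kCycleGraph, SimpleGraph.fromRel_adj]
            refine ⟨?_, Or.inr ⟨rfl, ?_⟩⟩
            · intro hcon
              rw [Option.some_inj] at hcon
              have := congrArg (fun p : (i : Fin k) × Fin (c i) => (p.2 : ℕ)) hcon
              simp at this
            · show ((⟨(j : ℕ) + 1, _⟩ : Fin (c i)) : ℕ) = (j : ℕ) + 1
              rfl
          · rw [hτs, hτs, if_neg hja]
            have hja' : ¬ ((j : ℕ) + 1 < a i) := by omega
            rw [if_neg (show ¬ (((⟨(j : ℕ) + 1, _⟩ : Fin (c i)) : ℕ) < a i) from hja')]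
            show b + 1 - d2 i + (c i - 1 - ((j : ℕ) + 1)) < b + 1 - d2 i + (c i - 1 - (j : ℕ))
            omega
  · -- injectivity
    intro u
    have charac : ∀ (i : Fin k) (j : Fin (c i)), par0 (some ⟨i, j⟩) = none →
        (((j : ℕ) < a i ∧ (j : ℕ) = 0) ∨ (¬ (j : ℕ) < a i ∧ (j : ℕ) = c i - 1)) := by
      intro i j hp
      rw [hps] at hp
      by_cases hja : (j : ℕ) < a i
      · rw [if_pos hja] at hp
        by_cases hj0 : (j : ℕ) = 0
        · exact Or.inl ⟨hja, hj0⟩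
        · rw [if_neg hj0] at hp
          exact absurd hp (by simp)
      · rw [if_neg hja] at hp
        by_cases hj1 : (j : ℕ) = c i - 1
        · exact Or.inr ⟨hja, hj1⟩
        · rw [dif_neg hj1] at hp
          exact absurd hp (by simp)
    rcases u with _ | ⟨i, j⟩
    · rintro v ⟨hvne, hvp⟩ w ⟨hwne, hwp⟩ hττ
      rcases v with _ | ⟨iv, jv⟩; · exact absurd rfl hvne
      rcases w with _ | ⟨iw, jw⟩; · exact absurd rfl hwne
      have hv3 := hc3 iv; have hw3 := hc3 iw
      have hv4 := jv.isLt; have hw4 := jw.isLt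
      have hv5 := haa iv; have hw5 := haa iw
      have hv1 := hd1b iv; have hw1 := hd1b iw
      rw [hτs, hτs] at hττ
      rcases charac iv jv hvp with ⟨hja, hj0⟩ | ⟨hja, hj1⟩ <;>
        rcases charac iw jw hwp with ⟨hja', hj0'⟩ | ⟨hja', hj1'⟩
      · rw [if_pos hja, if_pos hja'] at hττ
        have hdd : d1 iv = d1 iw := by omega
        have hii : iv = iw := hd11 _ _ hdd
        subst hii
        have hjj : jv = jw := Fin.ext (by omega)
        rw [hjj]
      · rw [if_pos hja, if_neg hja'] at hττ
        have hd2pos : 1 ≤ d2 iw := by omega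
        rcases hd2b iw with h6 | h6
        · omega
        · have : d1 iv = d2 iw := by omega
          exact absurd this (hd12 _ _)
      · rw [if_neg hja, if_pos hja'] at hττ
        have hd2pos : 1 ≤ d2 iv := by omega
        rcases hd2b iv with h6 | h6
        · omega
        · have : d1 iw = d2 iv := by omega
          exact absurd this (hd12 _ _)
      · rw [if_neg hja, if_neg hja'] at hττ
        have hd2pos : 1 ≤ d2 iv := by omega
        have hd2pos' : 1 ≤ d2 iw := by omega
        rcases hd2b iv with h6 | h6; · omega
        rcases hd2b iw with h7 | h7; · omega
        have hdd : d2 iv = d2 iw := by omega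
        have hii : iv = iw := hd22 _ _ (by omega) hdd
        subst hii
        have hjj : jv = jw := Fin.ext (by omega)
        rw [hjj]
    · rintro v ⟨hvne, hvp⟩ w ⟨hwne, hwp⟩ hττ
      rcases v with _ | ⟨iv, jv⟩; · exact absurd rfl hvne
      rcases w with _ | ⟨iw, jw⟩; · exact absurd rfl hwne
      have charac2 : ∀ (i₀ : Fin k) (j₀ : Fin (c i₀)) (i' : Fin k) (j' : Fin (c i')),
          par0 (some ⟨i', j'⟩) = some ⟨i₀, j₀⟩ →
          i' = i₀ ∧
          (((j' : ℕ) < a i' ∧ (j' : ℕ) ≠ 0 ∧ (j₀ : ℕ) = (j' : ℕ) - 1) ∨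
           (¬ (j' : ℕ) < a i' ∧ (j' : ℕ) ≠ c i' - 1 ∧ (j₀ : ℕ) = (j' : ℕ) + 1)) := by
        intro i₀ j₀ i' j' hp
        rw [hps] at hp
        by_cases h1 : (j' : ℕ) < a i'
        · rw [if_pos h1] at hp
          by_cases h2 : (j' : ℕ) = 0
          · rw [if_pos h2] at hp
            exact absurd hp (by simp)
          · rw [if_neg h2] at hp
            rw [Option.some_inj] at hp
            have hi := congrArg Sigma.fst hp
            have hj := congrArg (fun p : (i : Fin k) × Fin (c i) => (p.2 : ℕ)) hp
            exact ⟨hi, Or.inl ⟨h1, h2, hj.symm⟩⟩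
        · rw [if_neg h1] at hp
          by_cases h3 : (j' : ℕ) = c i' - 1
          · rw [dif_pos h3] at hp
            exact absurd hp (by simp)
          · rw [dif_neg h3] at hp
            rw [Option.some_inj] at hp
            have hi := congrArg Sigma.fst hp
            have hj := congrArg (fun p : (i : Fin k) × Fin (c i) => (p.2 : ℕ)) hp
            exact ⟨hi, Or.inr ⟨h1, h3, hj.symm⟩⟩
      obtain ⟨hiv, hv'⟩ := charac2 i j iv jv hvp
      obtain ⟨hiw, hw'⟩ := charac2 i j iw jw hwp
      have hvw : iv = iw := hiv.trans hiw.symm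
      subst hvw
      have hv4 := jv.isLt
      have hw4 := jw.isLt
      have hjj : jv = jw := by
        rcases hv' with ⟨h1, h2, h3⟩ | ⟨h1, h2, h3⟩ <;>
          rcases hw' with ⟨h1', h2', h3'⟩ | ⟨h1', h2', h3'⟩ <;>
          exact Fin.ext (by omega)
      rw [hjj]

/-- Broadcasting in the `k`-cycle graph from the center within `b`
rounds is equivalent to `[b]` covering the multiset `{c₁, …, c_k}`; consequently the
minimum broadcast time equals the Prefix Covering optimum. -/
theorem kCycle_broadcast_iff_covers (k : ℕ) (hk : 1 ≤ k) (c : Fin k → ℕ)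
    (hc3 : ∀ i, 3 ≤ c i) :
    (∀ b : ℕ, 0 < b →
      ((∃ (τ : Option ((i : Fin k) × Fin (c i)) → ℕ)
          (par : Option ((i : Fin k) × Fin (c i)) → Option ((i : Fin k) × Fin (c i))),
          IsBroadcastScheme (kCycleGraph c) none τ par ∧ ∀ v, τ v ≤ b) ↔
        Covers (Finset.Icc 1 b).val (Finset.univ.val.map c))) ∧
    sInf {b : ℕ | ∃ (τ : Option ((i : Fin k) × Fin (c i)) → ℕ)
          (par : Option ((i : Fin k) × Fin (c i)) → Option ((i : Fin k) × Fin (c i))),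
          IsBroadcastScheme (kCycleGraph c) none τ par ∧ ∀ v, τ v ≤ b}
      = prefixOPT (Finset.univ.val.map c) := by
  classical
  have main : ∀ b : ℕ,
      (∃ (τ : Option ((i : Fin k) × Fin (c i)) → ℕ)
          (par : Option ((i : Fin k) × Fin (c i)) → Option ((i : Fin k) × Fin (c i))),
          IsBroadcastScheme (kCycleGraph c) none τ par ∧ ∀ v, τ v ≤ b) ↔
        Covers (Finset.Icc 1 b).val (Finset.univ.val.map c) := by
    intro b
    constructor
    · rintro ⟨τ, par, hs, hb⟩
      exact kCycle_forward c hc3 b τ par hs hb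
    · exact kCycle_backward c hc3 b
  constructor
  · exact fun b _ => main b
  · have hset : {b : ℕ | ∃ (τ : Option ((i : Fin k) × Fin (c i)) → ℕ)
          (par : Option ((i : Fin k) × Fin (c i)) → Option ((i : Fin k) × Fin (c i))),
          IsBroadcastScheme (kCycleGraph c) none τ par ∧ ∀ v, τ v ≤ b}
        = {m : ℕ | Covers (Finset.Icc 1 m).val (Finset.univ.val.map c)} := Set.ext main
    rw [hset, prefixOPT]
end

section
/- Let m ≥ 1 and let c_1,…,c_m be odd integers with c_i ≥ 3 for all i and Σ_{i=1}^m c_i = m(2m+1). Then the set [2m] = {1,2,…,2m} covers the multiset {c_1,…,c_m} if and only if there exist a bijection α from {1,…,m} onto the even numbers {2,4,…,2m} and a bijection β from {1,…,m} onto the odd numbers {1,3,…,2m−1} such that α(i)+β(i) = c_i for all i ∈ {1,…,m}. -/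
private lemma aux_exists_fun {α β γ : Type*} [DecidableEq α] [Inhabited β]
    (f : β → γ) (g : α → γ) (s : Finset α) :
    ∀ T : Multiset β, T.map f = s.val.map g →
    ∃ h : α → β, (∀ a ∈ s, f (h a) = g a) ∧ s.val.map h = T := by
  induction s using Finset.cons_induction with
  | empty =>
    intro T hT
    simp only [Finset.empty_val, Multiset.map_zero, Multiset.map_eq_zero] at hT
    exact ⟨fun _ => default, by simp, by simp [hT]⟩
  | cons a s ha ih =>
    intro T hT
    have hmem : g a ∈ T.map f := by rw [hT, Finset.cons_val, Multiset.map_cons]; simp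
    obtain ⟨q, hq, hfq⟩ := Multiset.mem_map.1 hmem
    obtain ⟨T', rfl⟩ := Multiset.exists_cons_of_mem hq
    rw [Finset.cons_val, Multiset.map_cons, Multiset.map_cons, hfq] at hT
    have hT' := (Multiset.cons_inj_right _).1 hT
    obtain ⟨h, hh1, hh2⟩ := ih T' hT'
    refine ⟨Function.update h a q, ?_, ?_⟩
    · intro x hx
      rcases Finset.mem_cons.1 hx with rfl | hx
      · simp [hfq]
      · rw [Function.update_of_ne (fun hxa => ha (by rw [← hxa]; exact hx))]; exact hh1 x hx
    · rw [Finset.cons_val, Multiset.map_cons, Function.update_self]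
      congr 1
      rw [← hh2]
      exact Multiset.map_congr rfl fun x hx =>
        Function.update_of_ne (fun hxa => ha (by rw [← hxa]; exact hx)) _ _

private lemma aux_card_sum {ι : Type*} (s : Finset ι) (f : ι → Multiset ℕ) :
    Multiset.card (∑ i ∈ s, f i) = ∑ i ∈ s, Multiset.card (f i) := by
  induction s using Finset.cons_induction with
  | empty => simp
  | cons a s ha ih => rw [Finset.sum_cons, Finset.sum_cons, Multiset.card_add, ih]

private lemma aux_sum_sum {ι : Type*} (s : Finset ι) (f : ι → Multiset ℕ) :
    (∑ i ∈ s, f i).sum = ∑ i ∈ s, (f i).sum := by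
  induction s using Finset.cons_induction with
  | empty => simp
  | cons a s ha ih => rw [Finset.sum_cons, Finset.sum_cons, Multiset.sum_add, ih]

private lemma aux_Icc_sum (m : ℕ) : ∑ i ∈ Finset.Icc 1 (2*m), i = m * (2*m+1) := by
  have h1 := Finset.sum_range_id_mul_two (2*m+1)
  have h2 : ∑ i ∈ Finset.range (2*m+1), i = ∑ i ∈ Finset.Icc 1 (2*m), i := by
    rw [Finset.range_eq_Ico, ← Finset.Ico_add_one_right_eq_Icc, Finset.sum_eq_sum_Ico_succ_bot (by omega)]
    simp [Nat.succ_eq_add_one]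
  have h3 : (2*m+1) * (2*m+1-1) = (m*(2*m+1))*2 := by simp; ring
  omega

/-- For odd `cᵢ ≥ 3` summing to `m(2m+1)`, the set `[2m]` covers
the multiset `{c₁, …, c_m}` iff there are bijections `α` onto the even numbers and
`β` onto the odd numbers of `{1, …, 2m}` with `α i + β i = cᵢ` for all `i`. -/
theorem covers_iff_evenOdd (m : ℕ) (hm : 1 ≤ m) (c : Fin m → ℕ)
    (hodd : ∀ i, Odd (c i)) (hc3 : ∀ i, 3 ≤ c i)
    (hsum : ∑ i, c i = m * (2 * m + 1)) :
    Covers (Finset.Icc 1 (2 * m)).val (Finset.univ.val.map c) ↔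
    (∃ α β : Fin m → ℕ,
        Set.BijOn α Set.univ {x | Even x ∧ x ∈ Set.Icc 1 (2 * m)} ∧
        Set.BijOn β Set.univ {x | Odd x ∧ x ∈ Set.Icc 1 (2 * m)} ∧
        ∀ i, α i + β i = c i) := by
  classical
  have hBsum : (Finset.Icc 1 (2*m)).val.sum = m * (2*m+1) := by
    have := aux_Icc_sum m
    rwa [Finset.sum_eq_multiset_sum, Multiset.map_id'] at this
  have hBcard : Multiset.card (Finset.Icc 1 (2*m)).val = 2 * m := by
    rw [← Finset.card_def, Nat.card_Icc]; omega
  constructor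
  · rintro ⟨T, hfst, hle, hprop⟩
    obtain ⟨h, hh1, hh2⟩ := aux_exists_fun Prod.fst c Finset.univ T hfst
    simp only [Finset.mem_univ, forall_true_left] at hh1
    have hmemT : ∀ i, h i ∈ T := fun i => by
      rw [← hh2]; exact Multiset.mem_map_of_mem h (Finset.mem_univ i)
    have hsnd : (T.map Prod.snd).sum = ∑ i, (h i).2 := by
      rw [← hh2, Multiset.map_map, Finset.sum_eq_multiset_sum _ _]; rfl
    rw [hsnd] at hle
    -- total sums agree
    have hge : (Finset.Icc 1 (2*m)).val.sum ≤ (∑ i, (h i).2).sum := by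
      rw [hBsum, aux_sum_sum, ← hsum]
      exact Finset.sum_le_sum fun i _ => (hh1 i) ▸ (hprop (h i) (hmemT i)).2
    have hEq : ∑ i, (h i).2 = (Finset.Icc 1 (2*m)).val := by
      refine le_antisymm hle (tsub_eq_zero_iff_le.1 ?_)
      by_contra hne
      obtain ⟨x, hx⟩ := Multiset.exists_mem_of_ne_zero hne
      have hxB : x ∈ (Finset.Icc 1 (2*m)).val := Multiset.mem_of_le tsub_le_self hx
      have hx1 : 1 ≤ x := (Finset.mem_Icc.1 hxB).1
      have hBsplit : (∑ i, (h i).2) + ((Finset.Icc 1 (2*m)).val - ∑ i, (h i).2)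
          = (Finset.Icc 1 (2*m)).val := add_tsub_cancel_of_le hle
      have hsums : (∑ i, (h i).2).sum
          + ((Finset.Icc 1 (2*m)).val - ∑ i, (h i).2).sum
          = (Finset.Icc 1 (2*m)).val.sum := by rw [← Multiset.sum_add, hBsplit]
      have hxle : x ≤ ((Finset.Icc 1 (2*m)).val - ∑ i, (h i).2).sum :=
        Multiset.single_le_sum (fun y _ => Nat.zero_le y) x hx
      omega
    -- each piece has sum exactly c i and card exactly 2
    have hsum_eq : ∀ i, (h i).2.sum = c i := by
      intro i
      have := (Finset.sum_eq_sum_iff_of_le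
        (f := c) (g := fun i => (h i).2.sum)
        (fun i _ => (hh1 i) ▸ (hprop (h i) (hmemT i)).2)).1
        (by rw [hsum, ← hBsum, ← hEq, aux_sum_sum])
      exact ((this i (Finset.mem_univ i)).symm)
    have hcard : ∀ i, Multiset.card (h i).2 = 2 := by
      intro i
      have := (Finset.sum_eq_sum_iff_of_le
        (f := fun i => Multiset.card (h i).2) (g := fun _ => 2)
        (fun i _ => (hprop (h i) (hmemT i)).1)).1
        (by rw [← aux_card_sum, hEq, hBcard, Finset.sum_const, Finset.card_univ,
                Fintype.card_fin, smul_eq_mul, Nat.mul_comm])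
      exact this i (Finset.mem_univ i)
    have key : ∀ i, ∃ a b, (h i).2 = {a, b} ∧ Even a ∧ Odd b ∧ a + b = c i := by
      intro i
      obtain ⟨a, b, hab⟩ := Multiset.card_eq_two.1 (hcard i)
      have hab2 : a + b = c i := by
        have := hsum_eq i; rw [hab] at this
        simpa [Multiset.insert_eq_cons, Multiset.sum_cons] using this
      rcases Nat.even_or_odd a with he | ho
      · have hb : Odd b := by
          have := hodd i
          rw [Nat.even_iff] at he; rw [Nat.odd_iff] at this ⊢; omega
        exact ⟨a, b, hab, he, hb, hab2⟩
      · have hb : Even b := by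
          have := hodd i
          rw [Nat.odd_iff] at ho this; rw [Nat.even_iff]; omega
        exact ⟨b, a, by rw [hab]; exact Multiset.pair_comm a b, hb, ho, by omega⟩
    choose A Bt habm hevenA hoddB hABc using key
    have hmem2 : ∀ i x, x ∈ (h i).2 → x ∈ Finset.Icc 1 (2*m) := by
      intro i x hx
      have h1 : (h i).2 ≤ ∑ j, (h j).2 :=
        Finset.single_le_sum (f := fun j => (h j).2)
          (fun j _ => Multiset.zero_le _) (Finset.mem_univ i)
      rw [hEq] at h1
      exact Finset.mem_def.2 (Multiset.mem_of_le h1 hx)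
    have hAmem : ∀ i, A i ∈ (h i).2 := fun i => by rw [habm i]; simp
    have hBmem : ∀ i, Bt i ∈ (h i).2 := fun i => by rw [habm i]; simp
    have hinj : ∀ (f : Fin m → ℕ), (∀ i, f i ∈ (h i).2) → Set.InjOn f Set.univ := by
      intro f hf
      intro i _ j _ hfij
      by_contra hne
      have hle2 : (h i).2 + (h j).2 ≤ (Finset.Icc 1 (2*m)).val := by
        rw [← hEq]
        calc (h i).2 + (h j).2 = ∑ k ∈ ({i, j} : Finset (Fin m)), (h k).2 :=
              (Finset.sum_pair (f := fun k => (h k).2) hne).symm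
          _ ≤ ∑ k, (h k).2 :=
              Finset.sum_le_sum_of_subset (Finset.subset_univ _)
      have hcount : Multiset.count (f i) (Finset.Icc 1 (2*m)).val ≤ 1 :=
        Multiset.nodup_iff_count_le_one.1 (Finset.Icc 1 (2*m)).nodup (f i)
      have h1 : 1 ≤ Multiset.count (f i) (h i).2 :=
        Multiset.one_le_count_iff_mem.2 (hf i)
      have h2 : 1 ≤ Multiset.count (f i) (h j).2 :=
        Multiset.one_le_count_iff_mem.2 (hfij ▸ hf j)
      have h3 := Multiset.count_le_of_le (f i) hle2
      rw [Multiset.count_add] at h3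
      omega
    refine ⟨A, Bt, ⟨?_, hinj A hAmem, ?_⟩, ⟨?_, hinj Bt hBmem, ?_⟩, hABc⟩
    · intro i _
      have := Finset.mem_Icc.1 (hmem2 i _ (hAmem i))
      exact ⟨hevenA i, Set.mem_Icc.2 this⟩
    · intro x hx
      obtain ⟨hxe, hxI⟩ := hx
      have hxB : x ∈ (Finset.Icc 1 (2*m)).val :=
        Finset.mem_def.1 (Finset.mem_Icc.2 (Set.mem_Icc.1 hxI))
      rw [← hEq] at hxB
      obtain ⟨i, _, hxi⟩ := Multiset.mem_sum.1 hxB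
      rw [habm i] at hxi
      simp only [Multiset.insert_eq_cons, Multiset.mem_cons, Multiset.mem_singleton] at hxi
      rcases hxi with rfl | rfl
      · exact ⟨i, Set.mem_univ i, rfl⟩
      · exact absurd hxe (Nat.not_even_iff_odd.2 (hoddB i))
    · intro i _
      have := Finset.mem_Icc.1 (hmem2 i _ (hBmem i))
      exact ⟨hoddB i, Set.mem_Icc.2 this⟩
    · intro x hx
      obtain ⟨hxo, hxI⟩ := hx
      have hxB : x ∈ (Finset.Icc 1 (2*m)).val :=
        Finset.mem_def.1 (Finset.mem_Icc.2 (Set.mem_Icc.1 hxI))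
      rw [← hEq] at hxB
      obtain ⟨i, _, hxi⟩ := Multiset.mem_sum.1 hxB
      rw [habm i] at hxi
      simp only [Multiset.insert_eq_cons, Multiset.mem_cons, Multiset.mem_singleton] at hxi
      rcases hxi with rfl | rfl
      · exact absurd (hevenA i) (Nat.not_even_iff_odd.2 hxo)
      · exact ⟨i, Set.mem_univ i, rfl⟩
  · rintro ⟨A, Bt, hA, hB, hAB⟩
    refine ⟨Finset.univ.val.map (fun i => (c i, ({A i, Bt i} : Multiset ℕ))), ?_, ?_, ?_⟩
    · rw [Multiset.map_map]; rfl
    · rw [Multiset.map_map]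
      have hsum2 : ((Finset.univ.val.map
          (fun i => (Prod.snd ∘ fun i => (c i, ({A i, Bt i} : Multiset ℕ))) i)).sum)
          = Finset.univ.val.map A + Finset.univ.val.map Bt := by
        show (∑ i, ({A i, Bt i} : Multiset ℕ)) = _
        have : ∀ i, ({A i, Bt i} : Multiset ℕ) = {A i} + {Bt i} := by
          intro i; rfl
        rw [Finset.sum_congr rfl fun i _ => this i, Finset.sum_add_distrib]
        congr 1
        · rw [Finset.sum_eq_multiset_sum _ _, ← Multiset.sum_map_singleton (Finset.univ.val.map A),
              Multiset.map_map]; rfl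
        · rw [Finset.sum_eq_multiset_sum _ _, ← Multiset.sum_map_singleton (Finset.univ.val.map Bt),
              Multiset.map_map]; rfl
      rw [hsum2]
      have hAinj : Set.InjOn A ↑(Finset.univ : Finset (Fin m)) :=
        hA.injOn.mono (Set.subset_univ _)
      have hBinj : Set.InjOn Bt ↑(Finset.univ : Finset (Fin m)) :=
        hB.injOn.mono (Set.subset_univ _)
      have hAval := Finset.image_val_of_injOn hAinj
      have hBval := Finset.image_val_of_injOn hBinj
      have hAset : ↑(Finset.image A Finset.univ) = {x | Even x ∧ x ∈ Set.Icc 1 (2*m)} := by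
        rw [Finset.coe_image, Finset.coe_univ]; exact hA.image_eq
      have hBset : ↑(Finset.image Bt Finset.univ) = {x | Odd x ∧ x ∈ Set.Icc 1 (2*m)} := by
        rw [Finset.coe_image, Finset.coe_univ]; exact hB.image_eq
      have hdisj : Disjoint (Finset.image A Finset.univ) (Finset.image Bt Finset.univ) := by
        rw [Finset.disjoint_left]
        intro x hxA hxB
        have h1 : x ∈ ({x | Even x ∧ x ∈ Set.Icc 1 (2*m)} : Set ℕ) := hAset ▸ Finset.mem_coe.2 hxA
        have h2 : x ∈ ({x | Odd x ∧ x ∈ Set.Icc 1 (2*m)} : Set ℕ) := hBset ▸ Finset.mem_coe.2 hxB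
        exact (Nat.not_even_iff_odd.2 h2.1) h1.1
      have hunion : Finset.image A Finset.univ ∪ Finset.image Bt Finset.univ
          = Finset.Icc 1 (2*m) := by
        apply Finset.coe_injective
        rw [Finset.coe_union, hAset, hBset, Finset.coe_Icc]
        ext x
        simp only [Set.mem_union, Set.mem_setOf_eq, Set.mem_Icc]
        constructor
        · rintro (⟨_, hx⟩ | ⟨_, hx⟩) <;> exact hx
        · intro hx
          rcases Nat.even_or_odd x with he | ho
          · exact Or.inl ⟨he, hx⟩
          · exact Or.inr ⟨ho, hx⟩
      have : Finset.univ.val.map A + Finset.univ.val.map Bt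
          = (Finset.Icc 1 (2*m)).val := by
        rw [← hAval, ← hBval, ← hunion, ← Finset.disjUnion_eq_union _ _ hdisj]
        rfl
      exact le_of_eq this
    · intro q hq
      obtain ⟨i, _, rfl⟩ := Multiset.mem_map.1 hq
      constructor
      · show Multiset.card {A i, Bt i} ≤ 2
        simp [Multiset.insert_eq_cons]
      · show c i ≤ ({A i, Bt i} : Multiset ℕ).sum
        rw [Multiset.insert_eq_cons, Multiset.sum_cons, Multiset.sum_singleton, hAB i]
end

section
/- Let k ≥ 1 and let c_1,…,c_k be integers with c_i ≥ 3, let G be the k-cycle graph G(c_1,…,c_k) with center r, and let the source be s = r. Then in any broadcast scheme for (G,s), for every integer i ≥ 0 the number of vertices v with τ(v) ≤ i is at most 1 + i(i+1)/2. -/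
namespace KCycleAux

variable {V : Type*} [DecidableEq V]

/-- Follow parents for `n` steps or until the parent is `s`. -/
def cs (par : V → V) (s : V) : ℕ → V → V
  | 0, v => v
  | n+1, v => if par v = s then v else cs par s n (par v)

/-- The start of the broadcast chain containing `v` (the child of the root). -/
def D (τ : V → ℕ) (par : V → V) (s : V) (v : V) : V := cs par s (τ v) v

theorem tau_pos {τ : V → ℕ} {par : V → V} {s : V}
    (hpar : ∀ v, v ≠ s → τ (par v) < τ v) {v : V} (hv : v ≠ s) : 1 ≤ τ v := by
  have := hpar v hv; omega

theorem cs_eq {τ : V → ℕ} {par : V → V} {s : V}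
    (hpar : ∀ v, v ≠ s → τ (par v) < τ v) :
    ∀ t v, v ≠ s → τ v ≤ t → ∀ n m, τ v ≤ n → τ v ≤ m →
      cs par s n v = cs par s m v := by
  intro t
  induction t with
  | zero => intro v hv ht _ _ _ _; have := tau_pos hpar hv; omega
  | succ t ih =>
    intro v hv ht n m hn hm
    have h1 : 1 ≤ τ v := tau_pos hpar hv
    obtain ⟨n', rfl⟩ : ∃ n', n = n' + 1 := ⟨n - 1, by omega⟩
    obtain ⟨m', rfl⟩ : ∃ m', m = m' + 1 := ⟨m - 1, by omega⟩
    by_cases hps : par v = s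
    · simp [cs, hps]
    · simp only [cs, if_neg hps]
      have h2 := hpar v hv
      exact ih (par v) hps (by omega) n' m' (by omega) (by omega)

theorem D_root {τ : V → ℕ} {par : V → V} {s : V}
    (hpar : ∀ v, v ≠ s → τ (par v) < τ v) {v : V} (hv : v ≠ s) (hps : par v = s) :
    D τ par s v = v := by
  have h1 : 1 ≤ τ v := tau_pos hpar hv
  obtain ⟨t, ht⟩ : ∃ t, τ v = t + 1 := ⟨τ v - 1, by omega⟩
  unfold D; rw [ht]; simp [cs, hps]

theorem D_step {τ : V → ℕ} {par : V → V} {s : V}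
    (hpar : ∀ v, v ≠ s → τ (par v) < τ v) {v : V} (hv : v ≠ s) (hps : par v ≠ s) :
    D τ par s v = D τ par s (par v) := by
  have h1 : 1 ≤ τ v := tau_pos hpar hv
  have h2 := hpar v hv
  obtain ⟨t, ht⟩ : ∃ t, τ v = t + 1 := ⟨τ v - 1, by omega⟩
  unfold D; rw [ht]
  simp only [cs, if_neg hps]
  exact cs_eq hpar (τ (par v)) (par v) hps le_rfl t (τ (par v)) (by omega) le_rfl

theorem D_spec {τ : V → ℕ} {par : V → V} {s : V}
    (hpar : ∀ v, v ≠ s → τ (par v) < τ v) :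
    ∀ t v, v ≠ s → τ v ≤ t →
      par (D τ par s v) = s ∧ D τ par s v ≠ s ∧ τ (D τ par s v) ≤ τ v := by
  intro t
  induction t with
  | zero => intro v hv ht; have := tau_pos hpar hv; omega
  | succ t ih =>
    intro v hv ht
    by_cases hps : par v = s
    · rw [D_root hpar hv hps]; exact ⟨hps, hv, le_rfl⟩
    · rw [D_step hpar hv hps]
      have h2 := hpar v hv
      obtain ⟨a, b, c'⟩ := ih (par v) hps (by omega)
      exact ⟨a, b, by omega⟩

theorem anc {τ : V → ℕ} {par : V → V} {s : V}
    (hpar : ∀ v, v ≠ s → τ (par v) < τ v) :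
    ∀ t v, v ≠ s → τ v ≤ t →
      ∃ n, par^[n] v = D τ par s v ∧ ∀ m ≤ n, par^[m] v ≠ s := by
  intro t
  induction t with
  | zero => intro v hv ht; have := tau_pos hpar hv; omega
  | succ t ih =>
    intro v hv ht
    by_cases hps : par v = s
    · refine ⟨0, (D_root hpar hv hps).symm, ?_⟩
      intro m hm
      interval_cases m
      simpa using hv
    · have h2 := hpar v hv
      obtain ⟨n, h1, h3⟩ := ih (par v) hps (by omega)
      refine ⟨n + 1, ?_, ?_⟩
      · rw [Function.iterate_succ_apply, h1, ← D_step hpar hv hps]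
      · intro m hm
        match m with
        | 0 => simpa using hv
        | m + 1 =>
          rw [Function.iterate_succ_apply]
          exact h3 m (by omega)

theorem comp {τ : V → ℕ} {par : V → V} {s : V}
    (hpar : ∀ v, v ≠ s → τ (par v) < τ v)
    (huniq : ∀ u, u ≠ s → ∀ v w, v ≠ s → w ≠ s → par v = u → par w = u → v = w) :
    ∀ t v w, v ≠ s → w ≠ s → τ v + τ w ≤ t → D τ par s v = D τ par s w →
      (∃ n, par^[n] w = v ∧ ∀ m ≤ n, par^[m] w ≠ s) ∨
      (∃ n, par^[n] v = w ∧ ∀ m ≤ n, par^[m] v ≠ s) := by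
  intro t
  induction t with
  | zero => intro v w hv hw ht _; have := tau_pos hpar hv; omega
  | succ t ih =>
    intro v w hv hw ht hD
    by_cases hpv : par v = s
    · have hveq : v = D τ par s w := by rw [← hD, D_root hpar hv hpv]
      obtain ⟨n, h1, h2⟩ := anc hpar (τ w) w hw le_rfl
      exact Or.inl ⟨n, by rw [h1, ← hveq], h2⟩
    · by_cases hpw : par w = s
      · have hweq : w = D τ par s v := by rw [hD, D_root hpar hw hpw]
        obtain ⟨n, h1, h2⟩ := anc hpar (τ v) v hv le_rfl
        exact Or.inr ⟨n, by rw [h1, ← hweq], h2⟩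
      · have h2v := hpar v hv
        have h2w := hpar w hw
        have hD' : D τ par s (par v) = D τ par s (par w) := by
          rw [← D_step hpar hv hpv, ← D_step hpar hw hpw, hD]
        rcases ih (par v) (par w) hpv hpw (by omega) hD' with ⟨n, h1, h3⟩ | ⟨n, h1, h3⟩
        · left
          have hne : par^[n] w ≠ s := by
            match n with
            | 0 => simpa using hw
            | n + 1 =>
              rw [Function.iterate_succ_apply]
              exact h3 n (by omega)
          have hchild : par (par^[n] w) = par v := by
            rw [← Function.iterate_succ_apply' par n w, Function.iterate_succ_apply par n w]
            exact h1

          have heq := huniq (par v) hpv (par^[n] w) v hne hv hchild rfl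
          refine ⟨n, heq, ?_⟩
          intro m hm
          match m with
          | 0 => simpa using hw
          | m + 1 =>
            rw [Function.iterate_succ_apply]
            exact h3 m (by omega)
        · right
          have hne : par^[n] v ≠ s := by
            match n with
            | 0 => simpa using hv
            | n + 1 =>
              rw [Function.iterate_succ_apply]
              exact h3 n (by omega)
          have hchild : par (par^[n] v) = par w := by
            rw [← Function.iterate_succ_apply' par n v, Function.iterate_succ_apply par n v]
            exact h1

          have heq := huniq (par w) hpw (par^[n] v) w hne hw hchild rfl
          refine ⟨n, heq, ?_⟩
          intro m hm
          match m with
          | 0 => simpa using hv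
          | m + 1 =>
            rw [Function.iterate_succ_apply]
            exact h3 m (by omega)

theorem iter_dec {τ : V → ℕ} {par : V → V} {s : V}
    (hpar : ∀ v, v ≠ s → τ (par v) < τ v) :
    ∀ n w, (∀ m ≤ n, par^[m] w ≠ s) → τ (par^[n] w) + n ≤ τ w := by
  intro n
  induction n with
  | zero => simp
  | succ n ih =>
    intro w hw
    have h1 := ih w (fun m hm => hw m (by omega))
    have h2 : par^[n] w ≠ s := hw n (by omega)
    have h3 := hpar _ h2
    rw [Function.iterate_succ_apply']
    omega

theorem D_inj {τ : V → ℕ} {par : V → V} {s : V}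
    (hpar : ∀ v, v ≠ s → τ (par v) < τ v)
    (huniq : ∀ u, u ≠ s → ∀ v w, v ≠ s → w ≠ s → par v = u → par w = u → v = w)
    {v w : V} (hv : v ≠ s) (hw : w ≠ s) (hτ : τ v = τ w)
    (hD : D τ par s v = D τ par s w) : v = w := by
  rcases comp hpar huniq (τ v + τ w) v w hv hw le_rfl hD with ⟨n, h1, h2⟩ | ⟨n, h1, h2⟩
  · have h3 := iter_dec hpar n w h2
    rw [h1] at h3
    have hn : n = 0 := by omega
    subst hn
    simpa using h1.symm
  · have h3 := iter_dec hpar n v h2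
    rw [h1] at h3
    have hn : n = 0 := by omega
    subst hn
    simpa using h1

end KCycleAux

namespace KCycleAux

def nbrA {k : ℕ} (c : Fin k → ℕ) (i : Fin k) (j : Fin (c i)) :
    Option ((i : Fin k) × Fin (c i)) :=
  if (j : ℕ) = 0 then none else some ⟨i, ⟨(j : ℕ) - 1, by have := j.isLt; omega⟩⟩

def nbrB {k : ℕ} (c : Fin k → ℕ) (i : Fin k) (j : Fin (c i)) :
    Option ((i : Fin k) × Fin (c i)) :=
  if h : (j : ℕ) = c i - 1 then none
  else some ⟨i, ⟨(j : ℕ) + 1, by have := j.isLt; omega⟩⟩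

theorem kCycle_nbrs {k : ℕ} (c : Fin k → ℕ) (hc3 : ∀ i, 3 ≤ c i) (i : Fin k)
    (j : Fin (c i)) (v : Option ((i : Fin k) × Fin (c i)))
    (hadj : (kCycleGraph c).Adj (some ⟨i, j⟩) v) :
    v = nbrA c i j ∨ v = nbrB c i j := by
  rw [kCycleGraph, SimpleGraph.fromRel_adj] at hadj
  obtain ⟨hne, hrel⟩ := hadj
  match v with
  | none =>
    simp only [kCycleRel] at hrel
    rcases hrel with h | (h | h)
    · exact absurd h (by simp [kCycleRel])
    · left; simp [nbrA, h]
    · right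
      have h0 : (j : ℕ) = c i - 1 := h
      simp [nbrB, h0]
  | some ⟨i', j'⟩ =>
    simp only [kCycleRel] at hrel
    rcases hrel with ⟨rfl, hj⟩ | ⟨rfl, hj⟩
    · right
      have hlt : (j' : ℕ) < c i := j'.isLt
      have hj2 : (j : ℕ) ≠ c i - 1 := by have := hc3 i; omega
      rw [nbrB, dif_neg hj2]
      exact congrArg (fun x : Fin (c i) => (some ⟨i, x⟩ : Option ((i : Fin k) × Fin (c i)))) (Fin.ext hj)
    · left
      have hj2 : (j : ℕ) ≠ 0 := by omega
      rw [nbrA, if_neg hj2]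
      exact congrArg (fun x : Fin (c i') => (some ⟨i', x⟩ : Option ((i : Fin k) × Fin (c i)))) (Fin.ext (by show (j' : ℕ) = (j : ℕ) - 1; omega))

end KCycleAux

/-- In any broadcast scheme for the `k`-cycle graph with the center
as source, at most `1 + i(i+1)/2` vertices are informed by round `i`. -/
theorem kCycle_informed_bound (k : ℕ) (hk : 1 ≤ k) (c : Fin k → ℕ)
    (hc3 : ∀ i, 3 ≤ c i)
    (τ : Option ((i : Fin k) × Fin (c i)) → ℕ)
    (par : Option ((i : Fin k) × Fin (c i)) → Option ((i : Fin k) × Fin (c i)))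
    (h : IsBroadcastScheme (kCycleGraph c) none τ par) (i : ℕ) :
    (Finset.univ.filter fun v => τ v ≤ i).card ≤ 1 + i * (i + 1) / 2 := by
  classical
  obtain ⟨hτ0, hpar', hinj⟩ := h
  have hpar : ∀ v, v ≠ (none : Option ((i : Fin k) × Fin (c i))) → τ (par v) < τ v :=
    fun v hv => (hpar' v hv).2
  -- every non-center vertex has at most one child
  have huniq : ∀ u, u ≠ (none : Option ((i : Fin k) × Fin (c i))) →
      ∀ v w, v ≠ none → w ≠ none → par v = u → par w = u → v = w := by
    intro u hu v w hv hw hpv hpw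
    rcases u with _ | ⟨iu, ju⟩
    · exact absurd rfl hu
    have hav : (kCycleGraph c).Adj (some ⟨iu, ju⟩) v := hpv ▸ (hpar' v hv).1
    have haw : (kCycleGraph c).Adj (some ⟨iu, ju⟩) w := hpw ▸ (hpar' w hw).1
    have hap : (kCycleGraph c).Adj (some ⟨iu, ju⟩) (par (some ⟨iu, ju⟩)) :=
      ((hpar' _ hu).1).symm
    have tpu : τ (par (some ⟨iu, ju⟩)) < τ (some ⟨iu, ju⟩) := (hpar' _ hu).2
    have tv : τ (some ⟨iu, ju⟩) < τ v := by
      have := (hpar' v hv).2; rwa [hpv] at this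
    have tw : τ (some ⟨iu, ju⟩) < τ w := by
      have := (hpar' w hw).2; rwa [hpw] at this
    rcases KCycleAux.kCycle_nbrs c hc3 iu ju v hav with rfl | rfl <;>
      rcases KCycleAux.kCycle_nbrs c hc3 iu ju w haw with rfl | rfl <;>
      rcases KCycleAux.kCycle_nbrs c hc3 iu ju (par (some ⟨iu, ju⟩)) hap with h2 | h2 <;>
      first
        | rfl
        | (rw [h2] at tpu; omega)
  set D := KCycleAux.D τ par (none : Option ((i : Fin k) × Fin (c i))) with hDdef
  have hDspec : ∀ v, v ≠ (none : Option ((i : Fin k) × Fin (c i))) →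
      par (D v) = none ∧ D v ≠ none ∧ τ (D v) ≤ τ v :=
    fun v hv => KCycleAux.D_spec hpar (τ v) v hv le_rfl
  -- the injection into pairs
  set T : Finset ((_ : ℕ) × ℕ) := (Finset.Icc 1 i).sigma (fun a => Finset.Icc 1 a) with hT
  set S' : Finset (Option ((i : Fin k) × Fin (c i))) :=
    Finset.univ.filter (fun v => v ≠ none ∧ τ v ≤ i) with hS'
  have hcard1 : (Finset.univ.filter fun v => τ v ≤ i) ⊆ insert none S' := by
    intro v hv
    simp only [Finset.mem_filter, Finset.mem_univ, true_and] at hv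
    rcases eq_or_ne v none with rfl | hvn
    · exact Finset.mem_insert_self _ _
    · exact Finset.mem_insert_of_mem (by simp [hS', hvn, hv])
  have hcard2 : S'.card ≤ T.card := by
    apply Finset.card_le_card_of_injOn (fun v => (⟨τ v, τ (D v)⟩ : (_ : ℕ) × ℕ))
    · intro v hv
      simp only [hS', Finset.mem_coe, Finset.mem_filter, Finset.mem_univ, true_and] at hv
      obtain ⟨hvn, hvi⟩ := hv
      obtain ⟨hp1, hp2, hp3⟩ := hDspec v hvn
      have h1 : 1 ≤ τ v := KCycleAux.tau_pos hpar hvn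
      have h2 : 1 ≤ τ (D v) := KCycleAux.tau_pos hpar hp2
      simp only [hT, Finset.mem_coe, Finset.mem_sigma, Finset.mem_Icc]
      omega
    · intro v hv w hw hφ
      simp only [hS', Finset.coe_filter, Set.mem_setOf_eq] at hv hw
      obtain ⟨-, hvn, hvi⟩ := hv
      obtain ⟨-, hwn, hwi⟩ := hw
      have h1 : τ v = τ w := congrArg Sigma.fst hφ
      have h2 : τ (D v) = τ (D w) := congrArg Sigma.snd hφ
      obtain ⟨hpv1, hpv2, -⟩ := hDspec v hvn
      obtain ⟨hpw1, hpw2, -⟩ := hDspec w hwn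
      have hDeq : D v = D w := hinj none ⟨hpv2, hpv1⟩ ⟨hpw2, hpw1⟩ h2
      exact KCycleAux.D_inj hpar huniq hvn hwn h1 hDeq
  have hTcard : T.card = i * (i + 1) / 2 := by
    rw [hT, Finset.card_sigma]
    have : ∀ n : ℕ, (∑ a ∈ Finset.Icc 1 n, (Finset.Icc 1 a).card) = n * (n + 1) / 2 := by
      intro n
      induction n with
      | zero => simp
      | succ n ih =>
        rw [Finset.sum_Icc_succ_top (by omega), ih, Nat.card_Icc]
        have e : (n + 1) * (n + 1 + 1) = n * (n + 1) + 2 * (n + 1) := by ring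
        omega
    exact this i
  calc (Finset.univ.filter fun v => τ v ≤ i).card
      ≤ (insert none S').card := Finset.card_le_card hcard1
    _ ≤ 1 + S'.card := by
        have := Finset.card_insert_le (none : Option ((i : Fin k) × Fin (c i))) S'
        omega
    _ ≤ 1 + i * (i + 1) / 2 := by omega
end

section
/- Let k ≥ 1 and let ℓ_1,…,ℓ_k be positive integers, and let G be the graph H⁺(ℓ_1,…,ℓ_k), i.e., the k-path graph with endpoints s,t together with the additional edge {s,t}, with source s. Then in any broadcast scheme for (G,s), for every integer i ≥ 1 the number of vertices v with τ(v) ≤ i is at most i(i−1) + 2. -/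
def kPathRel {k : ℕ} (ℓ : Fin k → ℕ) :
    Bool ⊕ ((i : Fin k) × Fin (ℓ i)) → Bool ⊕ ((i : Fin k) × Fin (ℓ i)) → Prop
  | Sum.inl false, Sum.inr ⟨_, j⟩ => (j : ℕ) = 0
  | Sum.inr ⟨i, j⟩, Sum.inl true => (j : ℕ) = ℓ i - 1
  | Sum.inr ⟨i, j⟩, Sum.inr ⟨i', j'⟩ => i = i' ∧ (j' : ℕ) = (j : ℕ) + 1
  | _, _ => False

/-- The `k`-path graph `H(ℓ₁, …, ℓ_k)`: `k` internally disjoint paths, the `i`-th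
with `ℓ i` internal vertices, joining `s = Sum.inl false` and `t = Sum.inl true`
(vertex `⟨i, j⟩` encodes the `(j+1)`-st internal vertex of the `i`-th path). -/
def kPathGraph {k : ℕ} (ℓ : Fin k → ℕ) :
    SimpleGraph (Bool ⊕ ((i : Fin k) × Fin (ℓ i))) :=
  SimpleGraph.fromRel (kPathRel ℓ)

/-- `H⁺(ℓ₁, …, ℓ_k)`: the `k`-path graph together with the extra edge `{s, t}`. -/
def kPathGraphPlus {k : ℕ} (ℓ : Fin k → ℕ) :
    SimpleGraph (Bool ⊕ ((i : Fin k) × Fin (ℓ i))) :=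
  SimpleGraph.fromRel (fun u v =>
    kPathRel ℓ u v ∨ (u = Sum.inl false ∧ v = Sum.inl true))

abbrev KPV (k : ℕ) (ℓ : Fin k → ℕ) := Bool ⊕ ((i : Fin k) × Fin (ℓ i))

namespace KPaux
variable {k : ℕ} {ℓ : Fin k → ℕ}

def chainRoot (par : KPV k ℓ → KPV k ℓ) : ℕ → KPV k ℓ → KPV k ℓ
  | 0, v => v
  | n+1, v => if (par v).isLeft then v else chainRoot par n (par v)

def chainDepth (par : KPV k ℓ → KPV k ℓ) : ℕ → KPV k ℓ → ℕ
  | 0, _ => 0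
  | n+1, v => if (par v).isLeft then 0 else chainDepth par n (par v) + 1

lemma chainRoot_succ (par : KPV k ℓ → KPV k ℓ) (n : ℕ) (v : KPV k ℓ) :
    chainRoot par (n+1) v = if (par v).isLeft then v else chainRoot par n (par v) := rfl

lemma chainDepth_succ (par : KPV k ℓ → KPV k ℓ) (n : ℕ) (v : KPV k ℓ) :
    chainDepth par (n+1) v = if (par v).isLeft then 0 else chainDepth par n (par v) + 1 := rfl

section
variable (τ : KPV k ℓ → ℕ) (par : KPV k ℓ → KPV k ℓ)

def vroot (v : KPV k ℓ) : KPV k ℓ := chainRoot par (τ v) v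

def vdepth (v : KPV k ℓ) : ℕ := chainDepth par (τ v) v

variable (h1 : ∀ v : KPV k ℓ, v ≠ Sum.inl false → τ (par v) < τ v)

include h1

lemma chain_fuel : ∀ n (p : (i : Fin k) × Fin (ℓ i)), τ (Sum.inr p) ≤ n →
    chainRoot par n (Sum.inr p) = vroot τ par (Sum.inr p) ∧
    chainDepth par n (Sum.inr p) = vdepth τ par (Sum.inr p) := by
  intro n
  induction n using Nat.strong_induction_on with
  | _ n ih =>
    intro p hp
    have hlt := h1 (Sum.inr p) (by simp)
    obtain ⟨m', hm'⟩ : ∃ m', τ (Sum.inr p) = m' + 1 := ⟨τ (Sum.inr p) - 1, by omega⟩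
    obtain ⟨m, hm⟩ : ∃ m, n = m + 1 := ⟨n - 1, by omega⟩
    subst hm
    unfold vroot vdepth
    rw [hm', chainRoot_succ, chainDepth_succ, chainRoot_succ, chainDepth_succ]
    by_cases hs : (par (Sum.inr p)).isLeft
    · simp [hs]
    · cases hq : par (Sum.inr p) with
      | inl b => rw [hq] at hs; simp at hs
      | inr q =>
        rw [hq] at hs hlt
        simp only [Sum.isLeft_inr, Bool.false_eq_true, if_false]
        have e1 := ih m (by omega) q (by omega)
        have e2 := ih m' (by omega) q (by omega)
        unfold vroot vdepth at e1 e2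
        rw [e1.1, e1.2, e2.1, e2.2]
        exact ⟨rfl, rfl⟩

lemma vroot_stop {p : (i : Fin k) × Fin (ℓ i)} (hs : (par (Sum.inr p)).isLeft) :
    vroot τ par (Sum.inr p) = Sum.inr p ∧ vdepth τ par (Sum.inr p) = 0 := by
  have hlt := h1 (Sum.inr p) (by simp)
  obtain ⟨m', hm'⟩ : ∃ m', τ (Sum.inr p) = m' + 1 := ⟨τ (Sum.inr p) - 1, by omega⟩
  unfold vroot vdepth
  rw [hm', chainRoot_succ, chainDepth_succ, if_pos hs, if_pos hs]
  exact ⟨rfl, rfl⟩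

lemma vroot_step {p q : (i : Fin k) × Fin (ℓ i)} (hq : par (Sum.inr p) = Sum.inr q) :
    vroot τ par (Sum.inr p) = vroot τ par (Sum.inr q) ∧
    vdepth τ par (Sum.inr p) = vdepth τ par (Sum.inr q) + 1 := by
  have hlt := h1 (Sum.inr p) (by simp)
  obtain ⟨m', hm'⟩ : ∃ m', τ (Sum.inr p) = m' + 1 := ⟨τ (Sum.inr p) - 1, by omega⟩
  have hfe := chain_fuel τ par h1 m' q (by rw [← hq]; omega)
  unfold vroot vdepth
  rw [hm', chainRoot_succ, chainDepth_succ, hq]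
  simp only [Sum.isLeft_inr, Bool.false_eq_true, if_false]
  exact ⟨hfe.1, by rw [hfe.2]; rfl⟩

lemma vroot_spec : ∀ n (p : (i : Fin k) × Fin (ℓ i)), τ (Sum.inr p) ≤ n →
    ∃ q : (i : Fin k) × Fin (ℓ i), vroot τ par (Sum.inr p) = Sum.inr q ∧
      (par (Sum.inr q)).isLeft ∧
      τ (Sum.inr q) + vdepth τ par (Sum.inr p) ≤ τ (Sum.inr p) := by
  intro n
  induction n using Nat.strong_induction_on with
  | _ n ih =>
    intro p hp
    have hlt := h1 (Sum.inr p) (by simp)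
    by_cases hs : (par (Sum.inr p)).isLeft
    · obtain ⟨e1, e2⟩ := vroot_stop τ par h1 hs
      exact ⟨p, e1, hs, by omega⟩
    · cases hq : par (Sum.inr p) with
      | inl b => rw [hq] at hs; simp at hs
      | inr q =>
        have hτq : τ (Sum.inr q) < τ (Sum.inr p) := by rw [← hq]; exact hlt
        obtain ⟨r, hr1, hr2, hr3⟩ := ih (n-1) (by omega) q (by omega)
        have step := vroot_step τ par h1 hq
        exact ⟨r, step.1.trans hr1, hr2, by omega⟩

end



lemma adj_cases (j : Fin k) (m : Fin (ℓ j)) :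
    ∃ n1 n2 : KPV k ℓ, ∀ x, (kPathGraphPlus ℓ).Adj x (Sum.inr ⟨j, m⟩) → x = n1 ∨ x = n2 := by
  have hjm := m.isLt
  refine ⟨(if h0 : (m : ℕ) = 0 then Sum.inl false else Sum.inr ⟨j, ⟨(m:ℕ) - 1, by omega⟩⟩),
          (if h2 : (m : ℕ) + 1 < ℓ j then Sum.inr ⟨j, ⟨(m:ℕ)+1, h2⟩⟩ else Sum.inl true), ?_⟩
  intro x hx
  rw [kPathGraphPlus, SimpleGraph.fromRel_adj] at hx
  obtain ⟨hne, hrel⟩ := hx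
  rcases x with b | ⟨j', m'⟩
  · cases b with
    | false =>
      left
      have hm0 : (m : ℕ) = 0 := by
        rcases hrel with (h | ⟨_, h⟩) | (h | ⟨h, _⟩)
        · exact h
        · exact absurd h (by simp)
        · exact absurd h (by exact fun hh => hh)
        · exact absurd h (by simp)
      rw [dif_pos hm0]
    | true =>
      right
      have hm1 : (m : ℕ) = ℓ j - 1 := by
        rcases hrel with (h | ⟨h, _⟩) | (h | ⟨h, _⟩)
        · exact absurd h (by exact fun hh => hh)
        · exact absurd h (by simp)
        · exact h
        · exact absurd h (by simp)
      rw [dif_neg (by omega)]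
  · have hrel' : (j' = j ∧ (m : ℕ) = (m' : ℕ) + 1) ∨ (j = j' ∧ (m' : ℕ) = (m : ℕ) + 1) := by
      rcases hrel with (h | ⟨h, _⟩) | (h | ⟨_, h⟩)
      · exact Or.inl h
      · exact absurd h (by simp)
      · exact Or.inr h
      · exact absurd h (by simp)
    rcases hrel' with ⟨rfl, h⟩ | ⟨rfl, h⟩
    · left
      rw [dif_neg (by omega)]
      have : m' = (⟨(m:ℕ) - 1, by omega⟩ : Fin (ℓ j')) := Fin.ext (show (m':ℕ) = (m:ℕ) - 1 by omega)
      rw [this]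
    · right
      have hlt : (m : ℕ) + 1 < ℓ j := by have := m'.isLt; omega
      rw [dif_pos hlt]
      have : m' = (⟨(m:ℕ) + 1, hlt⟩ : Fin (ℓ j)) := Fin.ext (show (m':ℕ) = (m:ℕ) + 1 by omega)
      rw [this]

lemma unique_child (τ : KPV k ℓ → ℕ) (par : KPV k ℓ → KPV k ℓ)
    (h : IsBroadcastScheme (kPathGraphPlus ℓ) (Sum.inl false) τ par)
    {q : (i : Fin k) × Fin (ℓ i)} {v v' : KPV k ℓ}
    (hv : v ≠ Sum.inl false) (hv' : v' ≠ Sum.inl false)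
    (hpv : par v = Sum.inr q) (hpv' : par v' = Sum.inr q) : v = v' := by
  obtain ⟨j, m⟩ := q
  obtain ⟨n1, n2, hn⟩ := adj_cases (ℓ := ℓ) j m
  have hwne : (Sum.inr ⟨j, m⟩ : KPV k ℓ) ≠ Sum.inl false := by simp
  have hadjw := (h.2.1 _ hwne).1
  have hτw := (h.2.1 _ hwne).2
  have hτv := (h.2.1 v hv).2
  have hτv' := (h.2.1 v' hv').2
  rw [hpv] at hτv
  rw [hpv'] at hτv'
  have hav : (kPathGraphPlus ℓ).Adj v (Sum.inr ⟨j, m⟩) := by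
    have := (h.2.1 v hv).1; rw [hpv] at this; exact this.symm
  have hav' : (kPathGraphPlus ℓ).Adj v' (Sum.inr ⟨j, m⟩) := by
    have := (h.2.1 v' hv').1; rw [hpv'] at this; exact this.symm
  have hvne : v ≠ par (Sum.inr ⟨j, m⟩) := by
    intro e; rw [← e] at hτw; omega
  have hvne' : v' ≠ par (Sum.inr ⟨j, m⟩) := by
    intro e; rw [← e] at hτw; omega
  rcases hn _ hadjw with e | e <;> rcases hn v hav with e1 | e1 <;>
    rcases hn v' hav' with e2 | e2 <;>
    first
      | (exact absurd (e1.trans e.symm) hvne)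
      | (exact absurd (e2.trans e.symm) hvne')
      | (exact e1.trans e2.symm)


lemma chain_inj (τ : KPV k ℓ → ℕ) (par : KPV k ℓ → KPV k ℓ)
    (h : IsBroadcastScheme (kPathGraphPlus ℓ) (Sum.inl false) τ par) :
    ∀ d (p p' : (i : Fin k) × Fin (ℓ i)),
      vdepth τ par (Sum.inr p) = d → vdepth τ par (Sum.inr p') = d →
      par (vroot τ par (Sum.inr p)) = par (vroot τ par (Sum.inr p')) →
      τ (vroot τ par (Sum.inr p)) = τ (vroot τ par (Sum.inr p')) →
      p = p' := by
  have h1 : ∀ v : KPV k ℓ, v ≠ Sum.inl false → τ (par v) < τ v :=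
    fun v hv => (h.2.1 v hv).2
  intro d
  induction d with
  | zero =>
    intro p p' hd hd' hpar hτ
    have hsp : (par (Sum.inr p)).isLeft := by
      by_contra hc
      cases hq : par (Sum.inr p) with
      | inl b => rw [hq] at hc; simp at hc
      | inr q => have := (vroot_step τ par h1 hq).2; omega
    have hsp' : (par (Sum.inr p')).isLeft := by
      by_contra hc
      cases hq : par (Sum.inr p') with
      | inl b => rw [hq] at hc; simp at hc
      | inr q => have := (vroot_step τ par h1 hq).2; omega
    rw [(vroot_stop τ par h1 hsp).1] at hpar hτ
    rw [(vroot_stop τ par h1 hsp').1] at hpar hτ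
    have := h.2.2 (par (Sum.inr p))
      (Set.mem_setOf.2 ⟨by simp, rfl⟩)
      (Set.mem_setOf.2 ⟨by simp, hpar.symm⟩) hτ
    exact Sum.inr.inj this
  | succ d ih =>
    intro p p' hd hd' hpar hτ
    have hnp : ¬ (par (Sum.inr p)).isLeft := by
      intro hc
      have := (vroot_stop τ par h1 hc).2; omega
    have hnp' : ¬ (par (Sum.inr p')).isLeft := by
      intro hc
      have := (vroot_stop τ par h1 hc).2; omega
    cases hq : par (Sum.inr p) with
    | inl b => rw [hq] at hnp; simp at hnp
    | inr q =>
      cases hq' : par (Sum.inr p') with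
      | inl b => rw [hq'] at hnp'; simp at hnp'
      | inr q' =>
        have st := vroot_step τ par h1 hq
        have st' := vroot_step τ par h1 hq'
        have hqq : q = q' := by
          apply ih q q' (by omega) (by omega)
          · rw [← st.1, ← st'.1]; exact hpar
          · rw [← st.1, ← st'.1]; exact hτ
        subst hqq
        have := unique_child τ par h (v := Sum.inr p) (v' := Sum.inr p')
          (by simp) (by simp) hq hq'
        exact Sum.inr.inj this


def triF (n : ℕ) : Finset (ℕ × ℕ) :=
  (Finset.range (n+1) ×ˢ Finset.range (n+1)).filter (fun p => 1 ≤ p.1 ∧ p.1 + p.2 ≤ n)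

lemma mem_triF {n : ℕ} {p : ℕ × ℕ} : p ∈ triF n ↔ 1 ≤ p.1 ∧ p.1 + p.2 ≤ n := by
  obtain ⟨a, m⟩ := p
  simp only [triF, Finset.mem_filter, Finset.mem_product, Finset.mem_range]
  omega

lemma triF_card : ∀ n, 2 * (triF n).card = n * (n + 1) := by
  intro n
  induction n with
  | zero =>
    have he : triF 0 = ∅ := by
      ext p; simp only [Finset.notMem_empty, iff_false, mem_triF]; omega
    rw [he]; rfl
  | succ n ih =>
    have hinj : Set.InjOn (fun a => (a + 1, n - a)) ↑(Finset.range (n+1)) := by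
      intro a _ b _ hab
      have := congrArg Prod.fst hab
      simpa using this
    have hun : triF (n+1) = triF n ∪ (Finset.range (n+1)).image (fun a => (a + 1, n - a)) := by
      ext ⟨a, m⟩
      simp only [Finset.mem_union, mem_triF, Finset.mem_image, Finset.mem_range, Prod.mk.injEq]
      constructor
      · rintro ⟨h1, h2⟩
        rcases le_or_gt (a + m) n with hle | hgt
        · exact Or.inl ⟨h1, hle⟩
        · exact Or.inr ⟨a - 1, by omega, by omega, by omega⟩
      · rintro (⟨h1, h2⟩ | ⟨c, hc, rfl, rfl⟩)
        · exact ⟨h1, by omega⟩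
        · exact ⟨by omega, by omega⟩
    have hdisj : Disjoint (triF n) ((Finset.range (n+1)).image (fun a => (a + 1, n - a))) := by
      rw [Finset.disjoint_left]
      rintro ⟨a, m⟩ hp hq
      rw [mem_triF] at hp
      simp only [Finset.mem_image, Finset.mem_range, Prod.mk.injEq] at hq
      obtain ⟨c, hc, h1, h2⟩ := hq
      omega
    rw [hun, Finset.card_union_of_disjoint hdisj, Finset.card_image_of_injOn hinj,
      Finset.card_range, Nat.mul_add, ih]
    ring


end KPaux

open KPaux

/-- In any broadcast scheme for `H⁺(ℓ₁, …, ℓ_k)` with source `s`,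
for every `i ≥ 1` at most `i(i−1) + 2` vertices are informed by round `i`. -/
theorem kPathPlus_informed_bound (k : ℕ) (hk : 1 ≤ k) (ℓ : Fin k → ℕ)
    (hl : ∀ i, 1 ≤ ℓ i)
    (τ : Bool ⊕ ((i : Fin k) × Fin (ℓ i)) → ℕ)
    (par : Bool ⊕ ((i : Fin k) × Fin (ℓ i)) → Bool ⊕ ((i : Fin k) × Fin (ℓ i)))
    (h : IsBroadcastScheme (kPathGraphPlus ℓ) (Sum.inl false) τ par)
    (i : ℕ) (hi : 1 ≤ i) :
    (Finset.univ.filter fun v => τ v ≤ i).card ≤ i * (i - 1) + 2 := by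
  classical
  have h1 : ∀ v : KPV k ℓ, v ≠ Sum.inl false → τ (par v) < τ v := fun v hv => (h.2.1 v hv).2
  set b := τ (Sum.inl true) with hb
  have hb1 : 1 ≤ b := by
    have := h1 (Sum.inl true) (by simp)
    omega
  have hroot : ∀ p : (i' : Fin k) × Fin (ℓ i'),
      ∃ q, vroot τ par (Sum.inr p) = Sum.inr q ∧ (par (Sum.inr q)).isLeft ∧
        τ (Sum.inr q) + vdepth τ par (Sum.inr p) ≤ τ (Sum.inr p) :=
    fun p => vroot_spec τ par h1 (τ (Sum.inr p)) p le_rfl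
  have hfacts : ∀ p : (i' : Fin k) × Fin (ℓ i'),
      1 ≤ τ (vroot τ par (Sum.inr p)) ∧
      τ (vroot τ par (Sum.inr p)) + vdepth τ par (Sum.inr p) ≤ τ (Sum.inr p) ∧
      (par (vroot τ par (Sum.inr p)) = Sum.inl true → b < τ (vroot τ par (Sum.inr p))) := by
    intro p
    obtain ⟨q, hq1, hq2, hq3⟩ := hroot p
    rw [hq1]
    have hpos := h1 (Sum.inr q) (by simp)
    refine ⟨by omega, hq3, fun ht => ?_⟩
    rw [ht] at hpos
    omega
  set Ss : Finset (KPV k ℓ) :=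
    Finset.univ.filter (fun v => v.isRight ∧ τ v ≤ i ∧ par (vroot τ par v) = Sum.inl false)
    with hSs
  set St : Finset (KPV k ℓ) :=
    Finset.univ.filter (fun v => v.isRight ∧ τ v ≤ i ∧ par (vroot τ par v) = Sum.inl true)
    with hSt
  have hmemSs : ∀ v, v ∈ Ss ↔ v.isRight ∧ τ v ≤ i ∧ par (vroot τ par v) = Sum.inl false := by
    intro v; rw [hSs, Finset.mem_filter]; simp
  have hmemSt : ∀ v, v ∈ St ↔ v.isRight ∧ τ v ≤ i ∧ par (vroot τ par v) = Sum.inl true := by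
    intro v; rw [hSt, Finset.mem_filter]; simp
  have hmapsS : ∀ v ∈ Ss, (τ (vroot τ par v), vdepth τ par v) ∈ triF i := by
    intro v hv
    rw [hmemSs] at hv
    obtain ⟨hr, hτi, hpar⟩ := hv
    rcases v with bb | p
    · simp at hr
    · obtain ⟨hf1, hf2, _⟩ := hfacts p
      rw [mem_triF]
      exact ⟨hf1, by omega⟩
  have hinjSs : Set.InjOn (fun v => (τ (vroot τ par v), vdepth τ par v)) ↑Ss := by
    intro v hv v' hv' he
    rw [Finset.mem_coe, hmemSs] at hv hv'
    rcases v with bb | p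
    · simp at hv
    rcases v' with bb' | p'
    · simp at hv'
    have he1 : τ (vroot τ par (Sum.inr p)) = τ (vroot τ par (Sum.inr p')) :=
      congrArg Prod.fst he
    have he2 : vdepth τ par (Sum.inr p) = vdepth τ par (Sum.inr p') :=
      congrArg Prod.snd he
    have := chain_inj τ par h (vdepth τ par (Sum.inr p)) p p' rfl he2.symm
      (by rw [hv.2.2, hv'.2.2]) he1
    rw [this]
  have hsub : (Finset.univ.filter fun v => τ v ≤ i) ⊆
      ({Sum.inl false, Sum.inl true} : Finset (KPV k ℓ)) ∪ Ss ∪ St := by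
    intro v hv
    rw [Finset.mem_filter] at hv
    rcases v with bb | p
    · cases bb
      · exact Finset.mem_union_left _ (Finset.mem_union_left _ (by simp))
      · exact Finset.mem_union_left _ (Finset.mem_union_left _ (by simp))
    · obtain ⟨q, hq1, hq2, hq3⟩ := hroot p
      cases hql : par (Sum.inr q) with
      | inl bb =>
        cases bb
        · refine Finset.mem_union_left _ (Finset.mem_union_right _ ?_)
          rw [hmemSs]
          exact ⟨by simp, hv.2, by rw [hq1, hql]⟩
        · refine Finset.mem_union_right _ ?_
          rw [hmemSt]
          exact ⟨by simp, hv.2, by rw [hq1, hql]⟩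
      | inr => rw [hql] at hq2; simp at hq2
  have hcount : (Finset.univ.filter fun v => τ v ≤ i).card ≤ 2 + Ss.card + St.card := by
    have c1 := Finset.card_le_card hsub
    have c2 := Finset.card_union_le
      (({Sum.inl false, Sum.inl true} : Finset (KPV k ℓ)) ∪ Ss) St
    have c3 := Finset.card_union_le ({Sum.inl false, Sum.inl true} : Finset (KPV k ℓ)) Ss
    have c4 : ({Sum.inl false, Sum.inl true} : Finset (KPV k ℓ)).card ≤ 2 :=
      (Finset.card_insert_le _ _).trans (by simp)
    omega
  rcases le_or_gt b i with hbi | hbi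
  · -- t is informed by round i
    have hStX : St.card ≤ (triF (i - b)).card := by
      apply Finset.card_le_card_of_injOn
        (fun v => (τ (vroot τ par v) - b, vdepth τ par v))
      · intro v hv
        rw [Finset.mem_coe, hmemSt] at hv
        obtain ⟨hr, hτi, hpar⟩ := hv
        rcases v with bb | p
        · simp at hr
        obtain ⟨hf1, hf2, hf3⟩ := hfacts p
        have hgt := hf3 hpar
        rw [Finset.mem_coe, mem_triF]
        constructor <;> simp only [] <;> omega
      · intro v hv v' hv' he
        rw [Finset.mem_coe, hmemSt] at hv hv'
        rcases v with bb | p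
        · simp at hv
        rcases v' with bb' | p'
        · simp at hv'
        obtain ⟨hf1, hf2, hf3⟩ := hfacts p
        obtain ⟨hg1, hg2, hg3⟩ := hfacts p'
        have hgt := hf3 hv.2.2
        have hgt' := hg3 hv'.2.2
        have he1 : τ (vroot τ par (Sum.inr p)) - b = τ (vroot τ par (Sum.inr p')) - b :=
          congrArg Prod.fst he
        have he2 : vdepth τ par (Sum.inr p) = vdepth τ par (Sum.inr p') :=
          congrArg Prod.snd he
        have := chain_inj τ par h (vdepth τ par (Sum.inr p)) p p' rfl he2.symm
          (by rw [hv.2.2, hv'.2.2]) (by omega)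
        rw [this]
    have hbound : Ss.card + (i - b + 1) ≤ (triF i).card := by
      have hEx : ∃ E : Finset (ℕ × ℕ), E ⊆ triF i ∧ E.card = i - b + 1 ∧
          ∀ v ∈ Ss, (τ (vroot τ par v), vdepth τ par v) ∉ E := by
        by_cases hpt : par (Sum.inl true : KPV k ℓ) = Sum.inl false
        · refine ⟨(Finset.range (i - b + 1)).image (fun m => (b, m)), ?_, ?_, ?_⟩
          · intro x hx
            simp only [Finset.mem_image, Finset.mem_range] at hx
            obtain ⟨c, hc, rfl⟩ := hx
            rw [mem_triF]
            constructor <;> simp only [] <;> omega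
          · rw [Finset.card_image_of_injOn, Finset.card_range]
            intro a _ a' _ he
            simpa using congrArg Prod.snd he
          · intro v hv hmem
            rw [hmemSs] at hv
            obtain ⟨hr, hτi, hpar⟩ := hv
            rcases v with bb | p
            · simp at hr
            simp only [Finset.mem_image, Finset.mem_range] at hmem
            obtain ⟨c, hc, hpair⟩ := hmem
            have hfst : b = τ (vroot τ par (Sum.inr p)) := congrArg Prod.fst hpair
            obtain ⟨q, hq1, hq2, hq3⟩ := hroot p
            rw [hq1] at hpar hfst
            have := h.2.2 (Sum.inl false)
              (Set.mem_setOf.2 ⟨by simp, hpar⟩)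
              (Set.mem_setOf.2 ⟨by simp, hpt⟩)
              (by omega : τ (Sum.inr q) = τ (Sum.inl true))
            simp at this
        · -- par t is an internal vertex
          have htne : par (Sum.inl true : KPV k ℓ) ≠ Sum.inl true := by
            have hadj := (h.2.1 (Sum.inl true) (by simp)).1
            intro e; rw [e] at hadj
            exact (kPathGraphPlus ℓ).loopless.irrefl _ hadj
          cases hw : par (Sum.inl true : KPV k ℓ) with
          | inl bb =>
            cases bb
            · exact absurd hw hpt
            · exact absurd hw htne
          | inr q =>
            obtain ⟨r, hr1, hr2, hr3⟩ := hroot q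
            have hτq : τ (Sum.inr q) < b := by
              have := h1 (Sum.inl true) (by simp)
              rw [hw] at this
              omega
            have hrs : par (Sum.inr r) = Sum.inl false := by
              cases hrr : par (Sum.inr r) with
              | inl bb =>
                cases bb
                · rfl
                · exfalso
                  have h1r := h1 (Sum.inr r) (by simp)
                  rw [hrr] at h1r
                  omega
              | inr rr => rw [hrr] at hr2; simp at hr2
            have hex : ∀ d (p : (i' : Fin k) × Fin (ℓ i')), τ (Sum.inr p) ≤ i →
                par (vroot τ par (Sum.inr p)) = Sum.inl false →
                τ (vroot τ par (Sum.inr p)) = τ (Sum.inr r) →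
                vdepth τ par (Sum.inr p) = vdepth τ par (Sum.inr q) + 1 + d → False := by
              intro d
              induction d with
              | zero =>
                intro p hp hparp hτp hdp
                have hnp : ¬ (par (Sum.inr p)).isLeft := by
                  intro hc
                  have := (vroot_stop τ par h1 hc).2
                  omega
                cases hq2 : par (Sum.inr p) with
                | inl bb => rw [hq2] at hnp; simp at hnp
                | inr q2 =>
                  have st := vroot_step τ par h1 hq2
                  have hqq : q2 = q := by
                    apply chain_inj τ par h (vdepth τ par (Sum.inr q)) q2 q (by omega) rfl
                    · rw [← st.1, hparp, hr1, hrs]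
                    · rw [← st.1, hτp, hr1]
                  subst hqq
                  have := unique_child τ par h (v := Sum.inr p) (v' := Sum.inl true)
                    (by simp) (by simp) hq2 hw
                  simp at this
              | succ d ih =>
                intro p hp hparp hτp hdp
                have hnp : ¬ (par (Sum.inr p)).isLeft := by
                  intro hc
                  have := (vroot_stop τ par h1 hc).2
                  omega
                cases hq2 : par (Sum.inr p) with
                | inl bb => rw [hq2] at hnp; simp at hnp
                | inr q2 =>
                  have st := vroot_step τ par h1 hq2
                  have hlt2 := h1 (Sum.inr p) (by simp)
                  rw [hq2] at hlt2
                  exact ih q2 (by omega) (by rw [← st.1]; exact hparp)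
                    (by rw [← st.1]; exact hτp) (by omega)
            refine ⟨(Finset.range (i - b + 1)).image
              (fun d => (τ (Sum.inr r), vdepth τ par (Sum.inr q) + 1 + d)), ?_, ?_, ?_⟩
            · intro x hx
              simp only [Finset.mem_image, Finset.mem_range] at hx
              obtain ⟨c, hc, rfl⟩ := hx
              rw [mem_triF]
              have hpos := h1 (Sum.inr r) (by simp)
              constructor <;> simp only [] <;> omega
            · rw [Finset.card_image_of_injOn, Finset.card_range]
              intro a _ a' _ he
              simpa using congrArg Prod.snd he
            · intro v hv hmem
              rw [hmemSs] at hv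
              obtain ⟨hr, hτi, hpar⟩ := hv
              rcases v with bb | p
              · simp at hr
              simp only [Finset.mem_image, Finset.mem_range] at hmem
              obtain ⟨c, hc, hpair⟩ := hmem
              have hfst : τ (Sum.inr r) = τ (vroot τ par (Sum.inr p)) :=
                congrArg Prod.fst hpair
              have hsnd : vdepth τ par (Sum.inr q) + 1 + c = vdepth τ par (Sum.inr p) :=
                congrArg Prod.snd hpair
              exact hex c p hτi hpar hfst.symm hsnd.symm
      obtain ⟨E, hEsub, hEcard, hEdisj⟩ := hEx
      have hmain : Ss.card ≤ ((triF i) \ E).card := by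
        apply Finset.card_le_card_of_injOn (fun v => (τ (vroot τ par v), vdepth τ par v))
          (fun v hv => Finset.mem_sdiff.2 ⟨hmapsS v hv, hEdisj v hv⟩) hinjSs
      have h5 : ((triF i) \ E).card = (triF i).card - E.card := Finset.card_sdiff_of_subset hEsub
      have h6 : E.card ≤ (triF i).card := Finset.card_le_card hEsub
      omega
    -- arithmetic
    obtain ⟨x, hxi⟩ : ∃ x, i = b + x := ⟨i - b, by omega⟩
    obtain ⟨e, hbe⟩ : ∃ e, b = e + 1 := ⟨b - 1, by omega⟩
    have hie : i = x + e + 1 := by omega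
    subst hie
    have hxib : x + e + 1 - b = x := by omega
    rw [hxib] at hbound hStX
    have hA := triF_card (x + e + 1)
    have hX := triF_card x
    have hee : e ≤ e * e + 2 * (e * x) := by
      rcases Nat.eq_zero_or_pos e with rfl | hpos
      · simp
      · calc e = e * 1 := (mul_one e).symm
          _ ≤ e * e := Nat.mul_le_mul_left e hpos
          _ ≤ e * e + 2 * (e * x) := Nat.le_add_right _ _
    have hs1 : x + e + 1 - 1 = x + e := by omega
    rw [hs1]
    nlinarith [hcount, hbound, hStX, hA, hX, hee]
  · -- t is informed after round i
    have hsub2 : (Finset.univ.filter fun v => τ v ≤ i) ⊆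
        ({Sum.inl false} : Finset (KPV k ℓ)) ∪ Ss := by
      intro v hv
      rw [Finset.mem_filter] at hv
      rcases v with bb | p
      · cases bb
        · simp
        · exfalso
          have := hv.2
          omega
      · obtain ⟨q, hq1, hq2, hq3⟩ := hroot p
        cases hql : par (Sum.inr q) with
        | inl bb =>
          cases bb
          · refine Finset.mem_union_right _ ?_
            rw [hmemSs]
            exact ⟨by simp, hv.2, by rw [hq1, hql]⟩
          · exfalso
            have := h1 (Sum.inr q) (by simp)
            rw [hql] at this
            omega
        | inr => rw [hql] at hq2; simp at hq2
    have hc2 : (Finset.univ.filter fun v => τ v ≤ i).card ≤ 1 + Ss.card := by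
      have c1 := Finset.card_le_card hsub2
      have c2 := Finset.card_union_le ({Sum.inl false} : Finset (KPV k ℓ)) Ss
      have c3 : ({Sum.inl false} : Finset (KPV k ℓ)).card = 1 := Finset.card_singleton _
      omega
    have hSsA : Ss.card ≤ (triF i).card :=
      Finset.card_le_card_of_injOn _ hmapsS hinjSs
    obtain ⟨j, hj⟩ : ∃ j, i = j + 1 := ⟨i - 1, by omega⟩
    subst hj
    have hA := triF_card (j + 1)
    have hjj : j ≤ j * j := by
      rcases Nat.eq_zero_or_pos j with rfl | hpos
      · simp
      · calc j = j * 1 := (mul_one j).symm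
          _ ≤ j * j := Nat.mul_le_mul_left j hpos
    have hs1 : j + 1 - 1 = j := by omega
    rw [hs1]
    nlinarith [hc2, hSsA, hA, hjj]
end

section
/- Let S be a multiset of n positive integers and let p be a positive integer. Then the Prefix Covering optimum satisfies OPT(R_p(S)) ≤ OPT(S) + 2⌈n/p⌉, where R_p(S) is the rounded set of S with p parts. -/
/-- The rounded set `R_p(S)`: list `S` in non-increasing order, cut the list into
consecutive blocks of size `⌈|S|/p⌉` (the last block possibly smaller), and replace
every element by the maximum element of its block. -/
def roundedSet (p : ℕ) (S : Multiset ℕ) : Multiset ℕ :=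
  let l := S.sort (· ≥ ·)
  let b := (S.card + p - 1) / p
  ((List.range l.length).map fun idx => l.getD (idx / b * b) 0 : List ℕ)

lemma covers_mono {C C' S : Multiset ℕ} (h : C ≤ C') (hc : Covers C S) : Covers C' S := by
  obtain ⟨T, h1, h2, h3⟩ := hc
  exact ⟨T, h1, le_trans h2 h, h3⟩

lemma covers_add {C₁ C₂ S₁ S₂ : Multiset ℕ} (h1 : Covers C₁ S₁) (h2 : Covers C₂ S₂) :
    Covers (C₁ + C₂) (S₁ + S₂) := by
  obtain ⟨T₁, a1, a2, a3⟩ := h1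
  obtain ⟨T₂, b1, b2, b3⟩ := h2
  refine ⟨T₁ + T₂, by simp [a1, b1], by simpa using add_le_add a2 b2, ?_⟩
  intro q hq
  rcases Multiset.mem_add.1 hq with h | h
  · exact a3 q h
  · exact b3 q h

lemma sum_mono_le {s t : Multiset (Multiset ℕ)} (h : s ≤ t) : s.sum ≤ t.sum := by
  obtain ⟨u, rfl⟩ := Multiset.le_iff_exists_add.1 h
  simp

lemma exists_le_map {α β : Type*} [DecidableEq α] [DecidableEq β] {f : α → β} :
    ∀ {s' : Multiset β} {t : Multiset α}, s' ≤ t.map f → ∃ t' ≤ t, t'.map f = s' := by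
  intro s'
  induction s' using Multiset.induction with
  | empty => intro t _; exact ⟨0, Multiset.zero_le _, rfl⟩
  | cons a s' ih =>
    intro t h
    have ha : a ∈ t.map f := Multiset.mem_of_le h (Multiset.mem_cons_self _ _)
    obtain ⟨x, hx, hfx⟩ := Multiset.mem_map.1 ha
    have ht : t = x ::ₘ t.erase x := (Multiset.cons_erase hx).symm
    have h' : s' ≤ (t.erase x).map f := by
      have := Multiset.erase_le_erase a h
      rw [Multiset.erase_cons_head] at this
      conv_rhs at this => rw [ht]
      rwa [Multiset.map_cons, hfx, Multiset.erase_cons_head] at this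
    obtain ⟨t', ht', hmap⟩ := ih h'
    refine ⟨x ::ₘ t', ?_, by simp [hmap, hfx]⟩
    rw [ht]
    exact Multiset.cons_le_cons _ ht'

lemma covers_of_le {C S S' : Multiset ℕ} (h : S' ≤ S) (hc : Covers C S) : Covers C S' := by
  obtain ⟨T, h1, h2, h3⟩ := hc
  obtain ⟨T', hT', hmap⟩ := exists_le_map (h.trans (le_of_eq h1.symm))
  exact ⟨T', hmap, le_trans (sum_mono_le (Multiset.map_le_map hT')) h2,
    fun q hq => h3 q (Multiset.mem_of_le hT' hq)⟩

lemma rel_exists_aux :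
    ∀ {S' : Multiset ℕ} {T : Multiset (ℕ × Multiset ℕ)},
      Multiset.Rel (fun a q => a ≤ Prod.fst q) S' T →
      ∃ T' : Multiset (ℕ × Multiset ℕ), T'.map Prod.fst = S' ∧
        T'.map Prod.snd = T.map Prod.snd ∧
        ∀ q' ∈ T', ∃ q ∈ T, q'.1 ≤ q.1 ∧ q'.2 = q.2 := by
  intro S' T h
  induction h with
  | zero => exact ⟨0, by simp, by simp, by simp⟩
  | @cons a b as bs hab _ ih =>
    obtain ⟨T', h1, h2, h3⟩ := ih
    refine ⟨(a, b.2) ::ₘ T', by simp [h1], by simp [h2], ?_⟩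
    intro q' hq'
    rcases Multiset.mem_cons.1 hq' with h | h
    · exact ⟨b, Multiset.mem_cons_self _ _, by simp [h, hab], by simp [h]⟩
    · obtain ⟨q, hq, hle, heq⟩ := h3 q' h
      exact ⟨q, Multiset.mem_cons_of_mem hq, hle, heq⟩

lemma covers_of_rel {C S S' : Multiset ℕ} (h : Multiset.Rel (· ≤ ·) S' S)
    (hc : Covers C S) : Covers C S' := by
  obtain ⟨T, h1, h2, h3⟩ := hc
  rw [← h1, Multiset.rel_map_right] at h
  obtain ⟨T', g1, g2, g3⟩ := rel_exists_aux h
  refine ⟨T', g1, g2 ▸ h2, ?_⟩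
  intro q' hq'
  obtain ⟨q, hq, hle, heq⟩ := g3 q' hq'
  obtain ⟨c1, c2⟩ := h3 q hq
  exact ⟨heq ▸ c1, heq ▸ (hle.trans c2)⟩

lemma rel_refl_on {α : Type*} {r : α → α → Prop} :
    ∀ {s : Multiset α}, (∀ x ∈ s, r x x) → Multiset.Rel r s s := by
  intro s
  induction s using Multiset.induction with
  | empty => intro; exact Multiset.Rel.zero
  | cons a s ih =>
    intro h
    exact Multiset.Rel.cons (h a (Multiset.mem_cons_self _ _))
      (ih fun x hx => h x (Multiset.mem_cons_of_mem hx))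

lemma pairsum (m : ℕ) : ∀ b : ℕ,
    (((List.range b).map (fun k => ({m+2*k+1, m+2*k+2} : Multiset ℕ))) : List (Multiset ℕ)).sum
      = ↑(List.range' (m+1) (2*b)) := by
  intro b
  induction b with
  | zero => simp
  | succ b ih =>
    rw [List.range_succ, List.map_append, List.sum_append, ih]
    have h2 : (2 : ℕ) * (b+1) = 2*b + 2 := by ring
    have := List.range'_append (s := m+1) (m := 2*b) (n := 2) (step := 1)
    rw [one_mul] at this
    rw [Nat.add_comm (2*b) 2] at this
    rw [h2, show (2*b+2 : ℕ) = 2 + 2*b by ring, ← this]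
    have : List.range' (m+1+2*b) 2 = [m+2*b+1, m+2*b+2] := by
      rw [show m+1+2*b = m+2*b+1 by omega, show m+2*b+2 = (m+2*b+1)+1 by omega]
      rfl
    rw [this]
    simp only [List.map_cons, List.map_nil, List.sum_cons, List.sum_nil, add_zero]
    rfl

lemma singsum (a : ℕ) : ∀ n : ℕ,
    (((List.range n).map (fun i => ({a+i} : Multiset ℕ))) : List (Multiset ℕ)).sum
      = ↑(List.range' a n) := by
  intro n
  induction n with
  | zero => simp
  | succ n ih =>
    rw [List.range_succ, List.map_append, List.sum_append, ih]
    have := List.range'_append (s := a) (m := n) (n := 1) (step := 1)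
    rw [one_mul] at this
    rw [Nat.add_comm n 1] at this
    rw [show n+1 = 1+n by omega, ← this]
    simp only [List.map_cons, List.map_nil, List.sum_cons, List.sum_nil, add_zero]
    rfl

lemma take_eq_map_range {l : List ℕ} {k : ℕ} (hk : k ≤ l.length) :
    (List.range k).map (fun j => l.getD j 0) = l.take k := by
  apply List.ext_getElem
  · simp [hk]
  · intro i h1 h2
    simp only [List.getElem_map, List.getElem_range, List.getElem_take]
    rw [List.getD_eq_getElem]

lemma sorted_getD {l : List ℕ} (hl : l.Pairwise (· ≥ ·)) {i j : ℕ} (hij : i ≤ j)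
    (hj : j < l.length) : l.getD j 0 ≤ l.getD i 0 := by
  have hi : i < l.length := lt_of_le_of_lt hij hj
  rw [List.getD_eq_getElem _ _ hj, List.getD_eq_getElem _ _ hi]
  have := hl.rel_get_of_le (a := ⟨i, hi⟩) (b := ⟨j, hj⟩) hij
  simpa using this

lemma icc_split (m k : ℕ) :
    (Finset.Icc 1 (m + k)).val = (Finset.Icc 1 m).val + ↑(List.range' (m+1) k) := by
  rw [Nat.Icc_eq_range', Nat.Icc_eq_range']
  simp only
  rw [show ((↑(List.range' 1 (m + 1 - 1)) : Multiset ℕ) + ↑(List.range' (m+1) k))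
      = ↑(List.range' 1 (m + 1 - 1) ++ List.range' (m+1) k) from (Multiset.coe_add _ _).symm]
  congr 1
  have := List.range'_append (s := 1) (m := m) (n := k) (step := 1)
  rw [one_mul] at this
  rw [Nat.add_comm m k] at this
  rw [Nat.add_sub_cancel, Nat.add_sub_cancel]
  rw [show (1:ℕ) + m = m + 1 by omega] at this
  rw [show m + k = k + m by omega]
  exact this.symm

lemma covers_replicate {m b L : ℕ} (hL : L ≤ 2*m) :
    Covers ↑(List.range' (m+1) (2*b)) (Multiset.replicate b L) := by
  refine ⟨↑((List.range b).map (fun k => (L, ({m+2*k+1, m+2*k+2} : Multiset ℕ)))), ?_, ?_, ?_⟩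
  · rw [Multiset.map_coe, List.map_map]
    rw [show (Prod.fst ∘ fun k => (L, ({m+2*k+1, m+2*k+2} : Multiset ℕ))) = fun _ => L from rfl]
    rw [List.map_const', List.length_range, Multiset.coe_replicate]
  · rw [Multiset.map_coe, List.map_map]
    rw [show (Prod.snd ∘ fun k => (L, ({m+2*k+1, m+2*k+2} : Multiset ℕ)))
        = fun k => ({m+2*k+1, m+2*k+2} : Multiset ℕ) from rfl]
    rw [Multiset.sum_coe, pairsum]
  · intro q hq
    rw [Multiset.mem_coe, List.mem_map] at hq
    obtain ⟨k, _, rfl⟩ := hq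
    constructor
    · rfl
    · show L ≤ ({m+2*k+1, m+2*k+2} : Multiset ℕ).sum
      have : ({m+2*k+1, m+2*k+2} : Multiset ℕ).sum = (m+2*k+1) + (m+2*k+2) := by
        simp [Multiset.insert_eq_cons]
      rw [this]; omega

lemma covers_nonempty (S : Multiset ℕ) : ∃ M : ℕ, Covers (Finset.Icc 1 M).val S := by
  set l := S.sort (· ≥ ·) with hl
  set n := l.length with hn
  set L := l.getD 0 0 with hLdef
  refine ⟨L + n, ↑((List.range n).map (fun i => (l.getD i 0, ({L+1+i} : Multiset ℕ)))), ?_, ?_, ?_⟩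
  · rw [Multiset.map_coe, List.map_map]
    rw [show (Prod.fst ∘ fun i => (l.getD i 0, ({L+1+i} : Multiset ℕ)))
        = fun i => l.getD i 0 from rfl]
    rw [take_eq_map_range (le_refl n), List.take_length]
    exact Multiset.sort_eq S _
  · rw [Multiset.map_coe, List.map_map]
    rw [show (Prod.snd ∘ fun i => (l.getD i 0, ({L+1+i} : Multiset ℕ)))
        = fun i => ({(L+1)+i} : Multiset ℕ) from rfl]
    rw [Multiset.sum_coe, singsum]
    rw [icc_split L n]
    exact le_add_self
  · intro q hq
    rw [Multiset.mem_coe, List.mem_map] at hq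
    obtain ⟨i, hi, rfl⟩ := hq
    rw [List.mem_range] at hi
    refine ⟨by simp, ?_⟩
    show l.getD i 0 ≤ ({L+1+i} : Multiset ℕ).sum
    have h1 : l.getD i 0 ≤ L := sorted_getD (Multiset.pairwise_sort _ _) (Nat.zero_le i) hi
    simp only [Multiset.sum_singleton]
    omega

/-- `OPT(R_p(S)) ≤ OPT(S) + 2⌈n/p⌉` for the Prefix Covering
optimum, where `n = |S|`. -/
theorem prefixOPT_roundedSet_le (S : Multiset ℕ) (hS : ∀ x ∈ S, 0 < x)
    (p : ℕ) (hp : 0 < p) :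
    prefixOPT (roundedSet p S) ≤ prefixOPT S + 2 * ((S.card + p - 1) / p) := by
  classical
  set l := S.sort (· ≥ ·) with hl
  set b := (S.card + p - 1) / p with hbdef
  set n := S.card with hndef
  have hln : l.length = n := Multiset.length_sort _
  set f : ℕ → ℕ := fun idx => l.getD (idx / b * b) 0 with hf
  have hrs0 : roundedSet p S = ↑((List.range n).map f) := by
    rw [show roundedSet p S
        = (((List.range l.length).map fun idx => l.getD (idx / b * b) 0 : List ℕ) : Multiset ℕ)
      from rfl, hln]
  by_cases hn : n = 0
  · have hrs : roundedSet p S = 0 := by rw [hrs0, hn]; rfl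
    rw [hrs]
    refine le_trans (Nat.sInf_le ?_) (Nat.zero_le _)
    exact ⟨0, by simp, by simp, by simp⟩
  · have hn1 : 1 ≤ n := Nat.one_le_iff_ne_zero.2 hn
    have hb1 : 1 ≤ b := by
      rw [hbdef]
      rw [Nat.one_le_div_iff hp]
      omega
    have hbn : b ≤ n := by
      rw [hbdef]
      have hpn : n ≤ p * n := Nat.le_mul_of_pos_left n hp
      rw [Nat.div_le_iff_le_mul_add_pred hp]
      omega
    obtain ⟨M, hM⟩ := covers_nonempty S
    set m := prefixOPT S with hm
    have hne : Set.Nonempty {k | Covers (Finset.Icc 1 k).val S} := ⟨M, hM⟩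
    have hmem : Covers (Finset.Icc 1 m).val S := Nat.sInf_mem hne
    set L := l.getD 0 0 with hLdef
    have hl0 : 0 < l.length := by omega
    have hLmem : L ∈ S := by
      have hmem' : L ∈ l := by
        rw [hLdef, List.getD_eq_getElem _ _ hl0]
        exact l.getElem_mem hl0
      rw [← Multiset.sort_eq S (· ≥ ·), ← hl, Multiset.mem_coe]
      exact hmem'
    have hL2m : L ≤ 2 * m := by
      obtain ⟨T, h1, h2, h3⟩ := hmem
      rw [← h1] at hLmem
      obtain ⟨q, hq, hq1⟩ := Multiset.mem_map.1 hLmem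
      have hsq : q.2 ≤ (T.map Prod.snd).sum :=
        Multiset.single_le_sum (fun x _ => Multiset.zero_le x) _ (Multiset.mem_map_of_mem _ hq)
      have hx : ∀ x ∈ q.2, x ≤ m := by
        intro x hxq
        have hmemx : x ∈ (Finset.Icc 1 m).val := Multiset.mem_of_le (hsq.trans h2) hxq
        exact (Finset.mem_Icc.1 hmemx).2
      have hsum := Multiset.sum_le_card_nsmul q.2 m hx
      obtain ⟨hc, hq2⟩ := h3 q hq
      calc L = q.1 := hq1.symm
        _ ≤ q.2.sum := hq2
        _ ≤ Multiset.card q.2 • m := hsum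
        _ ≤ 2 * m := by rw [smul_eq_mul]; exact Nat.mul_le_mul_right m hc
    -- decompose the rounded set
    have hsplit : List.range n = List.range' 0 b ++ List.range' b (n - b) := by
      rw [List.range_eq_range']
      have := List.range'_append (s := 0) (m := b) (n := n - b) (step := 1)
      rw [one_mul] at this
      simp only [Nat.zero_add] at this
      rw [Nat.add_comm b (n - b)] at this
      rw [show n - b + b = n by omega] at this
      rw [← this]
    have hhead : ((List.range' 0 b).map f : Multiset ℕ) = Multiset.replicate b L := by
      have : (List.range' 0 b).map f = (List.range' 0 b).map (fun _ => L) := by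
        apply List.map_congr_left
        intro idx hidx
        have hidxb : idx < b := by
          have := List.mem_range'_1.1 hidx
          omega
        rw [hf]
        simp only
        rw [Nat.div_eq_of_lt hidxb, Nat.zero_mul]
      rw [this, List.map_const', List.length_range', Multiset.coe_replicate]
    have hrs : roundedSet p S
        = Multiset.replicate b L + ↑((List.range' b (n - b)).map f) := by
      rw [hrs0, hsplit, List.map_append, ← Multiset.coe_add, hhead]
    -- the tail is pointwise below the first n - b elements of S
    have htake_le : (↑(l.take (n - b)) : Multiset ℕ) ≤ S := by
      rw [← Multiset.sort_eq S (· ≥ ·), ← hl]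
      exact Multiset.coe_le.2 (l.take_sublist (n - b)).subperm
    have htail : Multiset.Rel (· ≤ ·) (↑((List.range' b (n - b)).map f))
        (↑(l.take (n - b)) : Multiset ℕ) := by
      rw [← take_eq_map_range (by omega : n - b ≤ l.length)]
      rw [List.range'_eq_map_range, List.map_map]
      rw [show (↑((List.range (n-b)).map (f ∘ fun x => b + x)) : Multiset ℕ)
          = Multiset.map (f ∘ fun x => b + x) ↑(List.range (n-b)) from (Multiset.map_coe _ _).symm]
      rw [show (↑((List.range (n-b)).map (fun j => l.getD j 0)) : Multiset ℕ)
          = Multiset.map (fun j => l.getD j 0) ↑(List.range (n-b)) from (Multiset.map_coe _ _).symm]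
      rw [Multiset.rel_map]
      apply rel_refl_on
      intro j hj
      rw [Multiset.mem_coe, List.mem_range] at hj
      simp only [Function.comp_apply]
      rw [hf]
      simp only
      set q := (b + j) / b with hq
      set r := (b + j) % b with hr
      have h1 : b * q + r = b + j := Nat.div_add_mod (b + j) b
      have h2 : r < b := Nat.mod_lt _ (by omega)
      have hji : j ≤ q * b := by rw [Nat.mul_comm]; omega
      have hin : q * b < l.length := by rw [Nat.mul_comm]; omega
      exact sorted_getD (Multiset.pairwise_sort _ _) hji hin
    -- assemble the coverage
    have hcov_tail : Covers (Finset.Icc 1 m).val ↑((List.range' b (n - b)).map f) :=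
      covers_of_rel htail (covers_of_le htake_le hmem)
    have hcov_head : Covers ↑(List.range' (m+1) (2*b)) (Multiset.replicate b L) :=
      covers_replicate hL2m
    have hcov : Covers (Finset.Icc 1 (m + 2*b)).val (roundedSet p S) := by
      rw [hrs, icc_split m (2*b), add_comm (Multiset.replicate b L)]
      exact covers_add hcov_tail hcov_head
    have hmem2 : (m + 2*b) ∈ {k | Covers (Finset.Icc 1 k).val (roundedSet p S)} := hcov
    exact Nat.sInf_le hmem2
end

section
/- Let S be a multiset of n positive integers, let β ≥ 0 be an integer, and let p be a positive integer. Then the Double Prefix Covering optimum satisfies OPT(R_p(S), β) ≤ OPT(S, β) + ⌈n/p⌉, where R_p(S) is the rounded set of S with p parts. -/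
/-- `(C, D)` double-covers `S`: each element `ℓᵢ` of `S` is assigned a value `c i`
(either `0` or an element of `C`) and a value `d i` (either `0` or an element of `D`),
each element of `C` (resp. `D`) being used at most as many times as its multiplicity,
such that `c i + d i ≥ ℓᵢ` for all `i`. -/
def DoubleCovers (C D S : Multiset ℕ) : Prop :=
  ∃ T : Multiset (ℕ × ℕ × ℕ),
    T.map (fun x => x.1) = S ∧
    Multiset.filter (fun x => x ≠ 0) (T.map fun x => x.2.1) ≤ C ∧
    Multiset.filter (fun x => x ≠ 0) (T.map fun x => x.2.2) ≤ D ∧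
    ∀ x ∈ T, x.1 ≤ x.2.1 + x.2.2

/-- The Double Prefix Covering optimum: the least `m ≥ β` such that
`([m], [m − β])` double-covers `S`. -/
noncomputable def doubleOPT (S : Multiset ℕ) (β : ℕ) : ℕ :=
  sInf {m | β ≤ m ∧ DoubleCovers (Finset.Icc 1 m).val (Finset.Icc 1 (m - β)).val S}

/-- Writing a list as a map over `List.range`. -/
lemma map_getD_range {α : Type*} (l : List α) (d : α) :
    (List.range l.length).map (fun i => l.getD i d) = l := by
  apply List.ext_getElem
  · simp
  · intro i h1 h2
    simp only [List.getElem_map, List.getElem_range]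
    exact List.getD_eq_getElem l d h2

/-- Alignment: a multiset whose image is a given list can be listed compatibly. -/
lemma exists_list_of_map_eq {α β : Type*} (f : β → α) :
    ∀ (l : List α) (T : Multiset β), T.map f = ↑l →
      ∃ t : List β, (↑t : Multiset β) = T ∧ t.map f = l := by
  classical
  intro l
  induction l with
  | nil =>
    intro T h
    refine ⟨[], ?_, rfl⟩
    have h0 : T.map f = 0 := by rw [h]; rfl
    have : T = 0 := Multiset.map_eq_zero.mp h0
    simp [this]
  | cons a l ih =>
    intro T h
    have ha : a ∈ T.map f := by rw [h]; simp
    obtain ⟨x, hx, hfx⟩ := Multiset.mem_map.mp ha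
    have hT : x ::ₘ T.erase x = T := Multiset.cons_erase hx
    have h2 : (T.erase x).map f = ↑l := by
      have h' : (x ::ₘ T.erase x).map f = (a ::ₘ ↑l : Multiset α) := by
        rw [hT, h]; rfl
      rw [Multiset.map_cons, hfx] at h'
      exact (Multiset.cons_inj_right a).mp h'
    obtain ⟨t, ht1, ht2⟩ := ih (T.erase x) h2
    exact ⟨x :: t, by rw [← hT, ← ht1]; rfl, by simp [ht2, hfx]⟩

/-- Interval splitting at the level of multisets. -/
lemma icc_val_add (m b : ℕ) :
    (Finset.Icc 1 m).val + (Finset.Icc (m + 1) (m + b)).val = (Finset.Icc 1 (m + b)).val := by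
  have hcount : ∀ (s : Finset ℕ) (a : ℕ), s.val.count a = if a ∈ s then 1 else 0 := by
    intro s a
    split
    · exact Multiset.count_eq_one_of_mem s.nodup (by simpa [Finset.mem_val] using ‹a ∈ s›)
    · exact Multiset.count_eq_zero_of_notMem (by simpa [Finset.mem_val] using ‹a ∉ s›)
  refine Multiset.ext.mpr fun a => ?_
  rw [Multiset.count_add, hcount, hcount, hcount]
  simp only [Finset.mem_Icc]
  split_ifs <;> omega

/-- Monotonicity of `getD` on a non-increasingly sorted list. -/
lemma sorted_getD_le (l : List ℕ) (hs : l.Pairwise (· ≥ ·)) (j k : ℕ) (hjk : j ≤ k)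
    (hk : k < l.length) : l.getD k 0 ≤ l.getD j 0 := by
  rw [List.getD_eq_getElem l 0 hk, List.getD_eq_getElem l 0 (by omega)]
  rcases Nat.lt_or_ge j k with hlt | hge
  · exact (List.pairwise_iff_getElem.mp hs) j k (by omega) hk hlt
  · have : j = k := by omega
    subst this
    rfl

/-- Every element of a double-covered multiset is at most the sum of bounds. -/
lemma elem_le_of_doubleCovers {C D S : Multiset ℕ} (h : DoubleCovers C D S)
    {mC mD : ℕ} (hC : ∀ x ∈ C, x ≤ mC) (hD : ∀ x ∈ D, x ≤ mD) :
    ∀ s ∈ S, s ≤ mC + mD := by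
  obtain ⟨T, h1, hc, hd, hcov⟩ := h
  intro s hs
  rw [← h1] at hs
  obtain ⟨y, hy, hys⟩ := Multiset.mem_map.mp hs
  have hy1 : y.2.1 ≤ mC := by
    by_cases h0 : y.2.1 = 0
    · omega
    · refine hC _ (Multiset.mem_of_le hc ?_)
      rw [Multiset.mem_filter]
      exact ⟨Multiset.mem_map_of_mem _ hy, h0⟩
  have hy2 : y.2.2 ≤ mD := by
    by_cases h0 : y.2.2 = 0
    · omega
    · refine hD _ (Multiset.mem_of_le hd ?_)
      rw [Multiset.mem_filter]
      exact ⟨Multiset.mem_map_of_mem _ hy, h0⟩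
  have := hcov y hy
  omega

/-- The defining set of `doubleOPT` is nonempty. -/
lemma doubleOPT_set_nonempty (S : Multiset ℕ) (β : ℕ) :
    {m | β ≤ m ∧ DoubleCovers (Finset.Icc 1 m).val (Finset.Icc 1 (m - β)).val S}.Nonempty := by
  classical
  set n := Multiset.card S with hn
  set m := β + S.sum + n with hm
  refine ⟨m, by omega, ?_⟩
  set l := S.toList with hl
  have hlS : (↑l : Multiset ℕ) = S := Multiset.coe_toList S
  have hln : l.length = n := by rw [← hlS] at hn; simpa using hn.symm
  refine ⟨(↑((List.range n).map fun i => ((l.getD i 0 : ℕ), (S.sum + i + 1 : ℕ), (0 : ℕ))) :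
      Multiset (ℕ × ℕ × ℕ)), ?_, ?_, ?_, ?_⟩
  · rw [← hlS]
    rw [Multiset.map_coe, List.map_map]
    rw [← hln]
    exact congrArg _ (map_getD_range l 0)
  · rw [Multiset.map_coe, List.map_map]
    have hself : Multiset.filter (fun x => x ≠ 0)
        (↑(List.map ((fun x => x.2.1) ∘ fun i => ((l.getD i 0 : ℕ), (S.sum + i + 1 : ℕ), (0:ℕ))) (List.range n)) : Multiset ℕ) =
        ↑(List.map ((fun x => x.2.1) ∘ fun i => ((l.getD i 0 : ℕ), (S.sum + i + 1 : ℕ), (0:ℕ))) (List.range n)) := by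
      refine Multiset.filter_eq_self.mpr ?_
      intro a ha
      simp only [Multiset.mem_coe, List.mem_map, List.mem_range, Function.comp] at ha
      obtain ⟨i, hi, rfl⟩ := ha
      omega
    rw [hself]
    refine (Multiset.le_iff_subset ?_).mpr ?_
    · rw [Multiset.coe_nodup]
      refine List.Nodup.map ?_ List.nodup_range
      intro x y hxy
      simpa [Function.comp] using hxy
    · intro a ha
      simp only [Multiset.mem_coe, List.mem_map, List.mem_range, Function.comp] at ha
      obtain ⟨i, hi, rfl⟩ := ha
      simp only [Finset.mem_val, Finset.mem_Icc]
      omega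
  · rw [Multiset.map_coe, List.map_map]
    have : Multiset.filter (fun x => x ≠ 0)
        (↑(List.map ((fun x => x.2.2) ∘ fun i => ((l.getD i 0 : ℕ), (S.sum + i + 1 : ℕ), (0:ℕ))) (List.range n)) : Multiset ℕ) = 0 := by
      refine Multiset.filter_eq_nil.mpr ?_
      intro a ha
      simp only [Multiset.mem_coe, List.mem_map, List.mem_range, Function.comp] at ha
      obtain ⟨i, hi, rfl⟩ := ha
      simp
    rw [this]
    exact Multiset.zero_le _
  · intro x hx
    simp only [Multiset.mem_coe, List.mem_map, List.mem_range] at hx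
    obtain ⟨i, hi, rfl⟩ := hx
    simp only
    have hmem : l.getD i 0 ∈ S := by
      rw [← hlS, Multiset.mem_coe]
      rw [List.getD_eq_getElem l 0 (by omega : i < l.length)]
      exact List.getElem_mem _
    have := Multiset.single_le_sum (fun x _ => Nat.zero_le x) _ hmem
    omega

/-- The key filter bound for the shifted assignment. -/
lemma filter_shift_le (n b m : ℕ) (c : ℕ → ℕ)
    (hc : Multiset.filter (fun x => x ≠ 0) (↑((List.range n).map c) : Multiset ℕ) ≤
      (Finset.Icc 1 m).val) :
    Multiset.filter (fun x => x ≠ 0)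
      (↑((List.range n).map fun i => if i < b then m + i + 1 else c (i - b)) : Multiset ℕ) ≤
      (Finset.Icc 1 (m + b)).val := by
  classical
  have fresh_le : ∀ k, k ≤ b →
      Multiset.filter (fun x => x ≠ 0)
        (↑((List.range k).map fun i => (m + i + 1 : ℕ)) : Multiset ℕ) ≤
        (Finset.Icc (m + 1) (m + b)).val := by
    intro k hk
    have hself : Multiset.filter (fun x => x ≠ 0)
        (↑((List.range k).map fun i => (m + i + 1 : ℕ)) : Multiset ℕ) =
        ↑((List.range k).map fun i => (m + i + 1 : ℕ)) := by
      refine Multiset.filter_eq_self.mpr ?_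
      intro a ha
      simp only [Multiset.mem_coe, List.mem_map, List.mem_range] at ha
      obtain ⟨i, hi, rfl⟩ := ha
      omega
    rw [hself]
    refine (Multiset.le_iff_subset ?_).mpr ?_
    · rw [Multiset.coe_nodup]
      refine List.Nodup.map ?_ List.nodup_range
      intro x y hxy
      simpa using hxy
    · intro a ha
      simp only [Multiset.mem_coe, List.mem_map, List.mem_range] at ha
      obtain ⟨i, hi, rfl⟩ := ha
      simp only [Finset.mem_val, Finset.mem_Icc]
      omega
  by_cases hnb : n ≤ b
  · have heq : (List.range n).map (fun i => if i < b then m + i + 1 else c (i - b)) =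
        (List.range n).map fun i => (m + i + 1 : ℕ) := by
      refine List.map_congr_left ?_
      intro i hi
      rw [List.mem_range] at hi
      rw [if_pos (by omega)]
    rw [heq]
    refine le_trans (fresh_le n hnb) ?_
    rw [← icc_val_add m b]
    exact Multiset.le_add_left _ _
  · push_neg at hnb
    have hsplit : List.range n = List.range b ++ (List.range (n - b)).map (fun x => b + x) := by
      rw [← List.range_add]
      congr 1
      omega
    rw [hsplit, List.map_append, List.map_map]
    have hA : (List.range b).map (fun i => if i < b then m + i + 1 else c (i - b)) =
        (List.range b).map fun i => (m + i + 1 : ℕ) := by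
      refine List.map_congr_left ?_
      intro i hi
      rw [List.mem_range] at hi
      rw [if_pos hi]
    have hB : (List.range (n - b)).map
        ((fun i => if i < b then m + i + 1 else c (i - b)) ∘ fun x => b + x) =
        (List.range (n - b)).map (fun j => c j) := by
      refine List.map_congr_left ?_
      intro j _
      simp only [Function.comp]
      rw [if_neg (by omega)]
      congr 1
      omega
    rw [hA, hB]
    rw [← Multiset.coe_add, Multiset.filter_add]
    rw [← icc_val_add m b, add_comm ((Finset.Icc 1 m).val)]
    refine add_le_add (fresh_le b le_rfl) ?_
    refine le_trans (Multiset.filter_le_filter _ ?_) hc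
    rw [Multiset.coe_le]
    exact ((List.range_sublist.mpr (by omega)).map c).subperm

/-- `OPT(R_p(S), β) ≤ OPT(S, β) + ⌈n/p⌉` for the Double Prefix
Covering optimum, where `n = |S|`. -/
theorem doubleOPT_roundedSet_le (S : Multiset ℕ) (hS : ∀ x ∈ S, 0 < x)
    (β p : ℕ) (hp : 0 < p) :
    doubleOPT (roundedSet p S) β ≤ doubleOPT S β + (S.card + p - 1) / p := by
  classical
  obtain ⟨n, hn⟩ : ∃ n, n = Multiset.card S := ⟨_, rfl⟩
  obtain ⟨b, hb⟩ : ∃ b, b = (n + p - 1) / p := ⟨_, rfl⟩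
  obtain ⟨l, hl⟩ : ∃ l, l = Multiset.sort S (· ≥ ·) := ⟨_, rfl⟩
  rw [← hn, ← hb]
  have hln : l.length = n := by rw [hl, hn]; exact Multiset.length_sort _
  have hlS : (↑l : Multiset ℕ) = S := by rw [hl]; exact Multiset.sort_eq _ _
  have hsort : l.Pairwise (· ≥ ·) := by rw [hl]; exact Multiset.pairwise_sort _ _
  have hne := doubleOPT_set_nonempty S β
  obtain ⟨m, hm⟩ : ∃ m, m = doubleOPT S β := ⟨_, rfl⟩
  rw [← hm]
  have hmem : β ≤ m ∧ DoubleCovers (Finset.Icc 1 m).val (Finset.Icc 1 (m - β)).val S := by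
    rw [hm, doubleOPT]; exact Nat.sInf_mem hne
  obtain ⟨hβm, hcov⟩ := hmem
  have helem : ∀ s ∈ S, s ≤ m + (m - β) :=
    elem_le_of_doubleCovers hcov
      (fun x hx => by simpa using (Finset.mem_Icc.mp (Finset.mem_val.mp hx)).2)
      (fun x hx => by simpa using (Finset.mem_Icc.mp (Finset.mem_val.mp hx)).2)
  obtain ⟨T, hT1, hTc, hTd, hTcov⟩ := hcov
  have hTl : T.map (fun x => x.1) = ↑l := by rw [hT1, hl, Multiset.sort_eq]
  obtain ⟨t, htT, htl⟩ := exists_list_of_map_eq _ l T hTl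
  subst htT
  have htlen : t.length = n := by
    have := congrArg List.length htl
    simpa [hln] using this
  have hbpos : 0 < n → 0 < b := by
    intro h
    rw [hb]
    exact Nat.one_le_div_iff hp |>.mpr (by omega)
  -- the shifted assignments
  obtain ⟨c, hc⟩ : ∃ c : ℕ → ℕ, c = fun j => (t.getD j (0, 0, 0)).2.1 := ⟨_, rfl⟩
  obtain ⟨d, hd⟩ : ∃ d : ℕ → ℕ, d = fun j => (t.getD j (0, 0, 0)).2.2 := ⟨_, rfl⟩
  have htmap : ∀ (f : ℕ × ℕ × ℕ → ℕ), (List.range n).map (fun j => f (t.getD j (0,0,0))) = t.map f := by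
    intro f
    conv_rhs => rw [← map_getD_range t (0,0,0)]
    rw [List.map_map, htlen]
    rfl
  have hcle : Multiset.filter (fun x => x ≠ 0) (↑((List.range n).map c) : Multiset ℕ) ≤
      (Finset.Icc 1 m).val := by
    rw [hc, htmap (fun x => x.2.1)]
    rw [Multiset.map_coe] at hTc
    exact hTc
  have hdle : Multiset.filter (fun x => x ≠ 0) (↑((List.range n).map d) : Multiset ℕ) ≤
      (Finset.Icc 1 (m - β)).val := by
    rw [hd, htmap (fun x => x.2.2)]
    rw [Multiset.map_coe] at hTd
    exact hTd
  -- membership of m + b in the defining set for the rounded multiset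
  refine le_trans (Nat.sInf_le ?_) le_rfl
  constructor
  · exact le_trans hβm (Nat.le_add_right m b)
  · have hsub : m + b - β = (m - β) + b := by omega
    rw [hsub]
    refine ⟨(↑((List.range n).map fun i =>
        ((l.getD (i / b * b) 0 : ℕ),
          (if i < b then m + i + 1 else c (i - b) : ℕ),
          (if i < b then (m - β) + i + 1 else d (i - b) : ℕ))) : Multiset (ℕ × ℕ × ℕ)), ?_, ?_, ?_, ?_⟩
    · rw [Multiset.map_coe, List.map_map]
      show (↑((List.range n).map fun i => (l.getD (i / b * b) 0 : ℕ)) : Multiset ℕ) = _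
      rw [roundedSet]
      simp only [← hl, ← hn, ← hb, hln]
    · rw [Multiset.map_coe, List.map_map]
      exact filter_shift_le n b m c hcle
    · rw [Multiset.map_coe, List.map_map]
      exact filter_shift_le n b (m - β) d hdle
    · intro x hx
      simp only [Multiset.mem_coe, List.mem_map, List.mem_range] at hx
      obtain ⟨i, hin, rfl⟩ := hx
      have hb0 : 0 < b := hbpos (by omega)
      by_cases hib : i < b
      · simp only [if_pos hib]
        have hdiv : i / b = 0 := Nat.div_eq_of_lt hib
        rw [hdiv]
        simp only [Nat.zero_mul]
        have hmem : l.getD 0 0 ∈ S := by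
          rw [← hlS, Multiset.mem_coe, List.getD_eq_getElem l 0 (by omega : 0 < l.length)]
          exact List.getElem_mem _
        have := helem _ hmem
        omega
      · simp only [if_neg hib]
        push_neg at hib
        have hmod : b * (i / b) + i % b = i := Nat.div_add_mod i b
        have hmodlt : i % b < b := Nat.mod_lt _ hb0
        have hq : i / b * b = b * (i / b) := Nat.mul_comm _ _
        have hle : i - b ≤ i / b * b := by omega
        have hidx : i / b * b < n := by
          have := Nat.div_mul_le_self i b
          omega
        have hy : t.getD (i - b) (0,0,0) ∈ t := by
          rw [List.getD_eq_getElem t (0,0,0) (by omega : i - b < t.length)]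
          exact List.getElem_mem _
        have hycov := hTcov _ (Multiset.mem_coe.mpr hy)
        have hy1 : (t.getD (i - b) (0,0,0)).1 = l.getD (i - b) 0 := by
          rw [List.getD_eq_getElem t (0,0,0) (by omega : i - b < t.length),
            List.getD_eq_getElem l 0 (by omega : i - b < l.length)]
          rw [List.getElem_of_eq htl.symm, List.getElem_map]
        have hsorted : l.getD (i / b * b) 0 ≤ l.getD (i - b) 0 :=
          sorted_getD_le l hsort _ _ hle (by omega)
        have hcv : c (i - b) = (t.getD (i - b) (0,0,0)).2.1 := by rw [hc]
        have hdv : d (i - b) = (t.getD (i - b) (0,0,0)).2.2 := by rw [hd]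
        rw [hcv, hdv]
        omega
end

section
/- Let S be a multiset of positive integers, let β ≥ 0 be an integer, and let m and p be positive integers with m ≥ β. If the pair of rounded multisets (R_p([m]), R_p([m−β])) double-covers S, then the pair ([m'], [m'−β]) double-covers S, where m' = m + ⌈m/p⌉. -/
private lemma transfer1 (Y : Multiset ℕ) (T : Multiset (ℕ × ℕ × ℕ))
    (hrel : Multiset.Rel (· ≤ ·)
      (Multiset.filter (fun x => x ≠ 0) (T.map fun x => x.2.1)) Y)
    (hT : ∀ x ∈ T, x.1 ≤ x.2.1 + x.2.2) :
    ∃ T' : Multiset (ℕ × ℕ × ℕ),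
      T'.map (fun x => x.1) = T.map (fun x => x.1) ∧
      T'.map (fun x => x.2.2) = T.map (fun x => x.2.2) ∧
      Multiset.filter (fun x => x ≠ 0) (T'.map fun x => x.2.1) ≤ Y ∧
      ∀ x ∈ T', x.1 ≤ x.2.1 + x.2.2 := by
  induction T using Multiset.induction generalizing Y with
  | empty => exact ⟨0, by simp, by simp, by simp, by simp⟩
  | cons a T ih =>
    by_cases h0 : a.2.1 = 0
    · rw [Multiset.map_cons, Multiset.filter_cons_of_neg _ (by simp [h0])] at hrel
      obtain ⟨T', h1, h2, h3, h4⟩ := ih Y hrel (fun x hx => hT x (Multiset.mem_cons_of_mem hx))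
      refine ⟨a ::ₘ T', by simp [h1], by simp [h2], ?_, ?_⟩
      · rwa [Multiset.map_cons, Multiset.filter_cons_of_neg _ (by simp [h0])]
      · intro x hx
        rcases Multiset.mem_cons.mp hx with rfl | hx
        · exact hT _ (Multiset.mem_cons_self _ _)
        · exact h4 x hx
    · rw [Multiset.map_cons, Multiset.filter_cons_of_pos _ (by simp [h0])] at hrel
      obtain ⟨y, Y', hay, hrel', rfl⟩ := Multiset.rel_cons_left.mp hrel
      obtain ⟨T', h1, h2, h3, h4⟩ := ih Y' hrel' (fun x hx => hT x (Multiset.mem_cons_of_mem hx))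
      refine ⟨(a.1, y, a.2.2) ::ₘ T', by simp [h1], by simp [h2], ?_, ?_⟩
      · rw [Multiset.map_cons, Multiset.filter_cons_of_pos _ (by simp; omega)]
        exact Multiset.cons_le_cons y h3
      · intro x hx
        rcases Multiset.mem_cons.mp hx with rfl | hx
        · have := hT a (Multiset.mem_cons_self a T); simp; omega
        · exact h4 x hx

private lemma transfer2 (Y : Multiset ℕ) (T : Multiset (ℕ × ℕ × ℕ))
    (hrel : Multiset.Rel (· ≤ ·)
      (Multiset.filter (fun x => x ≠ 0) (T.map fun x => x.2.2)) Y)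
    (hT : ∀ x ∈ T, x.1 ≤ x.2.1 + x.2.2) :
    ∃ T' : Multiset (ℕ × ℕ × ℕ),
      T'.map (fun x => x.1) = T.map (fun x => x.1) ∧
      T'.map (fun x => x.2.1) = T.map (fun x => x.2.1) ∧
      Multiset.filter (fun x => x ≠ 0) (T'.map fun x => x.2.2) ≤ Y ∧
      ∀ x ∈ T', x.1 ≤ x.2.1 + x.2.2 := by
  induction T using Multiset.induction generalizing Y with
  | empty => exact ⟨0, by simp, by simp, by simp, by simp⟩
  | cons a T ih =>
    by_cases h0 : a.2.2 = 0
    · rw [Multiset.map_cons, Multiset.filter_cons_of_neg _ (by simp [h0])] at hrel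
      obtain ⟨T', h1, h2, h3, h4⟩ := ih Y hrel (fun x hx => hT x (Multiset.mem_cons_of_mem hx))
      refine ⟨a ::ₘ T', by simp [h1], by simp [h2], ?_, ?_⟩
      · rwa [Multiset.map_cons, Multiset.filter_cons_of_neg _ (by simp [h0])]
      · intro x hx
        rcases Multiset.mem_cons.mp hx with rfl | hx
        · exact hT _ (Multiset.mem_cons_self _ _)
        · exact h4 x hx
    · rw [Multiset.map_cons, Multiset.filter_cons_of_pos _ (by simp [h0])] at hrel
      obtain ⟨y, Y', hay, hrel', rfl⟩ := Multiset.rel_cons_left.mp hrel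
      obtain ⟨T', h1, h2, h3, h4⟩ := ih Y' hrel' (fun x hx => hT x (Multiset.mem_cons_of_mem hx))
      refine ⟨(a.1, a.2.1, y) ::ₘ T', by simp [h1], by simp [h2], ?_, ?_⟩
      · rw [Multiset.map_cons, Multiset.filter_cons_of_pos _ (by simp; omega)]
        exact Multiset.cons_le_cons y h3
      · intro x hx
        rcases Multiset.mem_cons.mp hx with rfl | hx
        · have := hT a (Multiset.mem_cons_self a T); simp; omega
        · exact h4 x hx

private lemma sortIcc (n : ℕ) :
    Multiset.sort (Finset.Icc 1 n).val (· ≥ ·) = (List.range n).map (fun i => n - i) := by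
  have hnodup : ((List.range n).map (fun i => n - i)).Nodup := by
    refine List.Nodup.map_on ?_ List.nodup_range
    intro x hx y hy hxy
    simp only [List.mem_range] at hx hy
    omega
  have hcoe : (((List.range n).map (fun i => n - i) : List ℕ) : Multiset ℕ)
      = (Finset.Icc 1 n).val := by
    apply Multiset.eq_of_le_of_card_le
    · rw [Multiset.le_iff_subset (by exact hnodup)]
      intro x hx
      simp only [Multiset.mem_coe, List.mem_map, List.mem_range] at hx
      obtain ⟨i, hi, rfl⟩ := hx
      simp only [Finset.mem_val, Finset.mem_Icc]
      omega
    · simp [Nat.card_Icc]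
  refine (fun hp h1 h2 => List.Perm.eq_of_pairwise' (r := (· ≥ ·)) h1 h2 hp) ?_ ?_ ?_
  · rw [← Multiset.coe_eq_coe, Multiset.sort_eq, hcoe]
  · exact Multiset.pairwise_sort _ _
  · rw [List.pairwise_map]
    exact (List.pairwise_lt_range (n := n)) |>.imp (fun h => by omega)

private lemma roundedIcc (n p : ℕ) :
    roundedSet p (Finset.Icc 1 n).val
      = (((List.range n).map fun idx =>
          n - idx / ((n + p - 1) / p) * ((n + p - 1) / p) : List ℕ) : Multiset ℕ) := by
  unfold roundedSet
  have hcard : Multiset.card (Finset.Icc 1 n).val = n := by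
    simp [Nat.card_Icc]
  rw [Multiset.coe_eq_coe]
  have hlen : (Multiset.sort (Finset.Icc 1 n).val (· ≥ ·)).length = n := by
    rw [Multiset.length_sort, hcard]
  rw [hlen, hcard]
  apply List.Perm.of_eq
  apply List.map_congr_left
  intro idx hidx
  simp only [List.mem_range] at hidx
  set b := (n + p - 1) / p with hb
  have hle : idx / b * b ≤ idx := Nat.div_mul_le_self idx b
  have hjn : idx / b * b < n := lt_of_le_of_lt hle hidx
  rw [sortIcc, List.getD_eq_getElem _ _ (by simpa using hjn)]
  simp

private lemma dom (n b bn : ℕ) (hbn : n ≠ 0 → 0 < bn) (hbnb : bn ≤ b) :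
    Multiset.Rel (· ≤ ·)
      (((List.range n).map fun idx => n - idx / bn * bn : List ℕ) : Multiset ℕ)
      (((List.range n).map fun idx => n + b - idx : List ℕ) : Multiset ℕ) := by
  rw [← Multiset.map_coe, ← Multiset.map_coe, Multiset.rel_map]
  apply Multiset.rel_refl_of_refl_on
  intro idx hidx
  simp only [Multiset.mem_coe, List.mem_range] at hidx
  have hn : n ≠ 0 := by omega
  have h1 : idx < idx / bn * bn + bn := Nat.lt_div_mul_add (hbn hn)
  have h2 : idx / bn * bn ≤ idx := Nat.div_mul_le_self idx bn
  omega

private lemma YleIcc (n b : ℕ) :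
    (((List.range n).map fun idx => n + b - idx : List ℕ) : Multiset ℕ)
      ≤ (Finset.Icc 1 (n + b)).val := by
  rw [Multiset.le_iff_subset]
  · intro x hx
    simp only [Multiset.mem_coe, List.mem_map, List.mem_range] at hx
    obtain ⟨i, hi, rfl⟩ := hx
    simp only [Finset.mem_val, Finset.mem_Icc]
    omega
  · refine List.Nodup.map_on ?_ List.nodup_range
    intro x hx y hy hxy
    simp only [List.mem_range] at hx hy
    omega


/-- If `(R_p([m]), R_p([m − β]))` double-covers `S` (with `m ≥ β`),
then `([m'], [m' − β])` double-covers `S`, where `m' = m + ⌈m/p⌉`. -/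
theorem doubleCovers_of_rounded_doubleCovers (S : Multiset ℕ) (hS : ∀ x ∈ S, 0 < x)
    (β m p : ℕ) (hm : 0 < m) (hp : 0 < p) (hβm : β ≤ m)
    (h : DoubleCovers (roundedSet p (Finset.Icc 1 m).val)
          (roundedSet p (Finset.Icc 1 (m - β)).val) S) :
    DoubleCovers (Finset.Icc 1 (m + (m + p - 1) / p)).val
      (Finset.Icc 1 (m + (m + p - 1) / p - β)).val S := by
  set b := (m + p - 1) / p with hbdef
  have hb : 0 < b := Nat.le_div_iff_mul_le hp |>.mpr (by omega)
  obtain ⟨T, hmapS, hC, hD, hsum⟩ := h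
  rw [roundedIcc] at hC hD
  -- first component
  have relA := dom m b b (fun _ => hb) le_rfl
  obtain ⟨Z, hZ⟩ := Multiset.le_iff_exists_add.mp hC
  rw [hZ] at relA
  obtain ⟨Y₁, Y₂, hrel1, -, hYsplit⟩ := Multiset.rel_add_left.mp relA
  obtain ⟨T₁, hT1l, hT1d, hT1f, hT1sum⟩ := transfer1 Y₁ T hrel1 hsum
  -- second component
  have hbn2 : (m - β) ≠ 0 → 0 < (m - β + p - 1) / p := fun hne =>
    Nat.le_div_iff_mul_le hp |>.mpr (by omega)
  have relD := dom (m - β) b ((m - β + p - 1) / p) hbn2 (Nat.div_le_div_right (by omega))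
  have hD1 : Multiset.filter (fun x => x ≠ 0) (T₁.map fun x => x.2.2)
      ≤ (((List.range (m - β)).map fun idx =>
          m - β - idx / ((m - β + p - 1) / p) * ((m - β + p - 1) / p) : List ℕ) : Multiset ℕ) := by
    rw [hT1d]; exact hD
  obtain ⟨Z', hZ'⟩ := Multiset.le_iff_exists_add.mp hD1
  rw [hZ'] at relD
  obtain ⟨W₁, W₂, hrel2, -, hWsplit⟩ := Multiset.rel_add_left.mp relD
  obtain ⟨T₂, hT2l, hT2c, hT2f, hT2sum⟩ := transfer2 W₁ T₁ hrel2 hT1sum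
  refine ⟨T₂, by rw [hT2l, hT1l, hmapS], ?_, ?_, hT2sum⟩
  · calc Multiset.filter (fun x => x ≠ 0) (T₂.map fun x => x.2.1)
        = Multiset.filter (fun x => x ≠ 0) (T₁.map fun x => x.2.1) := by rw [hT2c]
      _ ≤ Y₁ := hT1f
      _ ≤ Y₁ + Y₂ := Multiset.le_add_right _ _
      _ ≤ (Finset.Icc 1 (m + b)).val := hYsplit ▸ YleIcc m b
  · calc Multiset.filter (fun x => x ≠ 0) (T₂.map fun x => x.2.2)
        ≤ W₁ := hT2f
      _ ≤ W₁ + W₂ := Multiset.le_add_right _ _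
      _ ≤ (Finset.Icc 1 (m - β + b)).val := hWsplit ▸ YleIcc (m - β) b
      _ = (Finset.Icc 1 (m + b - β)).val := by rw [show m - β + b = m + b - β by omega]
end

section
/- Let S be a multiset of n positive integers, let β ≥ 0 be an integer, and let p be a positive integer. Let m* be the least integer m ≥ β such that the pair of rounded multisets (R_p([m]), R_p([m−β])) double-covers R_p(S). Then (a) the pair ([m'], [m'−β]) with m' = m* + ⌈m*/p⌉ double-covers S, and (b) m* ≤ OPT(S, β) + ⌈n/p⌉, where OPT(S, β) is the Double Prefix Covering optimum. -/
namespace StmtAux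

lemma rel_zip {α β : Type*} {r : α → β → Prop} {u : Multiset α} {v : Multiset β}
    (h : Multiset.Rel r u v) :
    ∃ U : Multiset (α × β), U.map Prod.fst = u ∧ U.map Prod.snd = v ∧ ∀ x ∈ U, r x.1 x.2 := by
  induction h with
  | zero => exact ⟨0, by simp⟩
  | @cons a b u v hab hrel ih =>
    obtain ⟨U, h1, h2, h3⟩ := ih
    refine ⟨(a, b) ::ₘ U, by simp [h1], by simp [h2], ?_⟩
    intro x hx
    rcases Multiset.mem_cons.1 hx with rfl | hx
    · exact hab
    · exact h3 x hx

lemma exists_le_of_le_map {α β : Type*} [DecidableEq α] [DecidableEq β] {f : α → β} :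
    ∀ {u : Multiset β} {s : Multiset α}, u ≤ s.map f → ∃ s' ≤ s, s'.map f = u := by
  intro u
  induction u using Multiset.induction_on with
  | empty => exact fun _ => ⟨0, Multiset.zero_le _, by simp⟩
  | @cons a u ih =>
    intro s h
    have ha : a ∈ s.map f := Multiset.mem_of_le h (Multiset.mem_cons_self _ _)
    obtain ⟨x, hxs, hfx⟩ := Multiset.mem_map.1 ha
    have hs : s.map f = a ::ₘ (s.erase x).map f := by
      conv_lhs => rw [← Multiset.cons_erase hxs]
      rw [Multiset.map_cons, hfx]
    have hu : u ≤ (s.erase x).map f := by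
      have h2 := Multiset.erase_le_erase a h
      rwa [Multiset.erase_cons_head, hs, Multiset.erase_cons_head] at h2
    obtain ⟨s', hs'le, hs'map⟩ := ih hu
    refine ⟨x ::ₘ s', ?_, by simp [hs'map, hfx]⟩
    calc x ::ₘ s' ≤ x ::ₘ s.erase x := Multiset.cons_le_cons _ hs'le
      _ = s := Multiset.cons_erase hxs

lemma rel_restrict {α β : Type*} [DecidableEq α] [DecidableEq β] {r : α → β → Prop} {s : Multiset α} {t t' : Multiset β}
    (h : Multiset.Rel r s t) (ht : t' ≤ t) : ∃ s' ≤ s, Multiset.Rel r s' t' := by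
  obtain ⟨U, hU1, hU2, hU3⟩ := rel_zip h
  rw [← hU2] at ht
  obtain ⟨U', hU'le, hU'map⟩ := exists_le_of_le_map ht
  refine ⟨U'.map Prod.fst, hU1 ▸ Multiset.map_le_map hU'le, ?_⟩
  rw [← hU'map]
  rw [Multiset.rel_map]
  exact Multiset.rel_refl_of_refl_on fun x hx => hU3 x (Multiset.mem_of_le hU'le hx)

lemma dc_target {C D R S : Multiset ℕ} (h : DoubleCovers C D R)
    (hrel : Multiset.Rel (fun a b => b ≤ a) R S) : DoubleCovers C D S := by
  obtain ⟨T, hT1, hT2, hT3, hT4⟩ := h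
  rw [← hT1, Multiset.rel_map_left] at hrel
  obtain ⟨U, hU1, hU2, hU3⟩ := rel_zip hrel
  refine ⟨U.map (fun y => (y.2, y.1.2.1, y.1.2.2)), ?_, ?_, ?_, ?_⟩
  · rw [Multiset.map_map]; exact hU2
  · rw [Multiset.map_map]
    have h5 : (T.map fun x => x.2.1) = U.map fun y => y.1.2.1 := by
      rw [← hU1, Multiset.map_map]; rfl
    rw [h5] at hT2; exact hT2
  · rw [Multiset.map_map]
    have h5 : (T.map fun x => x.2.2) = U.map fun y => y.1.2.2 := by
      rw [← hU1, Multiset.map_map]; rfl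
    rw [h5] at hT3; exact hT3
  · intro x hx
    obtain ⟨y, hy, rfl⟩ := Multiset.mem_map.1 hx
    have h1 : y.1 ∈ T := hU1 ▸ Multiset.mem_map_of_mem _ hy
    exact le_trans (hU3 y hy) (hT4 y.1 h1)

/-- Strong dominance. -/
def SD (C' C : Multiset ℕ) : Prop := ∃ C'' ≤ C', Multiset.Rel (fun a b => b ≤ a) C'' C

lemma dc_SD_left {C C' D S : Multiset ℕ} (h : DoubleCovers C D S) (hd : SD C' C)
    (h0 : ∀ x ∈ C', x ≠ 0) : DoubleCovers C' D S := by
  obtain ⟨T, hT1, hT2, hT3, hT4⟩ := h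
  obtain ⟨C'', hC''le, hrel⟩ := hd
  set T1 := T.filter (fun x => x.2.1 ≠ 0) with hT1def
  set T0 := T.filter (fun x => ¬ x.2.1 ≠ 0) with hT0def
  have hsplit : T1 + T0 = T := Multiset.filter_add_not _ T
  have hF : Multiset.filter (fun x => x ≠ 0) (T.map fun x => x.2.1)
      = T1.map (fun x => x.2.1) := by
    rw [Multiset.filter_map]; rfl
  have hFle : T1.map (fun x => x.2.1) ≤ C := hF ▸ hT2
  obtain ⟨F'', hF''le, hF''rel⟩ := rel_restrict hrel hFle
  rw [Multiset.rel_map_right] at hF''rel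
  obtain ⟨U, hU1, hU2, hU3⟩ := rel_zip hF''rel
  refine ⟨T0 + U.map (fun y => (y.2.1, y.1, y.2.2.2)), ?_, ?_, ?_, ?_⟩
  · have h5 : (U.map (fun y => (y.2.1, y.1, y.2.2.2))).map (fun x => x.1)
        = T1.map (fun x => x.1) := by
      rw [Multiset.map_map, ← hU2, Multiset.map_map]; rfl
    rw [Multiset.map_add, h5, ← Multiset.map_add, add_comm T0 T1, hsplit, hT1]
  · have hmap : (T0 + U.map (fun y => (y.2.1, y.1, y.2.2.2))).map (fun x => x.2.1)
        = T0.map (fun x => x.2.1) + F'' := by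
      rw [Multiset.map_add, Multiset.map_map, ← hU1]; rfl
    rw [hmap, Multiset.filter_add]
    have hz : Multiset.filter (fun x => x ≠ 0) (T0.map fun x => x.2.1) = 0 := by
      rw [Multiset.filter_eq_nil]
      intro a ha
      obtain ⟨x, hx, rfl⟩ := Multiset.mem_map.1 ha
      have h6 := (Multiset.mem_filter.1 hx).2
      simpa using h6
    have hFid : Multiset.filter (fun x => x ≠ 0) F'' = F'' := by
      rw [Multiset.filter_eq_self]
      intro a ha
      exact h0 a (Multiset.mem_of_le (le_trans hF''le hC''le) ha)
    rw [hz, hFid, zero_add]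
    exact le_trans hF''le hC''le
  · have hmap : (T0 + U.map (fun y => (y.2.1, y.1, y.2.2.2))).map (fun x => x.2.2)
        = (T0 + T1).map (fun x => x.2.2) := by
      rw [Multiset.map_add, Multiset.map_add, Multiset.map_map]
      congr 1
      rw [← hU2, Multiset.map_map]; rfl
    rw [hmap, add_comm T0 T1, hsplit]
    exact hT3
  · intro x hx
    rcases Multiset.mem_add.1 hx with hx | hx
    · exact hT4 x (Multiset.mem_of_le (Multiset.filter_le _ _) hx)
    · obtain ⟨y, hy, rfl⟩ := Multiset.mem_map.1 hx
      have hyT1 : y.2 ∈ T1 := hU2 ▸ Multiset.mem_map_of_mem _ hy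
      have hyT : y.2 ∈ T := Multiset.mem_of_le (Multiset.filter_le _ _) hyT1
      have h7 := hT4 y.2 hyT
      have h2 := hU3 y hy
      simp only at h2 ⊢
      omega

lemma dc_SD_right {C D D' S : Multiset ℕ} (h : DoubleCovers C D S) (hd : SD D' D)
    (h0 : ∀ x ∈ D', x ≠ 0) : DoubleCovers C D' S := by
  obtain ⟨T, hT1, hT2, hT3, hT4⟩ := h
  obtain ⟨D'', hD''le, hrel⟩ := hd
  set T1 := T.filter (fun x => x.2.2 ≠ 0) with hT1def
  set T0 := T.filter (fun x => ¬ x.2.2 ≠ 0) with hT0def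
  have hsplit : T1 + T0 = T := Multiset.filter_add_not _ T
  have hF : Multiset.filter (fun x => x ≠ 0) (T.map fun x => x.2.2)
      = T1.map (fun x => x.2.2) := by
    rw [Multiset.filter_map]; rfl
  have hFle : T1.map (fun x => x.2.2) ≤ D := hF ▸ hT3
  obtain ⟨F'', hF''le, hF''rel⟩ := rel_restrict hrel hFle
  rw [Multiset.rel_map_right] at hF''rel
  obtain ⟨U, hU1, hU2, hU3⟩ := rel_zip hF''rel
  refine ⟨T0 + U.map (fun y => (y.2.1, y.2.2.1, y.1)), ?_, ?_, ?_, ?_⟩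
  · have h5 : (U.map (fun y => (y.2.1, y.2.2.1, y.1))).map (fun x => x.1)
        = T1.map (fun x => x.1) := by
      rw [Multiset.map_map, ← hU2, Multiset.map_map]; rfl
    rw [Multiset.map_add, h5, ← Multiset.map_add, add_comm T0 T1, hsplit, hT1]
  · have hmap : (T0 + U.map (fun y => (y.2.1, y.2.2.1, y.1))).map (fun x => x.2.1)
        = (T0 + T1).map (fun x => x.2.1) := by
      rw [Multiset.map_add, Multiset.map_add, Multiset.map_map]
      congr 1
      rw [← hU2, Multiset.map_map]; rfl
    rw [hmap, add_comm T0 T1, hsplit]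
    exact hT2
  · have hmap : (T0 + U.map (fun y => (y.2.1, y.2.2.1, y.1))).map (fun x => x.2.2)
        = T0.map (fun x => x.2.2) + F'' := by
      rw [Multiset.map_add, Multiset.map_map, ← hU1]; rfl
    rw [hmap, Multiset.filter_add]
    have hz : Multiset.filter (fun x => x ≠ 0) (T0.map fun x => x.2.2) = 0 := by
      rw [Multiset.filter_eq_nil]
      intro a ha
      obtain ⟨x, hx, rfl⟩ := Multiset.mem_map.1 ha
      have h6 := (Multiset.mem_filter.1 hx).2
      simpa using h6
    have hFid : Multiset.filter (fun x => x ≠ 0) F'' = F'' := by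
      rw [Multiset.filter_eq_self]
      intro a ha
      exact h0 a (Multiset.mem_of_le (le_trans hF''le hD''le) ha)
    rw [hz, hFid, zero_add]
    exact le_trans hF''le hD''le
  · intro x hx
    rcases Multiset.mem_add.1 hx with hx | hx
    · exact hT4 x (Multiset.mem_of_le (Multiset.filter_le _ _) hx)
    · obtain ⟨y, hy, rfl⟩ := Multiset.mem_map.1 hx
      have hyT1 : y.2 ∈ T1 := hU2 ▸ Multiset.mem_map_of_mem _ hy
      have hyT : y.2 ∈ T := Multiset.mem_of_le (Multiset.filter_le _ _) hyT1
      have h7 := hT4 y.2 hyT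
      have h2 := hU3 y hy
      simp only at h2 ⊢
      omega

lemma rel_coe {α β : Type*} {r : α → β → Prop} {l₁ : List α} {l₂ : List β}
    (h : List.Forall₂ r l₁ l₂) : Multiset.Rel r ↑l₁ ↑l₂ := by
  induction h with
  | nil => exact Multiset.Rel.zero
  | @cons a b l₁ l₂ hab _ ih =>
    rw [← Multiset.cons_coe, ← Multiset.cons_coe]
    exact Multiset.Rel.cons hab ih

lemma sorted_le {s : List ℕ} (hs : List.Pairwise (· ≥ ·) s) {i j : ℕ}
    (hij : i ≤ j) (hj : j < s.length) : s[j] ≤ s[i]'(lt_of_le_of_lt hij hj) := by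
  rcases eq_or_lt_of_le hij with rfl | hlt
  · exact le_refl _
  · exact hs.rel_get_of_lt (a := ⟨i, lt_of_le_of_lt hij hj⟩) (b := ⟨j, hj⟩) hlt

lemma roundedSet_def (p : ℕ) (X : Multiset ℕ) :
    roundedSet p X = ((List.range (X.sort (· ≥ ·)).length).map
      (fun idx => (X.sort (· ≥ ·)).getD
        (idx / ((X.card + p - 1) / p) * ((X.card + p - 1) / p)) 0) : List ℕ) := rfl

lemma b_pos {p n : ℕ} (hp : 0 < p) (hn : 0 < n) : 0 < (n + p - 1) / p :=
  Nat.div_pos (by omega) hp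

lemma rounded_rel (p : ℕ) (hp : 0 < p) (X : Multiset ℕ) :
    Multiset.Rel (fun a b => b ≤ a) (roundedSet p X) X := by
  have hsort : ((X.sort (· ≥ ·) : List ℕ) : Multiset ℕ) = X := Multiset.sort_eq _ _
  conv_rhs => rw [← hsort]
  rw [roundedSet_def]
  apply rel_coe
  rw [List.forall₂_iff_get]
  constructor
  · simp
  · intro i h₁ h₂
    simp only [List.get_eq_getElem, List.getElem_map, List.getElem_range]
    set s := X.sort (· ≥ ·) with hsdef
    set b := (X.card + p - 1) / p with hbdef
    have hn : i < s.length := h₂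
    have hb : 0 < b := by
      apply b_pos hp
      have : s.length = X.card := Multiset.length_sort _
      omega
    have hj : i / b * b ≤ i := Nat.div_mul_le_self _ _
    rw [List.getD_eq_getElem _ _ (lt_of_le_of_lt hj hn)]
    exact sorted_le (Multiset.pairwise_sort _ _) hj hn

lemma desc_list_eq : ∀ m : ℕ,
    (List.range' 1 m).reverse = (List.range m).map (fun i => m - i) := by
  intro m
  induction m with
  | zero => simp
  | succ m ih =>
    rw [List.range'_1_concat, List.reverse_append, List.range_succ_eq_map]
    simp only [List.reverse_singleton, List.singleton_append, List.map_cons, List.map_map]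
    congr 1
    · omega
    · rw [ih]
      apply List.map_congr_left
      intro i hi
      simp only [Function.comp_apply, Nat.succ_sub_succ]

lemma coe_desc (a m : ℕ) :
    (((List.range m).map (fun i => a + m - i) : List ℕ) : Multiset ℕ)
      = (Finset.Icc (a + 1) (a + m)).val := by
  have h1 : List.range' (a + 1) m = (List.range' 1 m).map (a + ·) :=
    (List.map_add_range' (a := a) 1 m 1).symm
  have h2 : (List.range' (a + 1) m).reverse = (List.range m).map (fun i => a + m - i) := by
    rw [h1, ← List.map_reverse, desc_list_eq, List.map_map]
    apply List.map_congr_left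
    intro i hi
    simp only [Function.comp_apply]
    have : i < m := List.mem_range.1 hi
    omega
  rw [← h2, Multiset.coe_reverse]
  rw [Nat.Icc_eq_range']
  have : a + m + 1 - (a + 1) = m := by omega
  rw [this]

lemma Icc1_val_range' (m : ℕ) :
    (Finset.Icc 1 m).val = (List.range' 1 m : Multiset ℕ) := by
  rw [Nat.Icc_eq_range']
  have : m + 1 - 1 = m := by omega
  rw [this]

lemma Icc1_add (u v : ℕ) :
    (Finset.Icc 1 (u + v)).val
      = (Finset.Icc 1 u).val + (Finset.Icc (u + 1) (u + v)).val := by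
  rw [Icc1_val_range', Icc1_val_range']
  rw [Nat.Icc_eq_range']
  have h1 : u + v + 1 - (u + 1) = v := by omega
  rw [h1]
  have h2 : ((List.range' 1 u : List ℕ) : Multiset ℕ) + ↑(List.range' (u + 1) v)
      = ↑(List.range' 1 u ++ List.range' (u + 1) v) := by
    rw [← Multiset.coe_add]
  rw [h2]
  congr 1
  have := List.range'_append_1 (s := 1) (m := u) (n := v)
  rw [show 1 + u = u + 1 from by omega] at this
  rw [this]

lemma Icc1_mono {u v : ℕ} (h : u ≤ v) :
    (Finset.Icc 1 u).val ≤ (Finset.Icc 1 v).val :=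
  Finset.val_le_iff.2 (Finset.Icc_subset_Icc_right h)

lemma sort_Icc (m : ℕ) :
    (Finset.Icc 1 m).val.sort (· ≥ ·) = (List.range m).map (fun i => m - i) := by
  refine (fun h1 h2 h3 => List.Perm.eq_of_pairwise' (r := (· ≥ ·)) h2 h3 h1) ?_ ?_ ?_
  · apply Multiset.coe_eq_coe.1
    rw [Multiset.sort_eq]
    have := coe_desc 0 m
    simp only [Nat.zero_add] at this
    rw [this]
  · exact Multiset.pairwise_sort _ _
  · rw [List.pairwise_map]
    apply (List.pairwise_lt_range (n := m)).imp
    intro a b hab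
    simp only [ge_iff_le]
    omega

lemma roundedSet_Icc (p m : ℕ) (hp : 0 < p) :
    roundedSet p (Finset.Icc 1 m).val
      = (((List.range m).map
          (fun i => m - i / ((m + p - 1) / p) * ((m + p - 1) / p)) : List ℕ) : Multiset ℕ) := by
  have hcard : (Finset.Icc 1 m).val.card = m := by
    rw [← Finset.card_def, Nat.card_Icc]
    omega
  rw [roundedSet_def, sort_Icc, hcard]
  congr 1
  rw [List.length_map, List.length_range]
  apply List.map_congr_left
  intro idx hidx
  have hm : idx < m := List.mem_range.1 hidx
  set b := (m + p - 1) / p with hbdef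
  have hb : 0 < b := b_pos hp (by omega)
  have hj : idx / b * b ≤ idx := Nat.div_mul_le_self _ _
  rw [List.getD_eq_getElem _ _ (by simpa using lt_of_le_of_lt hj hm)]
  simp only [List.getElem_map, List.getElem_range]

lemma SD_rounded (p m c : ℕ) (hp : 0 < p) (hc : (m + p - 1) / p ≤ c) :
    SD (Finset.Icc 1 (m + c)).val (roundedSet p (Finset.Icc 1 m).val) := by
  refine ⟨(((List.range m).map (fun i => c + m - i) : List ℕ) : Multiset ℕ), ?_, ?_⟩
  · rw [coe_desc c m]
    exact Finset.val_le_iff.2 (Finset.Icc_subset_Icc (by omega) (by omega))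
  · rw [roundedSet_Icc p m hp]
    apply rel_coe
    rw [List.forall₂_iff_get]
    refine ⟨by simp, ?_⟩
    intro x h₁ h₂
    simp only [List.get_eq_getElem, List.getElem_map, List.getElem_range]
    have hxm : x < m := by simpa using h₁
    set b := (m + p - 1) / p with hbdef
    have hb : 0 < b := b_pos hp (by omega)
    have h1 : x / b * b + x % b = x := Nat.div_add_mod' x b
    have h2 : x % b < b := Nat.mod_lt _ hb
    obtain ⟨q, hq⟩ : ∃ q, x / b * b = q := ⟨_, rfl⟩
    obtain ⟨r, hr⟩ : ∃ r, x % b = r := ⟨_, rfl⟩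
    rw [hq] at h1 ⊢
    rw [hr] at h1 h2
    omega

lemma bound_of_filter {T : Multiset (ℕ × ℕ × ℕ)} {f : ℕ × ℕ × ℕ → ℕ} {m : ℕ}
    (h : Multiset.filter (fun x => x ≠ 0) (T.map f) ≤ (Finset.Icc 1 m).val) :
    ∀ x ∈ T, f x ≤ m := by
  intro x hx
  by_cases h0 : f x = 0
  · omega
  · have h1 : f x ∈ Multiset.filter (fun x => x ≠ 0) (T.map f) :=
      Multiset.mem_filter.2 ⟨Multiset.mem_map_of_mem f hx, h0⟩
    have h2 := Multiset.mem_of_le h h1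
    rw [Finset.mem_val, Finset.mem_Icc] at h2
    omega

lemma cover_simple : ∀ (s : Multiset ℕ) (D : Multiset ℕ) (k : ℕ), s.sum + s.card ≤ k →
    DoubleCovers (Finset.Icc 1 k).val D s := by
  intro s
  induction s using Multiset.induction_on with
  | empty => exact fun D k _ => ⟨0, by simp, by simp, by simp, by simp⟩
  | cons a s ih =>
    intro D k hk
    rw [Multiset.sum_cons, Multiset.card_cons] at hk
    have hk1 : 1 ≤ k := by omega
    obtain ⟨T, h1, h2, h3, h4⟩ := ih D (k - 1) (by omega)
    refine ⟨(a, k, 0) ::ₘ T, by rw [Multiset.map_cons, h1], ?_, ?_, ?_⟩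
    · have hmc : Multiset.map (fun x => x.2.1) ((a, k, 0) ::ₘ T)
          = k ::ₘ Multiset.map (fun x => x.2.1) T := by rw [Multiset.map_cons]
      have hfc : Multiset.filter (fun x => x ≠ 0) (k ::ₘ Multiset.map (fun x => x.2.1) T)
          = k ::ₘ Multiset.filter (fun x => x ≠ 0) (Multiset.map (fun x => x.2.1) T) :=
        Multiset.filter_cons_of_pos _ (show k ≠ 0 by omega)
      rw [hmc, hfc]
      have hIcc : (Finset.Icc 1 k).val
          = (Finset.Icc 1 (k - 1)).val + (Finset.Icc k k).val := by
        have h5 := Icc1_add (k - 1) 1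
        rw [show k - 1 + 1 = k from by omega] at h5
        exact h5
      have hsing : (Finset.Icc k k).val = {k} := by rw [Finset.Icc_self]; rfl
      rw [hIcc, hsing]
      calc k ::ₘ Multiset.filter (fun x => x ≠ 0) (T.map fun x => x.2.1)
          = Multiset.filter (fun x => x ≠ 0) (T.map fun x => x.2.1) + {k} := by
            rw [add_comm, Multiset.singleton_add]
        _ ≤ (Finset.Icc 1 (k - 1)).val + {k} := add_le_add_left h2 _
    · have hmc : Multiset.map (fun x => x.2.2) ((a, k, 0) ::ₘ T)
          = (0 : ℕ) ::ₘ Multiset.map (fun x => x.2.2) T := by rw [Multiset.map_cons]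
      have hfd : Multiset.filter (fun x => x ≠ 0) ((0 : ℕ) ::ₘ Multiset.map (fun x => x.2.2) T)
          = Multiset.filter (fun x => x ≠ 0) (Multiset.map (fun x => x.2.2) T) :=
        Multiset.filter_cons_of_neg _ (by simp)
      rw [hmc, hfd]
      exact h3
    · intro x hx
      rcases Multiset.mem_cons.1 hx with rfl | hx
      · show a ≤ k + 0
        omega
      · exact h4 x hx

lemma perm_lift {α β : Type*} [DecidableEq α] (f : α → β) :
    ∀ (s : List β) (L : List α), List.Perm (L.map f) s → ∃ L', List.Perm L' L ∧ L'.map f = s := by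
  intro s
  induction s with
  | nil =>
    intro L h
    have h1 : L.map f = [] := h.eq_nil
    have h2 : L = [] := List.map_eq_nil_iff.1 h1
    exact ⟨[], by simp [h2]⟩
  | cons a s ih =>
    intro L h
    have ha : a ∈ L.map f := h.mem_iff.2 (List.mem_cons_self (a := a) (l := s))
    obtain ⟨x, hxL, hfx⟩ := List.mem_map.1 ha
    have h2 : List.Perm (L.map f) (f x :: (L.erase x).map f) := by
      have h3 := (List.perm_cons_erase hxL).map f
      simpa using h3
    have h3 : List.Perm ((L.erase x).map f) s := by
      have h4 := h2.symm.trans h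
      rw [hfx] at h4
      exact h4.cons_inv
    obtain ⟨L'', hp', hm⟩ := ih (L.erase x) h3
    exact ⟨x :: L'', (hp'.cons x).trans (List.perm_cons_erase hxL).symm, by simp [hm, hfx]⟩

lemma getD_range_take {α : Type*} (l : List α) (d : α) (k : ℕ) (hk : k ≤ l.length) :
    (List.range k).map (fun i => l.getD i d) = l.take k := by
  apply List.ext_getElem
  · simp only [List.length_map, List.length_range, List.length_take]
    omega
  · intro i h₁ h₂
    simp only [List.getElem_map, List.getElem_range, List.getElem_take]
    have hik : i < k := by simpa using h₁
    rw [List.getD_eq_getElem _ _ (by omega)]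

lemma roundedSet_Icc_pos (p M : ℕ) (hp : 0 < p) :
    ∀ x ∈ roundedSet p (Finset.Icc 1 M).val, x ≠ 0 := by
  rw [roundedSet_Icc p M hp]
  intro x hx
  rw [Multiset.mem_coe, List.mem_map] at hx
  obtain ⟨idx, hidx, rfl⟩ := hx
  have h1 : idx < M := List.mem_range.1 hidx
  have h2 : idx / ((M + p - 1) / p) * ((M + p - 1) / p) ≤ idx := Nat.div_mul_le_self _ _
  omega

lemma shift (S : Multiset ℕ) (p : ℕ) (hp : 0 < p) (m β : ℕ) (hβ : β ≤ m)
    (h : DoubleCovers (Finset.Icc 1 m).val (Finset.Icc 1 (m - β)).val S) :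
    DoubleCovers (Finset.Icc 1 (m + (S.card + p - 1) / p)).val
      (Finset.Icc 1 (m + (S.card + p - 1) / p - β)).val (roundedSet p S) := by
  obtain ⟨T, hT1, hT2, hT3, hT4⟩ := h
  set s := S.sort (· ≥ ·) with hsdef
  have hslen : s.length = S.card := Multiset.length_sort _
  set n := S.card with hndef
  set b := (S.card + p - 1) / p with hbdef
  rcases Nat.eq_zero_or_pos n with hn0 | hn
  · have hre : roundedSet p S = 0 := by
      rw [roundedSet_def]
      have : s.length = 0 := by omega
      simp [← hsdef, this]
    rw [hre]
    exact ⟨0, by simp, by simp, by simp, by simp⟩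
  have hb : 0 < b := b_pos hp hn
  obtain ⟨L, hL⟩ : ∃ L : List (ℕ × ℕ × ℕ), (L : Multiset _) = T :=
    ⟨T.toList, Multiset.coe_toList T⟩
  have hperm : List.Perm (L.map (fun x => x.1)) s := by
    apply Multiset.coe_eq_coe.1
    rw [← Multiset.map_coe, hL, hT1, hsdef, Multiset.sort_eq]
  obtain ⟨LT, hLTperm, hLTmap⟩ := perm_lift (fun x => x.1) s L hperm
  have hLT : (LT : Multiset _) = T := by
    rw [← hL]
    exact Multiset.coe_eq_coe.2 hLTperm
  have hLTlen : LT.length = n := by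
    have h5 := congrArg List.length hLTmap
    rw [List.length_map] at h5
    omega
  have hbound1 : ∀ x ∈ T, x.2.1 ≤ m := bound_of_filter hT2
  have hbound2 : ∀ x ∈ T, x.2.2 ≤ m - β := bound_of_filter hT3
  have helem : ∀ y ∈ s, y ≤ m + (m - β) := by
    intro y hy
    have hyS : y ∈ S := by
      rw [hsdef, Multiset.mem_sort] at hy
      exact hy
    rw [← hT1] at hyS
    obtain ⟨x, hxT, rfl⟩ := Multiset.mem_map.1 hyS
    have h5 := hT4 x hxT
    have h6 := hbound1 x hxT
    have h7 := hbound2 x hxT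
    omega
  set b' := min b n with hb'def
  set W1 : List (ℕ × ℕ × ℕ) :=
    (List.range b').map (fun i => (s.getD 0 0, m + 1 + i, m - β + 1 + i)) with hW1
  set W2 : List (ℕ × ℕ × ℕ) := (List.range (n - b)).map
      (fun i => (s.getD ((b + i) / b * b) 0,
        (LT.getD i default).2.1, (LT.getD i default).2.2)) with hW2
  have hcoeW : ((W1 ++ W2 : List _) : Multiset (ℕ × ℕ × ℕ)) = ↑W1 + ↑W2 :=
    (Multiset.coe_add W1 W2).symm
  have hW2c : W2.map (fun x => x.2.1) = (LT.map (fun x => x.2.1)).take (n - b) := by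
    rw [hW2, List.map_map,
      ← getD_range_take (LT.map (fun x => x.2.1)) 0 (n - b)
        (by rw [List.length_map, hLTlen]; omega)]
    apply List.map_congr_left
    intro i hi
    have hi' : i < n - b := List.mem_range.1 hi
    have hlen1 : i < (LT.map (fun x => x.2.1)).length := by
      rw [List.length_map, hLTlen]; omega
    have hlen2 : i < LT.length := by rw [hLTlen]; omega
    simp only [Function.comp_apply]
    rw [List.getD_eq_getElem _ _ hlen1, List.getD_eq_getElem _ _ hlen2, List.getElem_map]
  have hW2d : W2.map (fun x => x.2.2) = (LT.map (fun x => x.2.2)).take (n - b) := by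
    rw [hW2, List.map_map,
      ← getD_range_take (LT.map (fun x => x.2.2)) 0 (n - b)
        (by rw [List.length_map, hLTlen]; omega)]
    apply List.map_congr_left
    intro i hi
    have hi' : i < n - b := List.mem_range.1 hi
    have hlen1 : i < (LT.map (fun x => x.2.2)).length := by
      rw [List.length_map, hLTlen]; omega
    have hlen2 : i < LT.length := by rw [hLTlen]; omega
    simp only [Function.comp_apply]
    rw [List.getD_eq_getElem _ _ hlen1, List.getD_eq_getElem _ _ hlen2, List.getElem_map]
  refine ⟨((W1 ++ W2 : List _) : Multiset _), ?_, ?_, ?_, ?_⟩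
  · -- first components give the rounded set
    rw [Multiset.map_coe, roundedSet_def, ← hsdef, ← hbdef, hslen]
    congr 1
    rw [List.map_append, hW1, hW2, List.map_map, List.map_map]
    rcases le_or_gt n b with hcase | hcase
    · have h1 : b' = n := by omega
      have h2 : n - b = 0 := by omega
      rw [h1, h2]
      simp only [List.range_zero, List.map_nil, List.append_nil]
      apply List.map_congr_left
      intro idx hidx
      have h3 : idx < n := List.mem_range.1 hidx
      have h4 : idx / b = 0 := Nat.div_eq_of_lt (by omega)
      simp only [Function.comp_apply, h4, Nat.zero_mul]
    · have h1 : b' = b := by omega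
      have h2 : n = b + (n - b) := by omega
      rw [h1]
      conv_rhs => rw [h2, List.range_add]
      rw [List.map_append, List.map_map]
      congr 1
      · apply List.map_congr_left
        intro idx hidx
        have h3 : idx < b := List.mem_range.1 hidx
        have h4 : idx / b = 0 := Nat.div_eq_of_lt h3
        simp only [Function.comp_apply, h4, Nat.zero_mul]
  · -- C side
    rw [hcoeW, Multiset.map_add, Multiset.filter_add]
    have hfil1 : Multiset.filter (fun x => x ≠ 0) ((W1 : Multiset (ℕ × ℕ × ℕ)).map (fun x => x.2.1))
        = (((List.range b').map (fun i => m + 1 + i) : List ℕ) : Multiset ℕ) := by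
      have h5 : (W1 : Multiset (ℕ × ℕ × ℕ)).map (fun x => x.2.1)
          = (((List.range b').map (fun i => m + 1 + i) : List ℕ) : Multiset ℕ) := by
        rw [Multiset.map_coe, hW1, List.map_map]
        rfl
      rw [h5, Multiset.filter_eq_self]
      intro a ha
      rw [Multiset.mem_coe, List.mem_map] at ha
      obtain ⟨i, _, rfl⟩ := ha
      omega
    have h1le : (((List.range b').map (fun i => m + 1 + i) : List ℕ) : Multiset ℕ)
        ≤ (Finset.Icc (m + 1) (m + b)).val := by
      have h5 : ((List.range b').map (fun i => m + 1 + i) : List ℕ)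
          = List.range' (m + 1) b' := (List.range'_eq_map_range (s := m + 1) (n := b')).symm
      rw [h5]
      have h6 : (Finset.Icc (m + 1) (m + b')).val = (List.range' (m + 1) b' : Multiset ℕ) := by
        rw [Nat.Icc_eq_range']
        have : m + b' + 1 - (m + 1) = b' := by omega
        rw [this]
      rw [← h6]
      exact Finset.val_le_iff.2 (Finset.Icc_subset_Icc_right (by omega))
    have h2le : Multiset.filter (fun x => x ≠ 0) ((W2 : Multiset (ℕ × ℕ × ℕ)).map (fun x => x.2.1))
        ≤ (Finset.Icc 1 m).val := by
      refine le_trans (Multiset.filter_le_filter _ ?_) hT2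
      rw [← hLT, Multiset.map_coe, Multiset.map_coe, Multiset.coe_le, hW2c]
      exact (List.take_sublist _ _).subperm
    rw [hfil1]
    refine le_trans (add_le_add h1le h2le) (le_of_eq ?_)
    rw [Icc1_add m b]
    exact add_comm _ _
  · -- D side
    rw [hcoeW, Multiset.map_add, Multiset.filter_add]
    have hfil1 : Multiset.filter (fun x => x ≠ 0) ((W1 : Multiset (ℕ × ℕ × ℕ)).map (fun x => x.2.2))
        = (((List.range b').map (fun i => m - β + 1 + i) : List ℕ) : Multiset ℕ) := by
      have h5 : (W1 : Multiset (ℕ × ℕ × ℕ)).map (fun x => x.2.2)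
          = (((List.range b').map (fun i => m - β + 1 + i) : List ℕ) : Multiset ℕ) := by
        rw [Multiset.map_coe, hW1, List.map_map]
        rfl
      rw [h5, Multiset.filter_eq_self]
      intro a ha
      rw [Multiset.mem_coe, List.mem_map] at ha
      obtain ⟨i, _, rfl⟩ := ha
      omega
    have h1le : (((List.range b').map (fun i => m - β + 1 + i) : List ℕ) : Multiset ℕ)
        ≤ (Finset.Icc (m - β + 1) (m - β + b)).val := by
      have h5 : ((List.range b').map (fun i => m - β + 1 + i) : List ℕ)
          = List.range' (m - β + 1) b' := (List.range'_eq_map_range (s := m - β + 1) (n := b')).symm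
      rw [h5]
      have h6 : (Finset.Icc (m - β + 1) (m - β + b')).val
          = (List.range' (m - β + 1) b' : Multiset ℕ) := by
        rw [Nat.Icc_eq_range']
        have : m - β + b' + 1 - (m - β + 1) = b' := by omega
        rw [this]
      rw [← h6]
      exact Finset.val_le_iff.2 (Finset.Icc_subset_Icc_right (by omega))
    have h2le : Multiset.filter (fun x => x ≠ 0) ((W2 : Multiset (ℕ × ℕ × ℕ)).map (fun x => x.2.2))
        ≤ (Finset.Icc 1 (m - β)).val := by
      refine le_trans (Multiset.filter_le_filter _ ?_) hT3
      rw [← hLT, Multiset.map_coe, Multiset.map_coe, Multiset.coe_le, hW2d]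
      exact (List.take_sublist _ _).subperm
    rw [hfil1]
    have hsub : m + b - β = (m - β) + b := by omega
    rw [hsub]
    refine le_trans (add_le_add h1le h2le) (le_of_eq ?_)
    rw [Icc1_add (m - β) b]
    exact add_comm _ _
  · -- covering
    intro x hx
    rw [Multiset.mem_coe, List.mem_append] at hx
    rcases hx with hx | hx
    · rw [hW1, List.mem_map] at hx
      obtain ⟨i, hi, rfl⟩ := hx
      have hs0 : s.getD 0 0 ∈ s := by
        rw [List.getD_eq_getElem _ _ (by omega)]
        exact List.getElem_mem _
      have h5 := helem _ hs0
      simp only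
      omega
    · rw [hW2, List.mem_map] at hx
      obtain ⟨i, hi, rfl⟩ := hx
      have hi' : i < n - b := List.mem_range.1 hi
      have hiLT : i < LT.length := by omega
      have hti : LT.getD i default = LT[i] := List.getD_eq_getElem _ _ hiLT
      have htT : LT[i] ∈ T := by
        rw [← hLT]
        exact List.getElem_mem _
      have hcov := hT4 _ htT
      have hisn : i < s.length := by omega
      have hfst : (LT[i]).1 = s[i] := by
        have h9 := (List.getElem_of_eq hLTmap.symm hisn).symm
        rw [List.getElem_map] at h9
        exact h9
      have hdiv : (b + i) / b = i / b + 1 := by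
        rw [Nat.add_comm b i]
        exact Nat.add_div_right i hb
      have hqm : i / b * b + i % b = i := Nat.div_add_mod' i b
      have hmod : i % b < b := Nat.mod_lt _ hb
      have hj : (b + i) / b * b = i / b * b + b := by
        rw [hdiv, Nat.add_mul, Nat.one_mul]
      have hjle : i / b * b ≤ i := Nat.div_mul_le_self _ _
      have hij : i < (b + i) / b * b := by omega
      have hjn : (b + i) / b * b < s.length := by omega
      rw [List.getD_eq_getElem _ _ hjn]
      have hsor : s[(b + i) / b * b] ≤ s[i] :=
        sorted_le (by rw [hsdef]; exact Multiset.pairwise_sort _ _) (le_of_lt hij) hjn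
      simp only [hti]
      omega

end StmtAux

/-- Let `m*` be the least `m ≥ β` such that
`(R_p([m]), R_p([m − β]))` double-covers `R_p(S)`. Then (a) `([m'], [m' − β])` with
`m' = m* + ⌈m*/p⌉` double-covers `S`, and (b) `m* ≤ OPT(S, β) + ⌈n/p⌉`. -/
theorem rounded_double_binarySearch (S : Multiset ℕ) (hS : ∀ x ∈ S, 0 < x)
    (β p : ℕ) (hp : 0 < p) (mstar : ℕ)
    (hleast : IsLeast
      {m | β ≤ m ∧ DoubleCovers (roundedSet p (Finset.Icc 1 m).val)
        (roundedSet p (Finset.Icc 1 (m - β)).val) (roundedSet p S)} mstar) :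
    DoubleCovers (Finset.Icc 1 (mstar + (mstar + p - 1) / p)).val
      (Finset.Icc 1 (mstar + (mstar + p - 1) / p - β)).val S ∧
    mstar ≤ doubleOPT S β + (S.card + p - 1) / p := by
  obtain ⟨⟨hβstar, hDCstar⟩, hlb⟩ := hleast
  constructor
  · -- part (a)
    have h1 : DoubleCovers (roundedSet p (Finset.Icc 1 mstar).val)
        (roundedSet p (Finset.Icc 1 (mstar - β)).val) S :=
      StmtAux.dc_target hDCstar (StmtAux.rounded_rel p hp S)
    have h2 := StmtAux.dc_SD_left h1
      (StmtAux.SD_rounded p mstar ((mstar + p - 1) / p) hp (le_refl _))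
      (fun x hx => by rw [Finset.mem_val, Finset.mem_Icc] at hx; omega)
    have hdiv : ((mstar - β) + p - 1) / p ≤ (mstar + p - 1) / p :=
      Nat.div_le_div_right (by omega)
    have hd : StmtAux.SD (Finset.Icc 1 (mstar + (mstar + p - 1) / p - β)).val
        (roundedSet p (Finset.Icc 1 (mstar - β)).val) := by
      rw [Nat.sub_add_comm hβstar]
      exact StmtAux.SD_rounded p (mstar - β) ((mstar + p - 1) / p) hp hdiv
    exact StmtAux.dc_SD_right h2 hd
      (fun x hx => by rw [Finset.mem_val, Finset.mem_Icc] at hx; omega)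
  · -- part (b)
    set A := {m | β ≤ m ∧ DoubleCovers (Finset.Icc 1 m).val (Finset.Icc 1 (m - β)).val S}
      with hA
    have hm0 : β + S.sum + S.card ∈ A := by
      refine ⟨by omega, StmtAux.cover_simple S _ _ (by omega)⟩
    have hopt : doubleOPT S β = sInf A := by rw [doubleOPT, hA]
    have hmoA : sInf A ∈ A := Nat.sInf_mem ⟨_, hm0⟩
    obtain ⟨hβo, hDCo⟩ := hmoA
    have hshift := StmtAux.shift S p hp (sInf A) β hβo hDCo
    have hM : sInf A + (S.card + p - 1) / p ∈
        {m | β ≤ m ∧ DoubleCovers (roundedSet p (Finset.Icc 1 m).val)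
        (roundedSet p (Finset.Icc 1 (m - β)).val) (roundedSet p S)} := by
      refine ⟨le_trans hβo (Nat.le_add_right _ _), ?_⟩
      have hc := StmtAux.dc_SD_left hshift
        ⟨roundedSet p (Finset.Icc 1 (sInf A + (S.card + p - 1) / p)).val, le_refl _,
          StmtAux.rounded_rel p hp (Finset.Icc 1 (sInf A + (S.card + p - 1) / p)).val⟩
        (StmtAux.roundedSet_Icc_pos p (sInf A + (S.card + p - 1) / p) hp)
      exact StmtAux.dc_SD_right hc
        ⟨roundedSet p (Finset.Icc 1 (sInf A + (S.card + p - 1) / p - β)).val, le_refl _,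
          StmtAux.rounded_rel p hp
            (Finset.Icc 1 (sInf A + (S.card + p - 1) / p - β)).val⟩
        (StmtAux.roundedSet_Icc_pos p (sInf A + (S.card + p - 1) / p - β) hp)
    rw [hopt]
    exact hlb hM
end
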